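/- arXiv:1211.1848 — 11 statements merged into one kernel-verified Lean document; each statement's English description precedes it below -/
import Mathlib

section
/- Let U ⊂ ℝⁿ be open, x₀ ∈ U, k ∈ ℝ, and let v : U → ℂ be smooth with Δv + k²v = 0 on U. Suppose not all iterated partial derivatives of v at x₀ vanish, and let N be the smallest total order of a nonvanishing partial derivative of v at x₀. Then the degree-N homogeneous Taylor polynomial P^N(h) = Σ_{|α|=N} (∂^α v(x₀)/α!) h^α is a harmonic polynomial, i.e. ΔP^N = 0. -/
section aux
variable {E : Type*} [NormedAddCommGroup E] [NormedSpace ℝ E]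

/-- directional derivative within `U`. -/
noncomputable def dw (U : Set E) (a : E) (f : E → ℂ) : E → ℂ :=
  fun y => fderivWithin ℝ f U y a

/-- iterated directional derivatives within `U`, head of list is outermost. -/
noncomputable def ldw (U : Set E) : List E → (E → ℂ) → (E → ℂ)
  | [], f => f
  | a :: l, f => dw U a (ldw U l f)

variable {U : Set E}

theorem dw_contDiffOn (hU : IsOpen U) {f : E → ℂ} (hf : ContDiffOn ℝ (⊤ : ℕ∞) f U) (a : E) :
    ContDiffOn ℝ (⊤ : ℕ∞) (dw U a f) U :=
  (hf.fderivWithin hU.uniqueDiffOn (by exact_mod_cast le_top)).clm_apply contDiffOn_const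

theorem ldw_contDiffOn (hU : IsOpen U) {f : E → ℂ} (hf : ContDiffOn ℝ (⊤ : ℕ∞) f U)
    (l : List E) : ContDiffOn ℝ (⊤ : ℕ∞) (ldw U l f) U := by
  induction l with
  | nil => exact hf
  | cons a l ih => exact dw_contDiffOn hU ih a

theorem dw_congr (hU : IsOpen U) {f g : E → ℂ} (h : ∀ y ∈ U, f y = g y) (a : E)
    {y : E} (hy : y ∈ U) : dw U a f y = dw U a g y := by
  unfold dw
  rw [fderivWithin_congr h (h y hy)]

theorem ldw_congr (hU : IsOpen U) {f g : E → ℂ} (h : ∀ y ∈ U, f y = g y) (l : List E)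
    {y : E} (hy : y ∈ U) : ldw U l f y = ldw U l g y := by
  induction l generalizing y with
  | nil => exact h y hy
  | cons a l ih => exact dw_congr hU (fun z hz => ih hz) a hy
end aux

section aux2
variable {E : Type*} [NormedAddCommGroup E] [NormedSpace ℝ E] {U : Set E}

theorem dw_apply_snd (hU : IsOpen U) {f : E → ℂ} (hf : ContDiffOn ℝ (⊤ : ℕ∞) f U)
    (a b : E) {y : E} (hy : y ∈ U) :
    dw U a (dw U b f) y = fderivWithin ℝ (fderivWithin ℝ f U) U y a b := by
  have hD : ContDiffOn ℝ (⊤ : ℕ∞) (fderivWithin ℝ f U) U :=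
    hf.fderivWithin hU.uniqueDiffOn (by norm_cast)
  have hdiff : DifferentiableWithinAt ℝ (fderivWithin ℝ f U) U y :=
    (hD.differentiableOn (by norm_cast)) y hy
  have : dw U a (dw U b f) y
      = fderivWithin ℝ (fun z => (fderivWithin ℝ f U z) b) U y a := rfl
  rw [this, fderivWithin_clm_apply (hU.uniqueDiffOn y hy) hdiff
    (differentiableWithinAt_const b)]
  simp [fderivWithin_const_apply]

theorem dw_swap (hU : IsOpen U) {f : E → ℂ} (hf : ContDiffOn ℝ (⊤ : ℕ∞) f U)
    (a b : E) {y : E} (hy : y ∈ U) :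
    dw U a (dw U b f) y = dw U b (dw U a f) y := by
  rw [dw_apply_snd hU hf a b hy, dw_apply_snd hU hf b a hy]
  have hsymm : IsSymmSndFDerivWithinAt ℝ f U y := by
    refine (hf y hy).isSymmSndFDerivWithinAt (n := ((⊤ : ℕ∞) : WithTop ℕ∞))
      (by rw [minSmoothness_of_isRCLikeNormedField]; exact WithTop.coe_le_coe.mpr le_top) hU.uniqueDiffOn ?_ hy
    · rw [hU.interior_eq]; exact subset_closure hy
  exact hsymm.eq a b

end aux2

section aux3
variable {E : Type*} [NormedAddCommGroup E] [NormedSpace ℝ E] {U : Set E}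

theorem ldw_perm (hU : IsOpen U) {f : E → ℂ} (hf : ContDiffOn ℝ (⊤ : ℕ∞) f U)
    {l l' : List E} (h : l.Perm l') : ∀ y ∈ U, ldw U l f y = ldw U l' f y := by
  induction h with
  | nil => intro y hy; rfl
  | cons a h ih => intro y hy; exact dw_congr hU ih a hy
  | swap a b l => intro y hy; exact dw_swap hU (ldw_contDiffOn hU hf l) b a hy
  | trans h₁ h₂ ih₁ ih₂ => intro y hy; rw [ih₁ y hy, ih₂ y hy]

theorem ldw_sum (hU : IsOpen U) {ι : Type*} (s : Finset ι) (g : ι → E → ℂ)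
    (hg : ∀ j ∈ s, ContDiffOn ℝ (⊤ : ℕ∞) (g j) U) (l : List E) :
    ∀ y ∈ U, ldw U l (fun z => ∑ j ∈ s, g j z) y = ∑ j ∈ s, ldw U l (g j) y := by
  induction l with
  | nil => intro y hy; rfl
  | cons a l ih =>
    intro y hy
    have : ldw U (a :: l) (fun z => ∑ j ∈ s, g j z) y
        = dw U a (fun z => ∑ j ∈ s, ldw U l (g j) z) y := dw_congr hU ih a hy
    rw [this]
    unfold dw
    rw [fderivWithin_fun_sum (hU.uniqueDiffOn y hy) (fun j hj =>
      ((ldw_contDiffOn hU (hg j hj) l).differentiableOn (by norm_cast)) y hy)]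
    simp only [ContinuousLinearMap.coe_sum', Finset.sum_apply]
    rfl

theorem ldw_smul (hU : IsOpen U) (c : ℂ) {f : E → ℂ} (hf : ContDiffOn ℝ (⊤ : ℕ∞) f U)
    (l : List E) :
    ∀ y ∈ U, ldw U l (fun z => c • f z) y = c • ldw U l f y := by
  induction l with
  | nil => intro y hy; rfl
  | cons a l ih =>
    intro y hy
    have : ldw U (a :: l) (fun z => c • f z) y
        = dw U a (fun z => c • ldw U l f z) y := dw_congr hU ih a hy
    rw [this]
    unfold dw
    rw [fderivWithin_fun_const_smul (hU.uniqueDiffOn y hy)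
      (((ldw_contDiffOn hU hf l).differentiableOn (by norm_cast)) y hy)]
    rfl

theorem ldw_concat (a : E) (f : E → ℂ) (l : List E) :
    ldw U (l.concat a) f = ldw U l (dw U a f) := by
  induction l with
  | nil => rfl
  | cons b l ih => show dw U b (ldw U (l.concat a) f) = dw U b (ldw U l (dw U a f)); rw [ih]

theorem ldw_append (l₁ l₂ : List E) (f : E → ℂ) :
    ldw U (l₁ ++ l₂) f = ldw U l₁ (ldw U l₂ f) := by
  induction l₁ with
  | nil => rfl
  | cons b l ih => show dw U b (ldw U (l ++ l₂) f) = dw U b (ldw U l (ldw U l₂ f)); rw [ih]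

theorem ifdw_peel (hU : IsOpen U) {x₀ : E} (hx₀ : x₀ ∈ U) {f : E → ℂ}
    (hf : ContDiffOn ℝ (⊤ : ℕ∞) f U) {N : ℕ} (m : Fin (N + 1) → E) :
    iteratedFDerivWithin ℝ (N + 1) f U x₀ m
      = iteratedFDerivWithin ℝ N (dw U (m (Fin.last N)) f) U x₀ (Fin.init m) := by
  rw [iteratedFDerivWithin_succ_apply_right hU.uniqueDiffOn hx₀]
  have hcomp := (ContinuousLinearMap.apply ℝ ℂ (m (Fin.last N))).iteratedFDerivWithin_comp_left
    (f := fun y => fderivWithin ℝ f U y)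
    (hf.fderivWithin (m := (⊤ : ℕ∞)) hU.uniqueDiffOn (by norm_cast) x₀ hx₀) hU.uniqueDiffOn hx₀
    (i := N) (by exact_mod_cast le_top)
  rw [show dw U (m (Fin.last N)) f
      = (ContinuousLinearMap.apply ℝ ℂ (m (Fin.last N))) ∘ (fun y => fderivWithin ℝ f U y)
      from rfl, hcomp]
  rfl

theorem ifdw_eq_ldw (hU : IsOpen U) {x₀ : E} (hx₀ : x₀ ∈ U) {N : ℕ} (f : E → ℂ)
    (hf : ContDiffOn ℝ (⊤ : ℕ∞) f U) (m : Fin N → E) :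
    iteratedFDerivWithin ℝ N f U x₀ m = ldw U (List.ofFn m) f x₀ := by
  induction N generalizing f with
  | zero => simp [iteratedFDerivWithin_zero_apply, ldw]
  | succ N ih =>
    rw [ifdw_peel hU hx₀ hf m, ih _ (dw_contDiffOn hU hf _) (Fin.init m)]
    rw [List.ofFn_succ' m, ldw_concat]
    rfl

end aux3


/-- The Laplacian of a function `f : ℝⁿ → ℂ`, as the sum of second partial derivatives. -/
noncomputable def lap {n : ℕ} (f : (Fin n → ℝ) → ℂ) (x : Fin n → ℝ) : ℂ :=
  ∑ j : Fin n, fderiv ℝ (fun y => fderiv ℝ f y (Pi.single j 1)) x (Pi.single j 1)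


section key
variable {n : ℕ} {U : Set (Fin n → ℝ)}

theorem key_sum (hU : IsOpen U) {x₀ : Fin n → ℝ} (hx₀ : x₀ ∈ U) (k : ℝ)
    {v : (Fin n → ℝ) → ℂ} (hv : ContDiffOn ℝ (⊤ : ℕ∞) v U)
    (hHelm : ∀ x ∈ U, lap v x + (k : ℂ) ^ 2 * v x = 0)
    {m : ℕ} (hm : iteratedFDeriv ℝ m v x₀ = 0) (x : Fin n → ℝ)
    (i i' : Fin (m + 2)) (hii : i ≠ i') :
    ∑ j : Fin n, iteratedFDeriv ℝ (m + 2) v x₀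
      (Function.update (Function.update (fun _ => x) i (Pi.single j 1)) i'
        (Pi.single j 1)) = 0 := by
  set e : Fin n → (Fin n → ℝ) := fun j => Pi.single j 1 with he
  set p : Fin (m + 2) := (Fin.last m).castSucc with hp
  set q : Fin (m + 2) := Fin.last (m + 1) with hq
  set s : Fin n → Fin (m + 2) → (Fin n → ℝ) :=
    fun j => Fin.snoc (Fin.snoc (fun _ : Fin m => x) (e j)) (e j) with hs
  set τ : Equiv.Perm (Fin (m + 2)) := Equiv.swap i p with hτdef
  set σ : Equiv.Perm (Fin (m + 2)) := τ.trans (Equiv.swap (τ i') q) with hσdef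
  have hpq : p ≠ q := Fin.ne_of_lt (Fin.castSucc_lt_last _)
  have hτ : τ i' ≠ p := fun h => hii (τ.injective (by rw [h, Equiv.swap_apply_left]))
  have hσi : σ i = p := by
    rw [hσdef, Equiv.trans_apply, Equiv.swap_apply_left,
      Equiv.swap_apply_of_ne_of_ne (Ne.symm hτ) hpq]
  have hσi' : σ i' = q := by
    rw [hσdef, Equiv.trans_apply, Equiv.swap_apply_left]
  have hsx : ∀ (j : Fin n) (u : Fin (m + 2)), u ≠ p → u ≠ q → s j u = x := by
    intro j u hup huq
    rcases Fin.eq_castSucc_or_eq_last u with ⟨w, hw⟩ | hw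
    · rcases Fin.eq_castSucc_or_eq_last w with ⟨w', hw'⟩ | hw'
      · subst hw; subst hw'; simp [hs, Fin.snoc_castSucc]
      · exact absurd (by rw [hw, hw']) hup
    · exact absurd hw huq
  have hts : ∀ j, Function.update (Function.update (fun _ => x) i (e j)) i' (e j)
      = (s j) ∘ σ := by
    intro j
    funext l
    by_cases hl' : l = i'
    · subst hl'
      simp only [Function.update_self, Function.comp_apply, hσi', hs, hq, Fin.snoc_last]
    · by_cases hl : l = i
      · subst hl
        rw [Function.update_of_ne hl', Function.update_self]
        simp only [Function.comp_apply, hσi, hs, hp, Fin.snoc_castSucc, Fin.snoc_last]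
      · rw [Function.update_of_ne hl', Function.update_of_ne hl]
        have h1 : σ l ≠ p := fun h => hl (σ.injective (h.trans hσi.symm))
        have h2 : σ l ≠ q := fun h => hl' (σ.injective (h.trans hσi'.symm))
        exact (hsx j (σ l) h1 h2).symm
  have hofn : ∀ j, List.ofFn (s j) = List.replicate m x ++ [e j, e j] := by
    intro j
    rw [List.ofFn_succ' (s j)]
    have h1 : (fun u : Fin (m+1) => s j u.castSucc)
        = (Fin.snoc (fun _ : Fin m => x) (e j) : Fin (m+1) → (Fin n → ℝ)) := by
      funext u; simp [hs, Fin.snoc_castSucc]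
    have h2 : s j (Fin.last (m+1)) = e j := by simp [hs, Fin.snoc_last]
    rw [h1, h2, List.ofFn_succ' _]
    have h3 : (fun u : Fin m => (Fin.snoc (fun _ : Fin m => x) (e j) : Fin (m+1) → (Fin n → ℝ)) u.castSucc)
        = fun _ : Fin m => x := by
      funext u; simp [Fin.snoc_castSucc]
    rw [h3, Fin.snoc_last, List.ofFn_const]
    simp [List.concat_eq_append, List.append_assoc]
  -- smoothness of the summand functions
  have hg : ∀ j : Fin n, ContDiffOn ℝ (⊤ : ℕ∞) (dw U (e j) (dw U (e j) v)) U :=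
    fun j => dw_contDiffOn hU (dw_contDiffOn hU hv _) _
  -- identify the sum of second directional derivatives with lap v on U
  have hlap : ∀ z ∈ U, (∑ j : Fin n, dw U (e j) (dw U (e j) v) z)
      = (-(k : ℂ) ^ 2) • v z := by
    intro z hz
    have h1 : ∀ j : Fin n, ∀ y ∈ U, dw U (e j) v y = fderiv ℝ v y (e j) := by
      intro j y hy
      show fderivWithin ℝ v U y (e j) = _
      rw [fderivWithin_of_isOpen hU hy]
    have h2 : ∀ j : Fin n, dw U (e j) (dw U (e j) v) z
        = fderiv ℝ (fun y => fderiv ℝ v y (e j)) z (e j) := by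
      intro j
      rw [dw_congr hU (h1 j) (e j) hz]
      show fderivWithin ℝ (fun y => fderiv ℝ v y (e j)) U z (e j) = _
      rw [fderivWithin_of_isOpen hU hz]
    simp_rw [h2]
    have h3 : lap v z = -((k : ℂ) ^ 2 * v z) := eq_neg_of_add_eq_zero_left (hHelm z hz)
    rw [show (∑ j : Fin n, fderiv ℝ (fun y => fderiv ℝ v y (e j)) z (e j)) = lap v z from rfl,
      h3, smul_eq_mul, neg_mul]
  -- main computation
  have hmain : ∀ j : Fin n, iteratedFDeriv ℝ (m + 2) v x₀
      (Function.update (Function.update (fun _ => x) i (e j)) i' (e j))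
      = ldw U (List.replicate m x) (dw U (e j) (dw U (e j) v)) x₀ := by
    intro j
    rw [← iteratedFDerivWithin_of_isOpen (m+2) hU hx₀, hts j,
      ifdw_eq_ldw hU hx₀ v hv ((s j) ∘ σ),
      ldw_perm hU hv (σ.ofFn_comp_perm (s j)) x₀ hx₀,
      hofn j, ldw_append]
    rfl
  rw [Finset.sum_congr rfl (fun j _ => hmain j)]
  rw [← ldw_sum hU Finset.univ _ (fun j _ => hg j) (List.replicate m x) x₀ hx₀,
    ldw_congr hU hlap (List.replicate m x) hx₀,
    ldw_smul hU _ hv (List.replicate m x) x₀ hx₀]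
  have hrep : ldw U (List.replicate m x) v x₀ = 0 := by
    rw [← List.ofFn_const m x, ← ifdw_eq_ldw hU hx₀ v hv (fun _ : Fin m => x),
      iteratedFDerivWithin_of_isOpen m hU hx₀, hm]
    rfl
  rw [hrep, smul_zero]

end key

theorem key_sum' {n : ℕ} {U : Set (Fin n → ℝ)} (hU : IsOpen U) {x₀ : Fin n → ℝ}
    (hx₀ : x₀ ∈ U) (k : ℝ) {v : (Fin n → ℝ) → ℂ} (hv : ContDiffOn ℝ (⊤ : ℕ∞) v U)
    (hHelm : ∀ x ∈ U, lap v x + (k : ℂ) ^ 2 * v x = 0)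
    (N : ℕ) (hNmin : ∀ j < N, iteratedFDeriv ℝ j v x₀ = 0) (x : Fin n → ℝ)
    (i i' : Fin N) (hii : i ≠ i') :
    ∑ j : Fin n, iteratedFDeriv ℝ N v x₀
      (Function.update (Function.update (fun _ => x) i (Pi.single j 1)) i'
        (Pi.single j 1)) = 0 := by
  have h2 : 2 ≤ N := by
    have h1 := i.isLt
    have h3 := i'.isLt
    have h4 : i.val ≠ i'.val := Fin.val_ne_of_ne hii
    omega
  obtain ⟨m, rfl⟩ : ∃ m, N = m + 2 := ⟨N - 2, by omega⟩
  exact key_sum hU hx₀ k hv hHelm (hNmin m (by omega)) x i i' hii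

/-- If `v` is a smooth solution of the Helmholtz equation `Δv + k²v = 0` on an open set `U`,
not all of whose derivatives vanish at `x₀ ∈ U`, and `N` is the smallest order of a
nonvanishing derivative at `x₀`, then the degree-`N` homogeneous Taylor polynomial
`h ↦ (1/N!)·D^N v(x₀)[h,…,h]` is harmonic. -/
theorem taylor_leading_term_harmonic
    (n : ℕ) (U : Set (Fin n → ℝ)) (hU : IsOpen U)
    (x₀ : Fin n → ℝ) (hx₀ : x₀ ∈ U) (k : ℝ)
    (v : (Fin n → ℝ) → ℂ) (hv : ContDiffOn ℝ (⊤ : ℕ∞) v U)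
    (hHelm : ∀ x ∈ U, lap v x + (k : ℂ) ^ 2 * v x = 0)
    (N : ℕ)
    (hN : iteratedFDeriv ℝ N v x₀ ≠ 0)
    (hNmin : ∀ j < N, iteratedFDeriv ℝ j v x₀ = 0) :
    ∀ x : Fin n → ℝ,
      lap (fun h => ((N.factorial : ℂ))⁻¹ • iteratedFDeriv ℝ N v x₀ (fun _ => h)) x = 0 := by
  intro x
  classical
  set F := iteratedFDeriv ℝ N v x₀ with hF
  set c : ℂ := (N.factorial : ℂ)⁻¹ with hc
  set e : Fin n → (Fin n → ℝ) := fun j => Pi.single j 1 with he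
  set Dg : (Fin n → ℝ) →L[ℝ] (Fin N → (Fin n → ℝ)) :=
    ContinuousLinearMap.pi (fun _ => ContinuousLinearMap.id ℝ (Fin n → ℝ)) with hDg
  set A : Fin N → ((Fin n → ℝ) →L[ℝ] (Fin N → (Fin n → ℝ))) := fun i =>
    ContinuousLinearMap.pi
      (fun l => if l = i then (0 : (Fin n → ℝ) →L[ℝ] (Fin n → ℝ))
        else ContinuousLinearMap.id ℝ (Fin n → ℝ)) with hA
  have hAapp : ∀ (i : Fin N) (w : Fin n → ℝ) (l : Fin N),
      A i w l = if l = i then 0 else w := by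
    intro i w l
    rw [hA]
    simp only [ContinuousLinearMap.pi_apply]
    rw [apply_ite (fun (g : (Fin n → ℝ) →L[ℝ] (Fin n → ℝ)) => g w)]
    simp
  -- first derivative of P
  have hP1 : ∀ y : Fin n → ℝ, HasFDerivAt (fun h => c • F (fun _ => h))
      (c • ((F.linearDeriv (fun _ => y)).comp Dg)) y := by
    intro y
    have h0 : HasFDerivAt (⇑F) (F.linearDeriv (fun _ => y)) (Dg y) := F.hasFDerivAt _
    exact (h0.comp y Dg.hasFDerivAt).const_smul c
  have hG : ∀ j : Fin n, (fun y => fderiv ℝ (fun h => c • F (fun _ => h)) y (e j))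
      = fun y => c • ∑ i : Fin N, F (Function.update (fun _ => y) i (e j)) := by
    intro j
    funext y
    rw [(hP1 y).fderiv]
    simp only [ContinuousLinearMap.smul_apply, ContinuousLinearMap.comp_apply,
      ContinuousMultilinearMap.linearDeriv_apply]
    rfl
  -- second derivative pieces
  have hT : ∀ (i : Fin N) (a : Fin n → ℝ) (y : Fin n → ℝ),
      HasFDerivAt (fun z => F (Function.update (fun _ => z) i a))
        ((F.linearDeriv (Function.update (fun _ => y) i a)).comp (A i)) y := by
    intro i a y
    have haff : ∀ z : Fin n → ℝ,
        Function.update (fun _ : Fin N => z) i a = A i z + Pi.single i a := by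
      intro z
      funext l
      by_cases hl : l = i
      · subst hl
        simp [hAapp, Function.update_self]
      · simp [hAapp, Function.update_of_ne hl, hl, Pi.single_eq_of_ne hl]
    have h0 : HasFDerivAt (fun z => F (A i z + Pi.single i a))
        ((F.linearDeriv (A i y + Pi.single i a)).comp (A i)) y :=
      (F.hasFDerivAt _).comp y (((A i).hasFDerivAt).add_const _)
    have heq : (fun z => F (A i z + Pi.single i a))
        = fun z => F (Function.update (fun _ : Fin N => z) i a) :=
      funext fun z => by rw [haff z]
    rw [heq, ← haff y] at h0
    exact h0
  have hGder : ∀ j : Fin n,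
      HasFDerivAt (fun y => c • ∑ i : Fin N, F (Function.update (fun _ => y) i (e j)))
        (c • ∑ i : Fin N,
          (F.linearDeriv (Function.update (fun _ => x) i (e j))).comp (A i)) x :=
    fun j => (HasFDerivAt.fun_sum (fun i _ => hT i (e j) x)).const_smul c
  -- assemble the Laplacian
  have hlapP : lap (fun h => c • F (fun _ => h)) x
      = ∑ j : Fin n, c • ∑ i : Fin N, ∑ i' : Fin N,
          F (Function.update (Function.update (fun _ => x) i (e j)) i'
            ((A i (e j)) i')) := by
    unfold lap
    refine Finset.sum_congr rfl fun j _ => ?_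
    rw [show (fun y => fderiv ℝ (fun h => c • F (fun _ => h)) y (Pi.single j 1))
        = fun y => c • ∑ i : Fin N, F (Function.update (fun _ => y) i (e j)) from hG j]
    rw [(hGder j).fderiv]
    simp only [ContinuousLinearMap.smul_apply, ContinuousLinearMap.coe_sum',
      Finset.sum_apply, ContinuousLinearMap.comp_apply,
      ContinuousMultilinearMap.linearDeriv_apply]
    rfl
  rw [hlapP]
  -- kill each term
  have hsplit : ∀ (j : Fin n) (i i' : Fin N),
      F (Function.update (Function.update (fun _ => x) i (e j)) i' ((A i (e j)) i'))
        = if i' = i then 0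
          else F (Function.update (Function.update (fun _ => x) i (e j)) i' (e j)) := by
    intro j i i'
    by_cases h : i' = i
    · rw [if_pos h, h, hAapp, if_pos rfl]
      exact F.map_coord_zero i (by simp [Function.update_self])
    · rw [if_neg h, hAapp, if_neg h]
  simp_rw [hsplit]
  rw [← Finset.smul_sum]
  suffices hsuff : (∑ j : Fin n, ∑ i : Fin N, ∑ i' : Fin N,
      (if i' = i then 0
        else F (Function.update (Function.update (fun _ => x) i (e j)) i' (e j)))) = 0 by
    rw [hsuff, smul_zero]
  rw [Finset.sum_comm]
  refine Finset.sum_eq_zero fun i _ => ?_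
  rw [Finset.sum_comm]
  refine Finset.sum_eq_zero fun i' _ => ?_
  by_cases h : i' = i
  · simp [h]
  · simp only [if_neg h]
    rw [hF]
    exact key_sum' hU hx₀ k hv hHelm N hNmin x i i' (fun hh => h hh.symm)
end

section
/- Let n ≥ 1, N ≥ 0, let R be a homogeneous polynomial of degree N on ℝⁿ with complex coefficients, let 1 ≤ p ≤ ∞ and let τ > 0. There exists a constant C such that for every nonzero ρ ∈ ℂⁿ with Re ρ_j ≥ τ|ρ| for every j = 1,…,n, and every f ∈ L^p((0,∞)ⁿ), the integrand e^{−x·ρ} R(x) f(x) is integrable over the positive orthant and |∫_{(0,∞)ⁿ} e^{−x·ρ} R(x) f(x) dx| ≤ C |ρ|^{−(N+n)+n/p} ‖f‖_{L^p((0,∞)ⁿ)}. -/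
open MeasureTheory
open scoped ENNReal

namespace LaplaceAux

open Real Set

lemma measurableSet_orthant (n : ℕ) : MeasurableSet {x : Fin n → ℝ | ∀ j, 0 < x j} := by
  have h : {x : Fin n → ℝ | ∀ j, 0 < x j} = Set.pi Set.univ (fun _ => Set.Ioi (0:ℝ)) := by
    ext x; simp [Set.mem_pi]
  rw [h]
  exact MeasurableSet.univ_pi (fun j => measurableSet_Ioi)

lemma exp_prod_integral (n : ℕ) {b : ℝ} (hb : 0 < b) :
    IntegrableOn (fun x : Fin n → ℝ => ∏ j, Real.exp (-(b * x j))) {x | ∀ j, 0 < x j} volume ∧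
    ∫ x in {x : Fin n → ℝ | ∀ j, 0 < x j}, ∏ j, Real.exp (-(b * x j)) = (1/b)^n := by
  set F : ℝ → ℝ := (Set.Ioi (0:ℝ)).indicator (fun t => Real.exp (-(b * t))) with hF
  have hFint : Integrable F := by
    rw [hF, integrable_indicator_iff measurableSet_Ioi]
    simpa [neg_mul] using exp_neg_integrableOn_Ioi 0 hb
  have hprod : Integrable (fun x : Fin n → ℝ => ∏ j, F (x j)) :=
    Integrable.fintype_prod (f := fun _ : Fin n => F) (fun _ => hFint)
  have hind : ∀ x : Fin n → ℝ, ({x : Fin n → ℝ | ∀ j, 0 < x j}).indicator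
      (fun x => ∏ j, Real.exp (-(b * x j))) x = ∏ j, F (x j) := by
    intro x
    by_cases hx : ∀ j, 0 < x j
    · rw [Set.indicator_of_mem (show x ∈ {x : Fin n → ℝ | ∀ j, 0 < x j} from hx)]
      exact Finset.prod_congr rfl fun j _ =>
        (Set.indicator_of_mem (Set.mem_Ioi.mpr (hx j)) (fun t => Real.exp (-(b * t)))).symm
    · rw [Set.indicator_of_notMem (show x ∉ {x : Fin n → ℝ | ∀ j, 0 < x j} from hx)]
      push_neg at hx
      obtain ⟨j, hj⟩ := hx
      refine (Finset.prod_eq_zero (Finset.mem_univ j) ?_).symm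
      exact Set.indicator_of_notMem (by simpa using hj) _
  have hint : IntegrableOn (fun x : Fin n → ℝ => ∏ j, Real.exp (-(b * x j)))
      {x | ∀ j, 0 < x j} volume := by
    refine (integrable_indicator_iff (measurableSet_orthant n)).mp ?_
    exact hprod.congr (Filter.Eventually.of_forall fun x => (hind x).symm)
  refine ⟨hint, ?_⟩
  have hFval : ∫ t, F t = 1 / b := by
    rw [hF, integral_indicator measurableSet_Ioi]
    have h := integral_rpow_mul_exp_neg_mul_Ioi (a := 1) one_pos hb
    simpa [Real.Gamma_one, Real.rpow_one] using h
  rw [← integral_indicator (measurableSet_orthant n)]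
  rw [integral_congr_ae (Filter.Eventually.of_forall hind)]
  rw [volume_pi, integral_fintype_prod_eq_prod (ι := Fin n) (fun _ => F), hFval]
  simp [Finset.prod_const, one_div]

lemma pow_mul_exp_le (N : ℕ) {u : ℝ} (hu : 0 ≤ u) :
    u ^ N ≤ (N.factorial : ℝ) * Real.exp u := by
  have hN : (0:ℝ) < N.factorial := by exact_mod_cast N.factorial_pos
  have h1 : u ^ N / (N.factorial : ℝ) ≤ ∑ i ∈ Finset.range (N+1), u ^ i / i.factorial := by
    refine Finset.single_le_sum (f := fun i => u ^ i / (i.factorial : ℝ))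
      (fun i _ => div_nonneg (pow_nonneg hu _) (by exact_mod_cast i.factorial_pos.le))
      (Finset.self_mem_range_succ N)
  have h2 := Real.sum_le_exp_of_nonneg hu (N+1)
  have h3 := h1.trans h2
  rw [div_le_iff₀ hN] at h3
  nlinarith [Real.exp_pos u]

lemma poly_bound (n N : ℕ) (R : MvPolynomial (Fin n) ℂ) (hR : R.IsHomogeneous N) :
    ∃ c : ℝ, 0 ≤ c ∧ ∀ x : Fin n → ℝ, (∀ j, 0 < x j) →
      ‖MvPolynomial.eval (fun j => ((x j : ℝ) : ℂ)) R‖ ≤ c * (∑ j, x j) ^ N := by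
  refine ⟨∑ d ∈ R.support, ‖MvPolynomial.coeff d R‖,
    Finset.sum_nonneg fun _ _ => norm_nonneg _, ?_⟩
  intro x hx
  have hs0 : 0 ≤ ∑ j, x j := Finset.sum_nonneg fun j _ => (hx j).le
  rw [MvPolynomial.eval_eq']
  refine (norm_sum_le _ _).trans ?_
  rw [Finset.sum_mul]
  refine Finset.sum_le_sum fun d hd => ?_
  rw [norm_mul]
  refine mul_le_mul_of_nonneg_left ?_ (norm_nonneg _)
  have hdN : ∑ j, d j = N := by
    have h1 : d.degree = N := by
      by_contra h
      exact MvPolynomial.mem_support_iff.mp hd (hR.coeff_eq_zero h)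
    rw [← h1, Finsupp.degree]
    exact (Finset.sum_subset (Finset.subset_univ _)
      (fun j _ hj => Finsupp.notMem_support_iff.mp hj)).symm
  calc ‖∏ j, ((x j : ℂ)) ^ d j‖ = ∏ j, (x j) ^ d j := by
        rw [norm_prod]
        exact Finset.prod_congr rfl fun j _ => by
          rw [norm_pow, Complex.norm_real, Real.norm_of_nonneg (hx j).le]
    _ ≤ ∏ j, (∑ i, x i) ^ d j :=
        Finset.prod_le_prod (fun j _ => pow_nonneg (hx j).le _)
          (fun j _ => pow_le_pow_left₀ (hx j).le
            (Finset.single_le_sum (fun i _ => (hx i).le) (Finset.mem_univ j)) _)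
    _ = (∑ j, x j) ^ N := by rw [Finset.prod_pow_eq_pow_sum, hdN]

end LaplaceAux

namespace LaplaceAux

lemma pointwise_bound (n N : ℕ) (R : MvPolynomial (Fin n) ℂ) (hR : R.IsHomogeneous N)
    (τ : ℝ) (hτ : 0 < τ) :
    ∃ K0 : ℝ, 0 ≤ K0 ∧ ∀ ρ : EuclideanSpace ℂ (Fin n), ρ ≠ 0 →
      (∀ j, τ * ‖ρ‖ ≤ (ρ j).re) →
      ∀ x : Fin n → ℝ, (∀ j, 0 < x j) →
      ‖Complex.exp (-(∑ j, (x j : ℂ) * ρ j)) *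
          MvPolynomial.eval (fun j => ((x j : ℝ) : ℂ)) R‖
        ≤ K0 * ‖ρ‖ ^ (-(N:ℝ)) * ∏ j, Real.exp (-(τ * ‖ρ‖ / 2 * x j)) := by
  obtain ⟨c, hc0, hcb⟩ := poly_bound n N R hR
  refine ⟨c * N.factorial * (2/τ)^N, by positivity, ?_⟩
  intro ρ hρ hre x hx
  have hρ0 : 0 < ‖ρ‖ := norm_pos_iff.mpr hρ
  set s : ℝ := ∑ j, x j with hs
  have hs0 : 0 ≤ s := Finset.sum_nonneg fun j _ => (hx j).le
  set b : ℝ := τ * ‖ρ‖ with hb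
  have hb0 : 0 < b := by positivity
  have hexp : ‖Complex.exp (-(∑ j, (x j : ℂ) * ρ j))‖ ≤ Real.exp (-(b * s)) := by
    rw [Complex.norm_exp]
    apply Real.exp_le_exp.mpr
    rw [Complex.neg_re, Complex.re_sum]
    have h1 : ∀ j : Fin n, ((x j : ℂ) * ρ j).re = x j * (ρ j).re := by
      intro j; simp [Complex.mul_re]
    rw [Finset.sum_congr rfl fun j _ => h1 j]
    rw [neg_le_neg_iff, hb, hs, Finset.mul_sum]
    refine Finset.sum_le_sum fun j _ => ?_
    calc τ * ‖ρ‖ * x j = x j * (τ * ‖ρ‖) := by ring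
      _ ≤ x j * (ρ j).re := mul_le_mul_of_nonneg_left (hre j) (hx j).le
  have hkey : s ^ N * Real.exp (-(b * s)) ≤
      (N.factorial : ℝ) * (2/b)^N * Real.exp (-(b/2 * s)) := by
    have hu : (0:ℝ) ≤ b/2 * s := by positivity
    have h1 : (b/2 * s)^N ≤ (N.factorial : ℝ) * Real.exp (b/2 * s) :=
      pow_mul_exp_le N hu
    have h2 : s ^ N = (2/b)^N * (b/2 * s)^N := by
      rw [← mul_pow]
      congr 1
      field_simp
    rw [h2]
    have h3 : Real.exp (b/2*s) * Real.exp (-(b * s)) = Real.exp (-(b/2 * s)) := by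
      rw [← Real.exp_add]; congr 1; ring
    calc (2/b)^N * (b/2 * s)^N * Real.exp (-(b * s))
        ≤ (2/b)^N * ((N.factorial : ℝ) * Real.exp (b/2 * s)) * Real.exp (-(b * s)) := by
          have h2b : (0:ℝ) ≤ (2/b)^N := by positivity
          exact mul_le_mul_of_nonneg_right
            (mul_le_mul_of_nonneg_left h1 h2b) (Real.exp_pos _).le
      _ = (N.factorial : ℝ) * (2/b)^N * (Real.exp (b/2*s) * Real.exp (-(b * s))) := by ring
      _ = (N.factorial : ℝ) * (2/b)^N * Real.exp (-(b/2 * s)) := by rw [h3]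
  have hprod : Real.exp (-(b/2 * s)) = ∏ j, Real.exp (-(b / 2 * x j)) := by
    rw [← Real.exp_sum, Finset.sum_neg_distrib, hs, Finset.mul_sum]
  have h4 : (2/b)^N = (2/τ)^N * ‖ρ‖^(-(N:ℝ)) := by
    rw [Real.rpow_neg (norm_nonneg _), Real.rpow_natCast, hb, ← inv_pow, ← mul_pow]
    congr 1
    field_simp
  calc ‖Complex.exp (-(∑ j, (x j : ℂ) * ρ j)) *
        MvPolynomial.eval (fun j => ((x j : ℝ) : ℂ)) R‖
      ≤ Real.exp (-(b*s)) * (c * s^N) := by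
        rw [norm_mul]
        exact mul_le_mul hexp (hcb x hx) (norm_nonneg _) (Real.exp_pos _).le
    _ = c * (s^N * Real.exp (-(b*s))) := by ring
    _ ≤ c * ((N.factorial:ℝ) * (2/b)^N * Real.exp (-(b/2*s))) :=
        mul_le_mul_of_nonneg_left hkey hc0
    _ = c * N.factorial * (2/τ)^N * ‖ρ‖^(-(N:ℝ)) * ∏ j, Real.exp (-(b / 2 * x j)) := by
        rw [← hprod, h4]; ring

end LaplaceAux

namespace LaplaceAux

lemma eLpNorm_g_bound (n N : ℕ) (R : MvPolynomial (Fin n) ℂ) (hR : R.IsHomogeneous N)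
    (τ : ℝ) (hτ : 0 < τ) (q : ℝ≥0∞) (hq1 : 1 ≤ q) :
    ∃ C0 : ℝ, 0 ≤ C0 ∧ ∀ ρ : EuclideanSpace ℂ (Fin n), ρ ≠ 0 →
      (∀ j, τ * ‖ρ‖ ≤ (ρ j).re) →
      eLpNorm (fun x : Fin n → ℝ => Complex.exp (-(∑ j, (x j : ℂ) * ρ j)) *
          MvPolynomial.eval (fun j => ((x j : ℝ) : ℂ)) R) q
        (volume.restrict {x : Fin n → ℝ | ∀ j, 0 < x j})
      ≤ ENNReal.ofReal (C0 * ‖ρ‖ ^ (-(N:ℝ) + -((n:ℝ) / q.toReal))) := by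
  obtain ⟨K0, hK00, hpt⟩ := pointwise_bound n N R hR τ hτ
  by_cases hqtop : q = ∞
  · subst hqtop
    refine ⟨K0, hK00, ?_⟩
    intro ρ hρ hre
    have hρ0 : 0 < ‖ρ‖ := norm_pos_iff.mpr hρ
    simp only [ENNReal.toReal_top, div_zero, neg_zero, add_zero]
    rw [eLpNorm_exponent_top]
    apply eLpNormEssSup_le_of_ae_bound (C := K0 * ‖ρ‖ ^ (-(N:ℝ)))
    rw [ae_restrict_iff' (measurableSet_orthant n)]
    filter_upwards with x hx
    have h1 := hpt ρ hρ hre x hx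
    have h2 : (∏ j, Real.exp (-(τ * ‖ρ‖ / 2 * x j))) ≤ 1 := by
      apply Finset.prod_le_one (fun j _ => (Real.exp_pos _).le)
      intro j _
      rw [Real.exp_le_one_iff]
      have h0 : 0 ≤ τ * ‖ρ‖ / 2 * x j := by
        have := (hx j).le
        positivity
      linarith
    calc ‖_‖ ≤ K0 * ‖ρ‖ ^ (-(N:ℝ)) * ∏ j, Real.exp (-(τ * ‖ρ‖ / 2 * x j)) := h1
      _ ≤ K0 * ‖ρ‖ ^ (-(N:ℝ)) * 1 := by
          apply mul_le_mul_of_nonneg_left h2 (by positivity)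
      _ = K0 * ‖ρ‖ ^ (-(N:ℝ)) := mul_one _
  · -- q finite
    have hq0 : q ≠ 0 := by
      intro h; rw [h] at hq1; simp at hq1
    have hqr1 : 1 ≤ q.toReal := by
      have := ENNReal.toReal_mono hqtop hq1
      simpa using this
    have hqr0 : 0 < q.toReal := lt_of_lt_of_le one_pos hqr1
    set qr : ℝ := q.toReal with hqrdef
    set w : ℝ := 2 / (qr * τ) with hw
    have hw0 : 0 < w := by positivity
    refine ⟨K0 * (w ^ n) ^ (1/qr), by positivity, ?_⟩
    intro ρ hρ hre
    have hρ0 : 0 < ‖ρ‖ := norm_pos_iff.mpr hρ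
    set a : ℝ := τ * ‖ρ‖ / 2 with ha
    have ha0 : 0 < a := by positivity
    have hb0 : 0 < qr * a := by positivity
    set h : (Fin n → ℝ) → ℝ := fun x => ∏ j, Real.exp (-(a * x j)) with hh
    set μ := volume.restrict {x : Fin n → ℝ | ∀ j, 0 < x j} with hμ
    have hmono : eLpNorm (fun x : Fin n → ℝ => Complex.exp (-(∑ j, (x j : ℂ) * ρ j)) *
        MvPolynomial.eval (fun j => ((x j : ℝ) : ℂ)) R) q μ
        ≤ eLpNorm (fun x => (K0 * ‖ρ‖ ^ (-(N:ℝ))) * h x) q μ := by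
      apply eLpNorm_mono_ae
      rw [hμ, ae_restrict_iff' (measurableSet_orthant n)]
      filter_upwards with x hx
      rw [Real.norm_of_nonneg (by positivity)]
      exact hpt ρ hρ hre x hx
    have hsm : (fun x => (K0 * ‖ρ‖ ^ (-(N:ℝ))) * h x) = (K0 * ‖ρ‖ ^ (-(N:ℝ))) • h := rfl
    -- compute eLpNorm h q μ
    have hcomp : eLpNorm h q μ = ENNReal.ofReal (((1/(qr*a))^n) ^ (1/qr)) := by
      rw [eLpNorm_eq_lintegral_rpow_enorm_toReal hq0 hqtop]
      have hps : ∀ x : Fin n → ℝ, ‖h x‖ₑ ^ q.toReal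
          = ENNReal.ofReal (∏ j, Real.exp (-(qr * a * x j))) := by
        intro x
        have hx0 : 0 < h x := Finset.prod_pos fun j _ => Real.exp_pos _
        rw [← ofReal_norm_eq_enorm, Real.norm_of_nonneg hx0.le,
          ENNReal.ofReal_rpow_of_pos hx0]
        congr 1
        rw [hh]
        rw [← Real.finset_prod_rpow _ _ (fun j _ => (Real.exp_pos _).le) qr]
        refine Finset.prod_congr rfl fun j _ => ?_
        rw [← Real.exp_mul]
        congr 1
        ring
      rw [lintegral_congr hps]
      obtain ⟨hIb, hVb⟩ := exp_prod_integral n hb0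
      rw [hμ, ← ofReal_integral_eq_lintegral_ofReal hIb
        (Filter.Eventually.of_forall fun x => by positivity)]
      rw [hVb, ← ENNReal.ofReal_rpow_of_pos (by positivity)]
    rw [hsm] at hmono
    rw [eLpNorm_const_smul] at hmono
    refine hmono.trans ?_
    rw [hcomp, Real.enorm_eq_ofReal (by positivity),
      ← ENNReal.ofReal_mul (by positivity)]
    apply ENNReal.ofReal_le_ofReal
    have e1 : 1/(qr*a) = w * ‖ρ‖⁻¹ := by
      rw [ha, hw]
      field_simp
    have e4 : (((‖ρ‖:ℝ)⁻¹)^n : ℝ) ^ (1/qr) = ‖ρ‖ ^ (-((n:ℝ)/qr)) := by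
      rw [← Real.rpow_natCast (‖ρ‖⁻¹) n, ← Real.rpow_mul (by positivity),
        Real.inv_rpow (norm_nonneg _), ← Real.rpow_neg (norm_nonneg _)]
      rw [mul_one_div]
    refine le_of_eq ?_
    calc K0 * ‖ρ‖ ^ (-(N:ℝ)) * ((1/(qr*a))^n) ^ (1/qr)
        = K0 * ‖ρ‖ ^ (-(N:ℝ)) * ((w^n) ^ (1/qr) * ‖ρ‖ ^ (-((n:ℝ)/qr))) := by
          rw [e1, mul_pow, Real.mul_rpow (by positivity) (by positivity), e4]
      _ = (K0 * (w^n) ^ (1/qr)) * (‖ρ‖ ^ (-(N:ℝ)) * ‖ρ‖ ^ (-((n:ℝ)/qr))) := by ring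
      _ = K0 * (w^n) ^ (1/qr) * ‖ρ‖ ^ (-(N:ℝ) + -((n:ℝ)/qr)) := by
          rw [← Real.rpow_add hρ0]

end LaplaceAux

namespace LaplaceAux

lemma conclude (n N : ℕ) (R : MvPolynomial (Fin n) ℂ) (hR : R.IsHomogeneous N)
    (p : ℝ≥0∞) (τ : ℝ) (hτ : 0 < τ)
    (q : ℝ≥0∞) (hq1 : 1 ≤ q)
    (hpq : 1 / (1:ℝ≥0∞) = 1 / q + 1 / p)
    (hexp : -((N : ℝ) + n) + (n:ℝ) / p.toReal = -(N:ℝ) + -((n:ℝ) / q.toReal)) :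
    ∃ C : ℝ, ∀ ρ : EuclideanSpace ℂ (Fin n), ρ ≠ 0 →
      (∀ j, τ * ‖ρ‖ ≤ (ρ j).re) →
      ∀ f : (Fin n → ℝ) → ℂ,
        MemLp f p (volume.restrict {x : Fin n → ℝ | ∀ j, 0 < x j}) →
        IntegrableOn
          (fun x : Fin n → ℝ => Complex.exp (-(∑ j, (x j : ℂ) * ρ j)) *
            MvPolynomial.eval (fun j => ((x j : ℝ) : ℂ)) R * f x)
          {x : Fin n → ℝ | ∀ j, 0 < x j} ∧
        ‖∫ x in {x : Fin n → ℝ | ∀ j, 0 < x j},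
            Complex.exp (-(∑ j, (x j : ℂ) * ρ j)) *
              MvPolynomial.eval (fun j => ((x j : ℝ) : ℂ)) R * f x‖ ≤
          C * ‖ρ‖ ^ (-((N : ℝ) + n) + n / p.toReal) *
            (eLpNorm f p (volume.restrict {x : Fin n → ℝ | ∀ j, 0 < x j})).toReal := by
  obtain ⟨C0, hC00, hbd⟩ := eLpNorm_g_bound n N R hR τ hτ q hq1
  refine ⟨C0, ?_⟩
  intro ρ hρ hre f hf
  have hρ0 : 0 < ‖ρ‖ := norm_pos_iff.mpr hρ
  set μ := volume.restrict {x : Fin n → ℝ | ∀ j, 0 < x j} with hμ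
  set g : (Fin n → ℝ) → ℂ := fun x => Complex.exp (-(∑ j, (x j : ℂ) * ρ j)) *
      MvPolynomial.eval (fun j => ((x j : ℝ) : ℂ)) R with hg
  have hgc : Continuous g := by
    rw [hg]
    apply Continuous.mul
    · exact Complex.continuous_exp.comp (Continuous.neg (continuous_finset_sum _
        fun j _ => (Complex.continuous_ofReal.comp (continuous_apply j)).mul continuous_const))
    · exact (MvPolynomial.continuous_eval R).comp
        (continuous_pi fun j => Complex.continuous_ofReal.comp (continuous_apply j))
  have hgm : AEStronglyMeasurable g μ := hgc.aestronglyMeasurable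
  have hbd' := hbd ρ hρ hre
  have hgq : MemLp g q μ := ⟨hgm, lt_of_le_of_lt hbd' ENNReal.ofReal_lt_top⟩
  haveI : ENNReal.HolderTriple q p 1 := ⟨by simpa [one_div] using hpq.symm⟩
  have hmem1 : MemLp (g • f) 1 μ := hf.smul hgq
  have hsmul : (g • f) = fun x => g x * f x := rfl
  have hint : Integrable (fun x => g x * f x) μ := by
    rw [← hsmul]; exact memLp_one_iff_integrable.mp hmem1
  refine ⟨hint, ?_⟩
  have h3 : eLpNorm (fun x => g x * f x) 1 μ ≤ eLpNorm g q μ * eLpNorm f p μ := by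
    have h := eLpNorm_smul_le_mul_eLpNorm (p := q) (q := p) (r := 1) hf.1 hgm
    rw [hsmul] at h
    exact h
  have hfin : eLpNorm g q μ * eLpNorm f p μ ≠ ∞ :=
    ENNReal.mul_ne_top hgq.2.ne hf.2.ne
  have h1 : ‖∫ x, g x * f x ∂μ‖ ≤ ∫ x, ‖g x * f x‖ ∂μ := norm_integral_le_integral_norm _
  have h2 : ∫ x, ‖g x * f x‖ ∂μ = (eLpNorm (fun x => g x * f x) 1 μ).toReal := by
    rw [integral_norm_eq_lintegral_enorm hint.aestronglyMeasurable,
      eLpNorm_one_eq_lintegral_enorm]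
  show ‖∫ x, g x * f x ∂μ‖ ≤ C0 * ‖ρ‖ ^ (-((N : ℝ) + n) + n / p.toReal) * (eLpNorm f p μ).toReal
  calc ‖∫ x, g x * f x ∂μ‖
      ≤ (eLpNorm (fun x => g x * f x) 1 μ).toReal := by rw [← h2]; exact h1
    _ ≤ (eLpNorm g q μ * eLpNorm f p μ).toReal := ENNReal.toReal_mono hfin h3
    _ = (eLpNorm g q μ).toReal * (eLpNorm f p μ).toReal := ENNReal.toReal_mul
    _ ≤ (C0 * ‖ρ‖ ^ (-(N:ℝ) + -((n:ℝ)/q.toReal))) * (eLpNorm f p μ).toReal := by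
        refine mul_le_mul_of_nonneg_right ?_ ENNReal.toReal_nonneg
        have h5 := ENNReal.toReal_mono ENNReal.ofReal_ne_top hbd'
        rwa [ENNReal.toReal_ofReal (by positivity)] at h5
    _ = C0 * ‖ρ‖ ^ (-((N : ℝ) + n) + n / p.toReal) * (eLpNorm f p μ).toReal := by
        rw [hexp]

end LaplaceAux

open LaplaceAux in
theorem laplace_polynomial_Lp_estimate_aux
    (n N : ℕ) (hn : 1 ≤ n)
    (R : MvPolynomial (Fin n) ℂ) (hR : R.IsHomogeneous N)
    (p : ℝ≥0∞) (hp : 1 ≤ p) (τ : ℝ) (hτ : 0 < τ) :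
    ∃ C : ℝ, ∀ ρ : EuclideanSpace ℂ (Fin n), ρ ≠ 0 →
      (∀ j, τ * ‖ρ‖ ≤ (ρ j).re) →
      ∀ f : (Fin n → ℝ) → ℂ,
        MemLp f p (volume.restrict {x : Fin n → ℝ | ∀ j, 0 < x j}) →
        IntegrableOn
          (fun x : Fin n → ℝ => Complex.exp (-(∑ j, (x j : ℂ) * ρ j)) *
            MvPolynomial.eval (fun j => ((x j : ℝ) : ℂ)) R * f x)
          {x : Fin n → ℝ | ∀ j, 0 < x j} ∧
        ‖∫ x in {x : Fin n → ℝ | ∀ j, 0 < x j},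
            Complex.exp (-(∑ j, (x j : ℂ) * ρ j)) *
              MvPolynomial.eval (fun j => ((x j : ℝ) : ℂ)) R * f x‖ ≤
          C * ‖ρ‖ ^ (-((N : ℝ) + n) + n / p.toReal) *
            (eLpNorm f p (volume.restrict {x : Fin n → ℝ | ∀ j, 0 < x j})).toReal := by
  by_cases hp1 : p = 1
  · subst hp1
    refine conclude n N R hR 1 τ hτ ∞ le_top (by simp) ?_
    simp only [ENNReal.toReal_one, ENNReal.toReal_top, div_zero, neg_zero, add_zero, div_one]
    ring
  · by_cases hptop : p = ∞
    · subst hptop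
      refine conclude n N R hR ∞ τ hτ 1 le_rfl (by simp) ?_
      simp only [ENNReal.toReal_one, ENNReal.toReal_top, div_zero, div_one]
      ring
    · have hpr1 : 1 < p.toReal := by
        rw [← ENNReal.toReal_one]
        exact ENNReal.toReal_strict_mono hptop (lt_of_le_of_ne hp (Ne.symm hp1))
      set pr := p.toReal with hpr
      have hpr0 : 0 < pr := lt_trans one_pos hpr1
      set qr := pr / (pr - 1) with hqr
      have hqr0 : 0 < qr := div_pos hpr0 (by linarith)
      have hconj : 1/pr + 1/qr = 1 := by
        rw [hqr, one_div_div]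
        field_simp
        ring
      have hqr1 : 1 ≤ qr := by
        rw [hqr, le_div_iff₀ (by linarith)]
        linarith
      set q : ℝ≥0∞ := ENNReal.ofReal qr with hq
      have hq1 : 1 ≤ q := ENNReal.one_le_ofReal.mpr hqr1
      have hqtoReal : q.toReal = qr := ENNReal.toReal_ofReal hqr0.le
      have hpofReal : p = ENNReal.ofReal pr := (ENNReal.ofReal_toReal hptop).symm
      have hpq : 1 / (1:ℝ≥0∞) = 1 / q + 1 / p := by
        rw [hq, hpofReal]
        rw [one_div, one_div, one_div, inv_one,
          ← ENNReal.ofReal_inv_of_pos hqr0, ← ENNReal.ofReal_inv_of_pos hpr0,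
          ← ENNReal.ofReal_add (by positivity) (by positivity), ← ENNReal.ofReal_one]
        congr 1
        rw [one_div, one_div] at hconj
        linarith
      refine conclude n N R hR p τ hτ q hq1 hpq ?_
      rw [hqtoReal, ← hpr]
      have hnn : (n:ℝ)/pr + (n:ℝ)/qr = n := by
        have h := hconj
        have e : (n:ℝ)/pr + (n:ℝ)/qr = n * (1/pr + 1/qr) := by ring
        rw [e, h, mul_one]
      linarith


/-- Decay estimate for the Laplace-type integral of a homogeneous polynomial of degree `N`
times an `L^p` function over the positive orthant:
`|∫ e^{-x·ρ} R(x) f(x) dx| ≤ C |ρ|^{-(N+n)+n/p} ‖f‖_{L^p}` whenever `Re ρⱼ ≥ τ|ρ|` for all `j`. -/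
theorem laplace_polynomial_Lp_estimate
    (n N : ℕ) (hn : 1 ≤ n)
    (R : MvPolynomial (Fin n) ℂ) (hR : R.IsHomogeneous N)
    (p : ℝ≥0∞) (hp : 1 ≤ p) (τ : ℝ) (hτ : 0 < τ) :
    ∃ C : ℝ, ∀ ρ : EuclideanSpace ℂ (Fin n), ρ ≠ 0 →
      (∀ j, τ * ‖ρ‖ ≤ (ρ j).re) →
      ∀ f : (Fin n → ℝ) → ℂ,
        MemLp f p (volume.restrict {x : Fin n → ℝ | ∀ j, 0 < x j}) →
        IntegrableOn
          (fun x : Fin n → ℝ => Complex.exp (-(∑ j, (x j : ℂ) * ρ j)) *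
            MvPolynomial.eval (fun j => ((x j : ℝ) : ℂ)) R * f x)
          {x : Fin n → ℝ | ∀ j, 0 < x j} ∧
        ‖∫ x in {x : Fin n → ℝ | ∀ j, 0 < x j},
            Complex.exp (-(∑ j, (x j : ℂ) * ρ j)) *
              MvPolynomial.eval (fun j => ((x j : ℝ) : ℂ)) R * f x‖ ≤
          C * ‖ρ‖ ^ (-((N : ℝ) + n) + n / p.toReal) *
            (eLpNorm f p (volume.restrict {x : Fin n → ℝ | ∀ j, 0 < x j})).toReal := by
  exact laplace_polynomial_Lp_estimate_aux n N hn R hR p hp τ hτ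
end

section
/- Let n ≥ 2 and let P be a harmonic homogeneous polynomial of degree N on ℝⁿ with complex coefficients, with associated polynomial Q ∈ ℂ[η₁,…,η_n]. Then there exist polynomials P_î and Q_î in ℂ[η₁,…,η_n] for i = 1,…,n, where P_î is homogeneous of degree N+2n−2, Q_î is homogeneous of degree N+2n−3, and both P_î and Q_î are independent of the variable η_i, such that the polynomial identity σ_{n−1}(η²)·Q(η) = σ_n(η)·Σ_{i=1}^n (P_î + η_i Q_î) holds in ℂ[η₁,…,η_n]. -/
open MvPolynomial

/-- The polynomial `Q(η) = Σ_{|α|=N} α! p_α η^{α+1}` associated to a polynomial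
`P(x) = Σ p_α x^α`. -/
noncomputable def assocPoly (n : ℕ) (P : MvPolynomial (Fin n) ℂ) : MvPolynomial (Fin n) ℂ :=
  ∑ α ∈ P.support,
    monomial (α + Finsupp.equivFunOnFinite.symm fun _ => 1)
      ((∏ j, ((α j).factorial : ℂ)) * P.coeff α)

/-- `σ_{n-1}(η²) = Σᵢ ∏_{j≠i} ηⱼ²`. -/
noncomputable def sigmaSq (n : ℕ) : MvPolynomial (Fin n) ℂ :=
  ∑ i : Fin n, ∏ j ∈ Finset.univ.erase i, (X j) ^ 2

/-- `σₙ(η) = ∏ⱼ ηⱼ`. -/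
noncomputable def sigmaN (n : ℕ) : MvPolynomial (Fin n) ℂ :=
  ∏ j : Fin n, X j

/-- A polynomial is independent of the variable `i` if no monomial of it contains that
variable. -/
def IndepOf {n : ℕ} (i : Fin n) (p : MvPolynomial (Fin n) ℂ) : Prop :=
  ∀ d ∈ p.support, d i = 0

noncomputable def Rpoly (n : ℕ) (P : MvPolynomial (Fin n) ℂ) : MvPolynomial (Fin n) ℂ :=
  ∑ α ∈ P.support, monomial α ((∏ j, ((α j).factorial : ℂ)) * P.coeff α)

lemma coeff_Rpoly {n : ℕ} (P : MvPolynomial (Fin n) ℂ) (δ : Fin n →₀ ℕ) :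
    coeff δ (Rpoly n P) = (∏ j, ((δ j).factorial : ℂ)) * coeff δ P := by
  classical
  rw [Rpoly, coeff_sum]
  simp only [coeff_monomial]
  rw [Finset.sum_ite_eq' P.support δ (fun α => (∏ j, ((α j).factorial : ℂ)) * P.coeff α)]
  by_cases h : δ ∈ P.support
  · rw [if_pos h]
  · rw [if_neg h, notMem_support_iff.mp h, mul_zero]

lemma sigmaN_eq (n : ℕ) :
    sigmaN n = monomial (Finsupp.equivFunOnFinite.symm fun _ => 1) 1 := by
  have h1 : (Finsupp.equivFunOnFinite.symm fun (_ : Fin n) => (1:ℕ)) = ∑ j : Fin n, Finsupp.single j 1 := by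
    ext k
    rw [Finsupp.finset_sum_apply]
    simp [Finsupp.single_apply, Finset.sum_ite_eq]
  rw [sigmaN, h1, monomial_sum_index]
  simp [X]

lemma assoc_eq {n : ℕ} (P : MvPolynomial (Fin n) ℂ) :
    assocPoly n P = sigmaN n * Rpoly n P := by
  rw [assocPoly, Rpoly, sigmaN_eq, Finset.mul_sum]
  refine Finset.sum_congr rfl fun α _ => ?_
  rw [monomial_mul, one_mul, add_comm]

noncomputable def mm (n : ℕ) (i : Fin n) : Fin n →₀ ℕ :=
  ∑ j ∈ Finset.univ.erase i, Finsupp.single j 2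

lemma mm_apply {n : ℕ} (i k : Fin n) : mm n i k = if k = i then 0 else 2 := by
  rw [mm, Finsupp.finset_sum_apply]
  rcases eq_or_ne k i with rfl | hk
  · rw [if_pos rfl]
    exact Finset.sum_eq_zero fun j hj => Finsupp.single_eq_of_ne' (Finset.ne_of_mem_erase hj)
  · rw [if_neg hk]
    rw [Finset.sum_eq_single k]
    · simp
    · intro j _ hj; exact Finsupp.single_eq_of_ne' hj
    · intro h; simp [hk] at h

lemma sigmaSq_eq (n : ℕ) : sigmaSq n = ∑ i : Fin n, monomial (mm n i) 1 := by
  rw [sigmaSq]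
  refine Finset.sum_congr rfl fun i _ => ?_
  rw [mm, monomial_sum_index]
  simp [X_pow_eq_monomial]

lemma coeff_pderiv' {n : ℕ} (j : Fin n) (γ : Fin n →₀ ℕ) (p : MvPolynomial (Fin n) ℂ) :
    coeff γ (pderiv j p) = (γ j + 1 : ℂ) * coeff (γ + Finsupp.single j 1) p := by
  induction p using MvPolynomial.induction_on' with
  | monomial s a =>
    rw [pderiv_monomial, coeff_monomial, coeff_monomial]
    rcases Nat.eq_zero_or_pos (s j) with h0 | hpos
    · have h1 : s - Finsupp.single j 1 = s := by
        ext k; rw [Finsupp.tsub_apply]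
        rcases eq_or_ne k j with rfl | hk
        · simp [h0]
        · simp [Finsupp.single_eq_of_ne' (Ne.symm hk)]
      have h2 : s ≠ γ + Finsupp.single j 1 := by
        intro h; apply absurd h0
        rw [h]; simp
      rw [h1, if_neg h2, h0]
      split <;> simp
    · have hiff : s - Finsupp.single j 1 = γ ↔ s = γ + Finsupp.single j 1 := by
        constructor
        · intro h; ext k
          have := DFunLike.congr_fun h k
          simp only [Finsupp.tsub_apply, Finsupp.coe_add, Pi.add_apply] at this ⊢
          rcases eq_or_ne k j with rfl | hk
          · simp only [Finsupp.single_eq_same] at this ⊢; omega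
          · simp only [Finsupp.single_eq_of_ne' (Ne.symm hk)] at this ⊢; omega
        · intro h; subst h; ext k
          simp only [Finsupp.tsub_apply, Finsupp.coe_add, Pi.add_apply]
          rcases eq_or_ne k j with rfl | hk
          · simp
          · simp [Finsupp.single_eq_of_ne' (Ne.symm hk)]
      by_cases h : s = γ + Finsupp.single j 1
      · rw [if_pos (hiff.mpr h), if_pos h]
        have : s j = γ j + 1 := by rw [h]; simp
        rw [this]; push_cast; ring
      · rw [if_neg (fun hh => h (hiff.mp hh)), if_neg h, mul_zero]
  | add p q hp hq =>
    simp only [map_add, coeff_add, hp, hq]; ring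

lemma coeff_S_bad {n : ℕ} (P : MvPolynomial (Fin n) ℂ)
    (hPharm : ∑ j : Fin n, pderiv j (pderiv j P) = 0)
    (β : Fin n →₀ ℕ) (hβ : ∀ i, 2 ≤ β i) :
    coeff β (sigmaSq n * Rpoly n P) = 0 := by
  classical
  set γ : Fin n →₀ ℕ := Finsupp.equivFunOnFinite.symm fun j => β j - 2 with hγ
  have hγap : ∀ k, γ k = β k - 2 := fun k => rfl
  have hβeq : ∀ i : Fin n, β = mm n i + (γ + Finsupp.single i 2) := by
    intro i; ext k
    rw [Finsupp.add_apply, Finsupp.add_apply, mm_apply, Finsupp.single_apply, hγap]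
    rcases eq_or_ne k i with rfl | hk
    · rw [if_pos rfl, if_pos rfl]; have := hβ k; omega
    · rw [if_neg hk, if_neg (Ne.symm hk)]; have := hβ k; omega
  have hΔ : ∀ i : Fin n, coeff γ (pderiv i (pderiv i P))
      = ((γ i + 1) * (γ i + 2) : ℂ) * coeff (γ + Finsupp.single i 2) P := by
    intro i
    rw [coeff_pderiv', coeff_pderiv']
    have h1 : (γ + Finsupp.single i 1 : Fin n →₀ ℕ) i = γ i + 1 := by rw [Finsupp.add_apply, Finsupp.single_eq_same]
    have h2 : γ + Finsupp.single i 1 + Finsupp.single i 1 = γ + Finsupp.single i 2 := by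
      rw [add_assoc, ← Finsupp.single_add]
    rw [h1, h2]; push_cast; ring
  have hfact : ∀ i : Fin n, (∏ j, ((((γ + Finsupp.single i 2 : Fin n →₀ ℕ)) j).factorial : ℂ))
      = ((γ i + 1) * (γ i + 2)) * ∏ j, ((γ j).factorial : ℂ) := by
    intro i
    rw [← Finset.mul_prod_erase Finset.univ _ (Finset.mem_univ i),
        ← Finset.mul_prod_erase Finset.univ (fun j => ((γ j).factorial : ℂ)) (Finset.mem_univ i)]
    have h1 : (γ + Finsupp.single i 2 : Fin n →₀ ℕ) i = γ i + 2 := by rw [Finsupp.add_apply, Finsupp.single_eq_same]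
    have h2 : ∀ j ∈ Finset.univ.erase i, ((((γ + Finsupp.single i 2 : Fin n →₀ ℕ)) j).factorial : ℂ)
        = ((γ j).factorial : ℂ) := by
      intro j hj
      rw [Finsupp.add_apply, Finsupp.single_eq_of_ne' (Ne.symm (Finset.ne_of_mem_erase hj)), add_zero]
    rw [Finset.prod_congr rfl h2, h1]
    have h3 : (γ i + 2).factorial = (γ i + 2) * ((γ i + 1) * (γ i).factorial) := by
      rw [show γ i + 2 = (γ i + 1) + 1 by ring, Nat.factorial_succ, Nat.factorial_succ]
    rw [h3]; push_cast; ring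
  have hzero : ∑ i : Fin n, ((γ i + 1) * (γ i + 2) : ℂ) * coeff (γ + Finsupp.single i 2) P = 0 := by
    have := congrArg (coeff γ) hPharm
    rw [coeff_sum, coeff_zero] at this
    rw [← this]
    exact Finset.sum_congr rfl fun i _ => (hΔ i).symm
  rw [sigmaSq_eq, Finset.sum_mul, coeff_sum]
  calc ∑ i : Fin n, coeff β (monomial (mm n i) 1 * Rpoly n P)
      = ∑ i : Fin n, ((γ i + 1) * (γ i + 2) : ℂ) * coeff (γ + Finsupp.single i 2) P
        * ∏ j, ((γ j).factorial : ℂ) := by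
        refine Finset.sum_congr rfl fun i _ => ?_
        rw [hβeq i, coeff_monomial_mul, one_mul, coeff_Rpoly, hfact i]; ring
    _ = 0 := by rw [← Finset.sum_mul, hzero, zero_mul]

lemma degree_univ' {n : ℕ} (d : Fin n →₀ ℕ) : d.degree = ∑ k, d k :=
  Finset.sum_subset (Finset.subset_univ _) (fun k _ hk => Finsupp.notMem_support_iff.mp hk)

lemma degree_add' {n : ℕ} (a b : Fin n →₀ ℕ) : (a + b).degree = a.degree + b.degree := by
  rw [degree_univ', degree_univ', degree_univ', ← Finset.sum_add_distrib]
  exact Finset.sum_congr rfl fun k _ => Finsupp.add_apply a b k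

lemma degree_single' {n : ℕ} (i : Fin n) (m : ℕ) : (Finsupp.single i m).degree = m := by
  rw [degree_univ']
  rw [Finset.sum_eq_single i (fun j _ hj => Finsupp.single_eq_of_ne' (Ne.symm hj))
    (fun h => absurd (Finset.mem_univ i) h)]
  exact Finsupp.single_eq_same

lemma sigmaSq_hom (n : ℕ) : (sigmaSq n).IsHomogeneous (2 * n - 2) := by
  refine IsHomogeneous.sum _ _ _ fun i _ => ?_
  have h := IsHomogeneous.prod (Finset.univ.erase i) (fun j => (X j : MvPolynomial (Fin n) ℂ) ^ 2)
    (fun _ => 2) (fun j _ => isHomogeneous_X_pow j 2)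
  have hc : ∑ _j ∈ Finset.univ.erase i, 2 = 2 * n - 2 := by
    rw [Finset.sum_const, smul_eq_mul, Finset.card_erase_of_mem (Finset.mem_univ i),
      Finset.card_univ, Fintype.card_fin]
    omega
  rwa [hc] at h

lemma Rpoly_hom {n N : ℕ} (P : MvPolynomial (Fin n) ℂ) (hPhom : P.IsHomogeneous N) :
    (Rpoly n P).IsHomogeneous N := by
  refine IsHomogeneous.sum _ _ _ fun α hα => isHomogeneous_monomial _ ?_
  rw [Finsupp.degree_eq_weight_one]
  exact hPhom (mem_support_iff.mp hα)

/-- For a harmonic homogeneous polynomial `P` of degree `N` with associated polynomial `Q`,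
there exist polynomials `P_î` (homogeneous of degree `N+2n-2`) and `Q_î` (homogeneous of
degree `N+2n-3`), each independent of `ηᵢ`, with
`σ_{n-1}(η²)·Q(η) = σₙ(η)·Σᵢ (P_î + ηᵢ Q_î)`. -/
theorem assocPoly_representation
    (n N : ℕ) (hn : 2 ≤ n) (P : MvPolynomial (Fin n) ℂ)
    (hPhom : P.IsHomogeneous N)
    (hPharm : ∑ j : Fin n, pderiv j (pderiv j P) = 0) :
    ∃ Pi Qi : Fin n → MvPolynomial (Fin n) ℂ,
      (∀ i, (Pi i).IsHomogeneous (N + (2 * n - 2)) ∧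
            (Qi i).IsHomogeneous (N + (2 * n - 3)) ∧
            IndepOf i (Pi i) ∧ IndepOf i (Qi i)) ∧
      sigmaSq n * assocPoly n P = sigmaN n * ∑ i : Fin n, (Pi i + X i * Qi i) := by
  classical
  set S : MvPolynomial (Fin n) ℂ := sigmaSq n * Rpoly n P with hSdef
  -- every monomial of S has some exponent ≤ 1
  have hsupp : ∀ d ∈ S.support, ∃ i, d i ≤ 1 := by
    intro d hd
    by_contra h
    push_neg at h
    exact mem_support_iff.mp hd (coeff_S_bad P hPharm d fun i => h i)
  have hnpos : 0 < n := by omega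
  set ch : (Fin n →₀ ℕ) → Fin n := fun d =>
    if h : ∃ i, d i ≤ 1 then h.choose else ⟨0, hnpos⟩ with hchdef
  have hch : ∀ d ∈ S.support, d (ch d) ≤ 1 := by
    intro d hd
    have h := hsupp d hd
    simp only [hchdef, dif_pos h]
    exact h.choose_spec
  -- homogeneity of S
  have hShom : S.IsHomogeneous (N + (2 * n - 2)) := by
    have := (Rpoly_hom P hPhom).mul (sigmaSq_hom n)
    rwa [mul_comm (Rpoly n P)] at this
  have hdeg : ∀ d ∈ S.support, Finsupp.degree d = N + (2 * n - 2) := by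
    intro d hd
    rw [Finsupp.degree_eq_weight_one]
    exact hShom (mem_support_iff.mp hd)
  refine ⟨fun i => ∑ d ∈ S.support.filter (fun d => ch d = i ∧ d i = 0),
            monomial d (coeff d S),
          fun i => ∑ d ∈ S.support.filter (fun d => ch d = i ∧ d i = 1),
            monomial (d - Finsupp.single i 1) (coeff d S), fun i => ?_, ?_⟩
  · refine ⟨?_, ?_, ?_, ?_⟩
    · refine IsHomogeneous.sum _ _ _ fun d hd => isHomogeneous_monomial _ ?_
      exact hdeg d (Finset.mem_filter.mp hd).1
    · refine IsHomogeneous.sum _ _ _ fun d hd => isHomogeneous_monomial _ ?_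
      obtain ⟨hd1, _, hd3⟩ := Finset.mem_filter.mp hd
      have hdd := hdeg d hd1
      have hsub : (d - Finsupp.single i 1) + Finsupp.single i 1 = d := by
        ext k
        rw [Finsupp.add_apply, Finsupp.tsub_apply, Finsupp.single_apply]
        rcases eq_or_ne i k with rfl | hk
        · rw [if_pos rfl, hd3]
        · rw [if_neg hk]; omega
      have := congrArg Finsupp.degree hsub
      rw [degree_add', degree_single'] at this
      omega
    · intro e he
      have := support_sum he
      obtain ⟨d, hd, hed⟩ := Finset.mem_biUnion.mp this
      have := support_monomial_subset hed
      rw [Finset.mem_singleton] at this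
      subst this
      exact (Finset.mem_filter.mp hd).2.2
    · intro e he
      have := support_sum he
      obtain ⟨d, hd, hed⟩ := Finset.mem_biUnion.mp this
      have := support_monomial_subset hed
      rw [Finset.mem_singleton] at this
      subst this
      rw [Finsupp.tsub_apply, Finsupp.single_eq_same, (Finset.mem_filter.mp hd).2.2]
  · -- the identity
    have hXQ : ∀ i : Fin n, (X i : MvPolynomial (Fin n) ℂ) *
        ∑ d ∈ S.support.filter (fun d => ch d = i ∧ d i = 1),
          monomial (d - Finsupp.single i 1) (coeff d S)
        = ∑ d ∈ S.support.filter (fun d => ch d = i ∧ d i = 1), monomial d (coeff d S) := by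
      intro i
      rw [Finset.mul_sum]
      refine Finset.sum_congr rfl fun d hd => ?_
      obtain ⟨_, _, hd3⟩ := Finset.mem_filter.mp hd
      have harg : (Finsupp.single i 1 + (d - Finsupp.single i 1) : Fin n →₀ ℕ) = d := by
        ext k
        rw [Finsupp.add_apply, Finsupp.tsub_apply, Finsupp.single_apply]
        rcases eq_or_ne i k with rfl | hk
        · rw [if_pos rfl, hd3]
        · rw [if_neg hk]; omega
      rw [X, monomial_mul, one_mul, harg]
    have hsplit : ∀ i : Fin n,
        ((∑ d ∈ S.support.filter (fun d => ch d = i ∧ d i = 0), monomial d (coeff d S))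
          + ∑ d ∈ S.support.filter (fun d => ch d = i ∧ d i = 1), monomial d (coeff d S))
        = ∑ d ∈ S.support.filter (fun d => ch d = i), monomial d (coeff d S) := by
      intro i
      rw [← Finset.sum_filter_add_sum_filter_not (S.support.filter (fun d => ch d = i))
        (fun d => d i = 0) (fun d => monomial d (coeff d S))]
      congr 1
      · rw [Finset.filter_filter]
      · rw [Finset.filter_filter]
        refine Finset.sum_congr (Finset.filter_congr fun d hd => ?_) fun _ _ => rfl
        have h := hch d hd
        constructor
        · rintro ⟨h1, h2⟩
          subst h1
          exact ⟨rfl, by omega⟩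
        · rintro ⟨h1, h2⟩
          rw [h1] at h
          refine ⟨h1, ?_⟩
          omega
    have hfib : ∑ i : Fin n, ∑ d ∈ S.support.filter (fun d => ch d = i),
        monomial d (coeff d S) = S := by
      rw [Finset.sum_fiberwise_of_maps_to (fun d _ => Finset.mem_univ (ch d))
        (fun d => monomial d (coeff d S))]
      exact (as_sum S).symm
    have hfin : ∑ i : Fin n,
        ((∑ d ∈ S.support.filter (fun d => ch d = i ∧ d i = 0), monomial d (coeff d S))
          + X i * ∑ d ∈ S.support.filter (fun d => ch d = i ∧ d i = 1),
              monomial (d - Finsupp.single i 1) (coeff d S)) = S := by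
      calc _ = ∑ i : Fin n, ∑ d ∈ S.support.filter (fun d => ch d = i),
            monomial d (coeff d S) :=
          Finset.sum_congr rfl fun i _ => by rw [hXQ i, hsplit i]
        _ = S := hfib
    rw [hfin, assoc_eq, hSdef]
    ring
end

section
/- For every n ≥ 3, the polynomial σ_{n−1}(η²) = Σ_{i=1}^n ∏_{j≠i} η_j² is irreducible in the polynomial ring ℂ[η₁,…,η_n]. For n = 2 it factors as σ_1(η²) = η₁² + η₂² = (η₁ − iη₂)(η₁ + iη₂). -/
open MvPolynomial

-- ψ computations
noncomputable def psi (m : ℕ) : MvPolynomial (Fin (m+1)) ℂ →ₐ[ℂ] Polynomial ℂ :=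
  MvPolynomial.aeval (fun j : Fin (m+1) => if j = 0 then (Polynomial.X : Polynomial ℂ) else 1)

lemma psi_prod (m : ℕ) :
    psi m (∏ j : Fin (m+1), (X j : MvPolynomial (Fin (m+1)) ℂ) ^ 2) = Polynomial.X ^ 2 := by
  rw [map_prod]
  rw [Finset.prod_eq_single_of_mem (0 : Fin (m+1)) (Finset.mem_univ _)]
  · simp [psi]
  · intro b _ hb
    simp [psi, hb]

lemma psi_sigma (m : ℕ) :
    psi m (sigmaSq (m+1)) = Polynomial.C (m : ℂ) * Polynomial.X ^ 2 + 1 := by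
  rw [sigmaSq, map_sum]
  have hterm : ∀ i : Fin (m+1),
      psi m (∏ j ∈ Finset.univ.erase i, (X j : MvPolynomial (Fin (m+1)) ℂ) ^ 2)
        = if i = 0 then 1 else Polynomial.X ^ 2 := by
    intro i
    rw [map_prod]
    by_cases hi : i = 0
    · subst hi
      simp only [if_pos rfl]
      apply Finset.prod_eq_one
      intro j hj
      have : j ≠ 0 := Finset.ne_of_mem_erase hj
      simp [psi, this]
    · rw [if_neg hi]
      rw [Finset.prod_eq_single_of_mem (0 : Fin (m+1))
        (Finset.mem_erase.2 ⟨Ne.symm hi, Finset.mem_univ _⟩)]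
      · simp [psi]
      · intro b _ hb
        simp [psi, hb]
  rw [Finset.sum_congr rfl (fun i _ => hterm i)]
  rw [← Finset.add_sum_erase _ _ (Finset.mem_univ (0 : Fin (m+1)))]
  rw [if_pos rfl]
  rw [Finset.sum_congr rfl (fun i hi => if_neg (Finset.ne_of_mem_erase hi))]
  rw [Finset.sum_const]
  have hcard : (Finset.univ.erase (0 : Fin (m+1))).card = m := by
    rw [Finset.card_erase_of_mem (Finset.mem_univ _)]
    simp
  rw [hcard, add_comm, nsmul_eq_mul]
  norm_num [Polynomial.C_eq_natCast]

lemma prime_X_fin (m : ℕ) (j : Fin (m+1)) :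
    Prime (X j : MvPolynomial (Fin (m+1)) ℂ) := by
  let e := (renameEquiv ℂ (Equiv.swap j 0)).trans (finSuccEquiv ℂ m)
  have he : e (X j) = Polynomial.X := by
    simp [e, renameEquiv_apply, rename_X, Equiv.swap_apply_left, finSuccEquiv_X_zero]
  rw [← (MulEquiv.prime_iff e.toRingEquiv.toMulEquiv)]
  have : e.toRingEquiv.toMulEquiv (X j) = Polynomial.X := he
  rw [this]
  exact Polynomial.prime_X

lemma map_sigma (m : ℕ) :
    finSuccEquiv ℂ m (sigmaSq (m+1)) =
      Polynomial.C (sigmaSq m) * Polynomial.X ^ 2 +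
        Polynomial.C (∏ j : Fin m, (X j : MvPolynomial (Fin m) ℂ) ^ 2) := by
  have hX0 : ((X 0 : MvPolynomial (Fin (m+1)) ℂ))^2 ≠ 0 :=
    pow_ne_zero _ (MvPolynomial.X_ne_zero _)
  have e0 : (∏ j ∈ Finset.univ.erase (0 : Fin (m+1)), (X j : MvPolynomial (Fin (m+1)) ℂ)^2)
      = ∏ j : Fin m, (X (Fin.succ j) : MvPolynomial (Fin (m+1)) ℂ)^2 := by
    apply mul_left_cancel₀ hX0
    rw [Finset.mul_prod_erase Finset.univ (fun j : Fin (m+1) => (X j : MvPolynomial (Fin (m+1)) ℂ)^2) (Finset.mem_univ (0 : Fin (m+1))),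
      Fin.prod_univ_succ (fun j : Fin (m+1) => (X j : MvPolynomial (Fin (m+1)) ℂ)^2)]
  have esucc : ∀ i : Fin m,
      (∏ j ∈ Finset.univ.erase (Fin.succ i), (X j : MvPolynomial (Fin (m+1)) ℂ)^2)
        = (X 0 : MvPolynomial (Fin (m+1)) ℂ)^2 *
            ∏ j ∈ Finset.univ.erase i, (X (Fin.succ j) : MvPolynomial (Fin (m+1)) ℂ)^2 := by
    intro i
    apply mul_left_cancel₀ (pow_ne_zero 2 (MvPolynomial.X_ne_zero (Fin.succ i)))
    rw [Finset.mul_prod_erase Finset.univ (fun j : Fin (m+1) => (X j : MvPolynomial (Fin (m+1)) ℂ)^2) (Finset.mem_univ (Fin.succ i)),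
      Fin.prod_univ_succ (fun j : Fin (m+1) => (X j : MvPolynomial (Fin (m+1)) ℂ)^2)]
    rw [← Finset.mul_prod_erase Finset.univ (fun j : Fin m => (X (Fin.succ j) : MvPolynomial (Fin (m+1)) ℂ)^2) (Finset.mem_univ i)]
    ring
  have hS : sigmaSq (m+1) =
      (∏ j : Fin m, (X (Fin.succ j) : MvPolynomial (Fin (m+1)) ℂ)^2)
        + (X 0 : MvPolynomial (Fin (m+1)) ℂ)^2 *
            ∑ i : Fin m, ∏ j ∈ Finset.univ.erase i,
              (X (Fin.succ j) : MvPolynomial (Fin (m+1)) ℂ)^2 := by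
    rw [sigmaSq, Fin.sum_univ_succ, e0, Finset.sum_congr rfl (fun i _ => esucc i),
      ← Finset.mul_sum]
  have key1 : finSuccEquiv ℂ m (∏ j : Fin m, (X (Fin.succ j) : MvPolynomial (Fin (m+1)) ℂ)^2)
      = Polynomial.C (∏ j : Fin m, (X j : MvPolynomial (Fin m) ℂ)^2) := by
    rw [map_prod, map_prod]
    exact Finset.prod_congr rfl fun j _ => by rw [map_pow, map_pow, finSuccEquiv_X_succ]
  have key2 : finSuccEquiv ℂ m (∑ i : Fin m, ∏ j ∈ Finset.univ.erase i,
        (X (Fin.succ j) : MvPolynomial (Fin (m+1)) ℂ)^2)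
      = Polynomial.C (sigmaSq m) := by
    rw [sigmaSq, map_sum, map_sum]
    refine Finset.sum_congr rfl fun i _ => ?_
    rw [map_prod, map_prod]
    exact Finset.prod_congr rfl fun j _ => by rw [map_pow, map_pow, finSuccEquiv_X_succ]
  rw [hS, map_add, map_mul, map_pow, finSuccEquiv_X_zero, key1, key2]
  ring


lemma no_sq (c : ℂ) (hc : c ≠ 0) (u : Polynomial ℂ) :
    u ^ 2 ≠ -((Polynomial.C c * Polynomial.X ^ 2 + 1) * Polynomial.X ^ 2) := by
  intro h
  obtain ⟨r, hr⟩ := IsAlgClosed.exists_pow_nat_eq (-1/c) (n := 2) (by norm_num)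
  have hcr : c * r ^ 2 = -1 := by rw [hr]; field_simp
  have hr0 : r ≠ 0 := by
    intro h0
    rw [h0] at hcr
    simp at hcr
  have hur : u.eval r = 0 := by
    have := congrArg (Polynomial.eval r) h
    simp only [Polynomial.eval_pow, Polynomial.eval_neg, Polynomial.eval_mul,
      Polynomial.eval_add, Polynomial.eval_one, Polynomial.eval_C, Polynomial.eval_X] at this
    have h2 : (u.eval r) ^ 2 = 0 := by rw [this]; linear_combination (-(r^2)) * hcr
    exact pow_eq_zero_iff (by norm_num) |>.mp h2
  have hder := congrArg (fun p => Polynomial.eval r (Polynomial.derivative p)) h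
  simp only [Polynomial.derivative_pow, Polynomial.derivative_neg, Polynomial.derivative_mul,
    Polynomial.derivative_add, Polynomial.derivative_one, Polynomial.derivative_C,
    Polynomial.derivative_X, Polynomial.eval_mul, Polynomial.eval_neg, Polynomial.eval_add,
    Polynomial.eval_pow, Polynomial.eval_C, Polynomial.eval_X, Polynomial.eval_one,
    Polynomial.eval_natCast, Polynomial.eval_zero, hur] at hder
  norm_num at hder
  -- hder : 0 = eval of derivative of RHS; should reduce to 0 = 2r or similar
  have : r = 0 := by
    linear_combination (-1/2 : ℂ) * hder + (2*r) * hcr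
  exact hr0 this

lemma not_dvd_sigma (m : ℕ) (j : Fin (m+1)) :
    ¬ ((X j : MvPolynomial (Fin (m+1)) ℂ) ∣ sigmaSq (m+1)) := by
  intro hdvd
  set φ := MvPolynomial.aeval (R := ℂ)
    (fun l : Fin (m+1) => if l = j then 0 else (X l : MvPolynomial (Fin (m+1)) ℂ)) with hφ
  have hzero : φ (sigmaSq (m+1)) = 0 := by
    obtain ⟨w, hw⟩ := hdvd
    rw [hw, map_mul]
    have : φ (X j) = 0 := by simp [hφ]
    rw [this, zero_mul]
  have hval : φ (sigmaSq (m+1)) =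
      ∏ l ∈ Finset.univ.erase j, (X l : MvPolynomial (Fin (m+1)) ℂ) ^ 2 := by
    rw [sigmaSq, map_sum, Finset.sum_eq_single_of_mem j (Finset.mem_univ j)]
    · rw [map_prod]
      refine Finset.prod_congr rfl fun l hl => ?_
      have : l ≠ j := Finset.ne_of_mem_erase hl
      simp [hφ, this]
    · intro i _ hij
      rw [map_prod]
      refine Finset.prod_eq_zero (Finset.mem_erase.2 ⟨Ne.symm hij, Finset.mem_univ j⟩) ?_
      simp [hφ]
  rw [hval] at hzero
  exact (Finset.prod_ne_zero_iff.2 fun l _ =>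
    pow_ne_zero _ (MvPolynomial.X_ne_zero l)) hzero

lemma sigma_ne_zero (m : ℕ) : sigmaSq (m+1) ≠ 0 := by
  intro h
  have h2 := psi_sigma m
  rw [h, map_zero] at h2
  have := congrArg (Polynomial.eval 0) h2
  simp at this

lemma key (k : ℕ) :
    Irreducible (Polynomial.C (sigmaSq (k+2)) * Polynomial.X ^ 2 +
      Polynomial.C (∏ j : Fin (k+2), (X j : MvPolynomial (Fin (k+2)) ℂ) ^ 2)) := by
  set A := sigmaSq (k+2) with hAdef
  set B := ∏ j : Fin (k+2), (X j : MvPolynomial (Fin (k+2)) ℂ) ^ 2 with hBdef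
  have hA0 : A ≠ 0 := sigma_ne_zero (k+1)
  have hB0 : B ≠ 0 :=
    Finset.prod_ne_zero_iff.2 fun j _ => pow_ne_zero _ (MvPolynomial.X_ne_zero j)
  set q := Polynomial.C A * Polynomial.X ^ 2 + Polynomial.C B with hqdef
  have hqdeg : q.natDegree = 2 := by
    rw [hqdef, Polynomial.natDegree_add_C, Polynomial.natDegree_C_mul_X_pow _ _ hA0]
  have hq0 : q ≠ 0 := fun h => by simp [h] at hqdeg
  have hc2 : q.coeff 2 = A := by
    simp [hqdef, Polynomial.coeff_add, Polynomial.coeff_C_mul, Polynomial.coeff_X_pow,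
      Polynomial.coeff_C]
  have hc0 : q.coeff 0 = B := by
    simp [hqdef, Polynomial.coeff_add, Polynomial.coeff_C_mul, Polynomial.coeff_X_pow,
      Polynomial.coeff_C]
  have hc1 : q.coeff 1 = 0 := by
    simp [hqdef, Polynomial.coeff_add, Polynomial.coeff_C_mul, Polynomial.coeff_X_pow,
      Polynomial.coeff_C]
  have hcop : ∀ r : MvPolynomial (Fin (k+2)) ℂ, r ∣ A → r ∣ B → IsUnit r := by
    intro r hrA hrB
    by_contra hru
    have hr0 : r ≠ 0 := by
      rintro rfl
      exact hB0 (zero_dvd_iff.1 hrB)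
    obtain ⟨p, hpirr, hpr⟩ := WfDvdMonoid.exists_irreducible_factor hru hr0
    have hp : Prime p := (UniqueFactorizationMonoid.irreducible_iff_prime).1 hpirr
    have hpB : p ∣ B := hpr.trans hrB
    obtain ⟨j, -, hpj⟩ := hp.exists_mem_finset_dvd hpB
    have hpXj : p ∣ X j := hp.dvd_of_dvd_pow hpj
    obtain ⟨w, hw⟩ := hpXj
    rcases (prime_X_fin (k+1) j).irreducible.isUnit_or_isUnit hw with h | h
    · exact hpirr.not_isUnit h
    · obtain ⟨wu, rfl⟩ := h
      have hXdvd : (X j : MvPolynomial (Fin (k+2)) ℂ) ∣ p :=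
        ⟨↑wu⁻¹, by rw [hw, Units.mul_inv_cancel_right]⟩
      exact not_dvd_sigma (k+1) j (hXdvd.trans (hpr.trans hrA))
  constructor
  · intro h
    have := Polynomial.natDegree_eq_zero_of_isUnit h
    omega
  · intro f g hfg
    have hf0 : f ≠ 0 := by rintro rfl; rw [zero_mul] at hfg; exact hq0 hfg
    have hg0 : g ≠ 0 := by rintro rfl; rw [mul_zero] at hfg; exact hq0 hfg
    have hsum : f.natDegree + g.natDegree = 2 := by
      rw [← Polynomial.natDegree_mul hf0 hg0, ← hfg, hqdeg]
    rcases Nat.lt_or_ge f.natDegree 1 with hf1 | hf1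
    · -- f has degree 0
      left
      have hfd : f.natDegree = 0 := by omega
      have hfC : f = Polynomial.C (f.coeff 0) := Polynomial.eq_C_of_natDegree_eq_zero hfd
      have hrA : f.coeff 0 ∣ A := by
        refine ⟨g.coeff 2, ?_⟩
        rw [← hc2, hfg, hfC, Polynomial.coeff_C_mul, Polynomial.coeff_C_zero]
      have hrB : f.coeff 0 ∣ B := by
        refine ⟨g.coeff 0, ?_⟩
        rw [← hc0, hfg, hfC, Polynomial.coeff_C_mul, Polynomial.coeff_C_zero]
      rw [hfC]
      exact Polynomial.isUnit_C.2 (hcop _ hrA hrB)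
    rcases Nat.lt_or_ge g.natDegree 1 with hg1 | hg1
    · -- g has degree 0
      right
      have hgd : g.natDegree = 0 := by omega
      have hgC : g = Polynomial.C (g.coeff 0) := Polynomial.eq_C_of_natDegree_eq_zero hgd
      have hrA : g.coeff 0 ∣ A := by
        refine ⟨f.coeff 2, ?_⟩
        rw [← hc2, hfg, hgC, Polynomial.coeff_mul_C, Polynomial.coeff_C_zero, mul_comm]
      have hrB : g.coeff 0 ∣ B := by
        refine ⟨f.coeff 0, ?_⟩
        rw [← hc0, hfg, hgC, Polynomial.coeff_mul_C, Polynomial.coeff_C_zero, mul_comm]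
      rw [hgC]
      exact Polynomial.isUnit_C.2 (hcop _ hrA hrB)
    · -- both degree 1 : impossible
      exfalso
      have hfd : f.natDegree = 1 := by omega
      have hgd : g.natDegree = 1 := by omega
      have hA : A = f.coeff 1 * g.coeff 1 := by
        have hl := Polynomial.leadingCoeff_mul f g
        rw [← hfg] at hl
        rw [Polynomial.leadingCoeff, Polynomial.leadingCoeff, Polynomial.leadingCoeff,
          hqdeg, hfd, hgd, hc2] at hl
        exact hl
      have hB : B = f.coeff 0 * g.coeff 0 := by
        rw [← hc0, hfg, Polynomial.mul_coeff_zero]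
      have h1 : f.coeff 0 * g.coeff 1 + f.coeff 1 * g.coeff 0 = 0 := by
        have := Polynomial.coeff_mul f g 1
        rw [← hfg, hc1] at this
        rw [Finset.Nat.sum_antidiagonal_eq_sum_range_succ_mk] at this
        simp [Finset.sum_range_succ] at this
        linear_combination -this
      have ht : (f.coeff 0 * g.coeff 1) ^ 2 = -(A * B) := by
        rw [hA, hB]
        linear_combination (f.coeff 0 * g.coeff 1) * h1
      have hψ := congrArg (psi (k+1)) ht
      have hps : psi (k+1) (sigmaSq (k+2)) =
          Polynomial.C (((k+1 : ℕ)) : ℂ) * Polynomial.X ^ 2 + 1 := psi_sigma (k+1)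
      have hpp : psi (k+1) (∏ j : Fin (k+2), (X j : MvPolynomial (Fin (k+2)) ℂ) ^ 2) =
          Polynomial.X ^ 2 := psi_prod (k+1)
      rw [map_pow, map_neg, map_mul, map_mul, hps, hpp] at hψ
      exact no_sq (((k+1 : ℕ)) : ℂ) (Nat.cast_ne_zero.2 (Nat.succ_ne_zero k)) _ hψ

lemma sigma_two : sigmaSq 2 = (X 0 ^ 2 + X 1 ^ 2 : MvPolynomial (Fin 2) ℂ) := by
  have h0 : (Finset.univ.erase (0 : Fin 2)) = {1} := by decide
  have h1 : (Finset.univ.erase (1 : Fin 2)) = {0} := by decide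
  rw [sigmaSq, Fin.sum_univ_two, h0, h1, Finset.prod_singleton, Finset.prod_singleton]
  ring

/-- For `n ≥ 3` the polynomial `σ_{n-1}(η²)` is irreducible in `ℂ[η₁,…,ηₙ]`, while for
`n = 2` it equals `η₁² + η₂² = (η₁ - iη₂)(η₁ + iη₂)`. -/
theorem sigmaSq_irreducible :
    (∀ n : ℕ, 3 ≤ n → Irreducible (sigmaSq n)) ∧
    sigmaSq 2 = X 0 ^ 2 + X 1 ^ 2 ∧
    sigmaSq 2 = (X 0 - C Complex.I * X 1) * (X 0 + C Complex.I * X 1) := by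
  refine ⟨?_, sigma_two, ?_⟩
  · intro n hn
    obtain ⟨k, rfl⟩ : ∃ k, n = k + 2 + 1 := ⟨n - 3, by omega⟩
    have him : ((finSuccEquiv ℂ (k+2)).toRingEquiv.toMulEquiv) (sigmaSq (k+2+1)) =
        Polynomial.C (sigmaSq (k+2)) * Polynomial.X ^ 2 +
          Polynomial.C (∏ j : Fin (k+2), (X j : MvPolynomial (Fin (k+2)) ℂ) ^ 2) :=
      map_sigma (k+2)
    exact (MulEquiv.irreducible_iff
      ((finSuccEquiv ℂ (k+2)).toRingEquiv.toMulEquiv)).mp (him ▸ key k)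
  · rw [sigma_two]
    have hI : (C Complex.I : MvPolynomial (Fin 2) ℂ) ^ 2 = -1 := by
      rw [← map_pow, Complex.I_sq, map_neg, map_one]
    linear_combination (X 1 : MvPolynomial (Fin 2) ℂ) ^ 2 * hI
end

section
/- Let n ≥ 2 and let P be a harmonic homogeneous polynomial of degree N on ℝⁿ with complex coefficients, with associated polynomial Q ∈ ℂ[η₁,…,η_n]. If Q(η) = 0 for every η ∈ ℂⁿ such that σ_{n−1}(η²) vanishes at η and every component η_j is nonzero (equivalently, if the Laplace transform P̂ vanishes identically on the variety {ρ·ρ = 0}), then σ_{n−1}(η²) divides Q in ℂ[η₁,…,η_n]. -/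
open MvPolynomial

namespace SigmaSqAux

variable {n : ℕ}

/-- Exponent of the `i`-th monomial of `sigmaSq`. -/
noncomputable def dI (n : ℕ) (i : Fin n) : Fin n →₀ ℕ :=
  ∑ j ∈ Finset.univ.erase i, Finsupp.single j 2

lemma dI_self (i : Fin n) : dI n i i = 0 := by
  classical
  simp only [dI, Finsupp.finset_sum_apply]
  refine Finset.sum_eq_zero fun j hj => ?_
  rw [Finsupp.single_apply, if_neg (Finset.ne_of_mem_erase hj)]

lemma dI_ne {i j : Fin n} (h : j ≠ i) : dI n i j = 2 := by
  classical
  simp only [dI, Finsupp.finset_sum_apply]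
  rw [Finset.sum_eq_single j (fun b _ hb => by
      rw [Finsupp.single_apply, if_neg hb])
    (fun hj => absurd (Finset.mem_erase.mpr ⟨h, Finset.mem_univ j⟩) hj)]
  simp

lemma monomial_dI (i : Fin n) :
    (monomial (dI n i) (1 : ℂ)) = ∏ j ∈ Finset.univ.erase i, (X j : MvPolynomial (Fin n) ℂ) ^ 2 := by
  rw [dI, monomial_sum_one]
  exact Finset.prod_congr rfl fun j _ => (X_pow_eq_monomial).symm

lemma sigma_eq : sigmaSq n = ∑ i : Fin n, monomial (dI n i) (1 : ℂ) := by
  rw [sigmaSq]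
  exact Finset.sum_congr rfl fun i _ => (monomial_dI i).symm

lemma dI_injective : Function.Injective (dI n) := by
  intro i j h
  by_contra hne
  have h1 : dI n i j = 2 := dI_ne (Ne.symm hne)
  have h2 : dI n j j = 0 := dI_self j
  rw [h] at h1
  omega

lemma coeff_sigma_dI (i : Fin n) : coeff (dI n i) (sigmaSq n) = 1 := by
  classical
  rw [sigma_eq]
  rw [MvPolynomial.coeff_sum]
  rw [Finset.sum_eq_single i (fun b _ hb => by
      rw [coeff_monomial, if_neg (fun hc => hb (dI_injective hc))])
    (fun hi => absurd (Finset.mem_univ i) hi)]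
  rw [coeff_monomial, if_pos rfl]

lemma sigma_ne_zero (i : Fin n) : sigmaSq n ≠ 0 := fun h => by
  have := coeff_sigma_dI i
  rw [h] at this
  simp at this

lemma X_not_dvd (i : Fin n) : ¬ (X i : MvPolynomial (Fin n) ℂ) ∣ sigmaSq n := by
  classical
  rintro ⟨g, hg⟩
  have h1 := coeff_sigma_dI i
  rw [hg, MvPolynomial.coeff_X_mul'] at h1
  rw [if_neg (by simp [Finsupp.mem_support_iff, dI_self])] at h1
  exact one_ne_zero h1.symm

lemma prime_X' (i : Fin n) : Prime (X i : MvPolynomial (Fin n) ℂ) := by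
  cases n with
  | zero => exact i.elim0
  | succ m =>
    let e := (renameEquiv ℂ (Equiv.swap i 0)).trans (finSuccEquiv ℂ m)
    have he : e (X i) = Polynomial.X := by
      simp only [e, AlgEquiv.trans_apply, renameEquiv_apply, rename_X, Equiv.swap_apply_left]
      exact finSuccEquiv_X_zero
    exact (MulEquiv.prime_iff e).mp (he ▸ Polynomial.prime_X)

lemma not_p_dvd_X {p : MvPolynomial (Fin n) ℂ} (hp : Prime p) (hps : p ∣ sigmaSq n)
    (j : Fin n) : ¬ p ∣ X j := by
  intro hpX
  have hass : Associated p (X j) := hp.associated_of_dvd (prime_X' j) hpX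
  exact X_not_dvd j (hass.symm.dvd.trans hps)

/-- The cofactor `T_i` with `∂_i σ = 2 X_i T_i` and `σ = X_i² T_i + ∏_{j≠i} X_j²`. -/
noncomputable def T (n : ℕ) (i : Fin n) : MvPolynomial (Fin n) ℂ :=
  ∑ j ∈ Finset.univ.erase i, monomial (dI n j - Finsupp.single i 2) 1

lemma add_sub_dI {i j : Fin n} (h : j ≠ i) :
    Finsupp.single i 2 + (dI n j - Finsupp.single i 2) = dI n j := by
  ext a
  rw [Finsupp.add_apply, Finsupp.tsub_apply]
  by_cases ha : a = i
  · rw [ha, Finsupp.single_eq_same, dI_ne (Ne.symm h)]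
  · rw [Finsupp.single_eq_of_ne ha]
    omega

lemma key_id (i : Fin n) :
    sigmaSq n = X i ^ 2 * T n i + monomial (dI n i) 1 := by
  rw [sigma_eq, T, Finset.mul_sum,
    ← Finset.sum_erase_add _ _ (Finset.mem_univ i)]
  congr 1
  refine Finset.sum_congr rfl fun j hj => ?_
  rw [X_pow_eq_monomial, monomial_mul, one_mul, add_sub_dI (Finset.ne_of_mem_erase hj)]

lemma sub_single_eq {i j : Fin n} (h : j ≠ i) :
    Finsupp.single i 1 + (dI n j - Finsupp.single i 2) = dI n j - Finsupp.single i 1 := by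
  ext a
  rw [Finsupp.add_apply, Finsupp.tsub_apply, Finsupp.tsub_apply]
  by_cases ha : a = i
  · rw [ha, Finsupp.single_eq_same, Finsupp.single_eq_same, dI_ne (Ne.symm h)]
  · rw [Finsupp.single_eq_of_ne ha, Finsupp.single_eq_of_ne ha]
    omega

lemma pderiv_sigma (i : Fin n) :
    pderiv i (sigmaSq n) = C 2 * X i * T n i := by
  rw [sigma_eq, map_sum, T, Finset.mul_sum,
    ← Finset.sum_erase_add _ _ (Finset.mem_univ i)]
  have hzero : pderiv i (monomial (dI n i) (1 : ℂ)) = 0 := by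
    rw [pderiv_monomial, dI_self, Nat.cast_zero, mul_zero, monomial_zero]
  rw [hzero, add_zero]
  refine Finset.sum_congr rfl fun j hj => ?_
  have hji : j ≠ i := Finset.ne_of_mem_erase hj
  rw [pderiv_monomial, dI_ne (Ne.symm hji)]
  rw [show (C 2 : MvPolynomial (Fin n) ℂ) * X i = monomial (Finsupp.single i 1) 2 by
    rw [C_mul_X_eq_monomial]]
  rw [monomial_mul, mul_one, sub_single_eq hji]
  norm_num

lemma squarefree_sigma (hn : 2 ≤ n) : Squarefree (sigmaSq n) := by
  classical
  intro d hd
  by_contra hdu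
  have i0 : Fin n := ⟨0, by omega⟩
  have hσ0 : sigmaSq n ≠ 0 := sigma_ne_zero i0
  have hd0 : d ≠ 0 := by
    rintro rfl
    rw [mul_zero] at hd
    exact hσ0 (zero_dvd_iff.mp hd)
  obtain ⟨p, hpirr, hpd⟩ := WfDvdMonoid.exists_irreducible_factor hdu hd0
  have hp : Prime p := (UniqueFactorizationMonoid.irreducible_iff_prime).mp hpirr
  obtain ⟨g, hg⟩ := (mul_dvd_mul hpd hpd).trans hd
  have hps : p ∣ sigmaSq n := ⟨p * g, by rw [hg]; ring⟩
  have hpd2 : p ∣ pderiv i0 (sigmaSq n) := by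
    rw [hg, mul_assoc, pderiv_mul]
    exact dvd_add ⟨pderiv i0 p * g, by ring⟩ ⟨pderiv i0 (p * g), rfl⟩
  rw [pderiv_sigma i0] at hpd2
  have hpT : p ∣ T n i0 := by
    rcases hp.dvd_or_dvd hpd2 with h | h
    · rcases hp.dvd_or_dvd h with h2 | h2
      · exact absurd (isUnit_of_dvd_unit h2
          ((isUnit_iff_ne_zero.mpr (two_ne_zero)).map (C : ℂ →+* MvPolynomial (Fin n) ℂ)))
          hp.not_unit
      · exact absurd h2 (not_p_dvd_X hp hps i0)
    · exact h
  have hmono : p ∣ monomial (dI n i0) (1 : ℂ) := by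
    have hid := key_id i0
    have heq : monomial (dI n i0) (1 : ℂ) = sigmaSq n - X i0 ^ 2 * T n i0 := by
      rw [hid]; ring
    rw [heq]
    exact dvd_sub hps (hpT.mul_left _)
  rw [monomial_dI] at hmono
  obtain ⟨j, _, hdvd⟩ := hp.exists_mem_finset_dvd hmono
  exact not_p_dvd_X hp hps j (hp.dvd_of_dvd_pow hdvd)

lemma relPrime_sigma_prodX :
    IsRelPrime (sigmaSq n) (∏ j : Fin n, (X j : MvPolynomial (Fin n) ℂ)) := by
  intro d hd1 hd2
  by_contra hdu
  have hd0 : d ≠ 0 := by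
    rintro rfl
    have : (∏ j : Fin n, (X j : MvPolynomial (Fin n) ℂ)) = 0 := zero_dvd_iff.mp hd2
    exact (Finset.prod_ne_zero_iff.mpr fun j _ => X_ne_zero j) this
  obtain ⟨p, hpirr, hpd⟩ := WfDvdMonoid.exists_irreducible_factor hdu hd0
  have hp : Prime p := (UniqueFactorizationMonoid.irreducible_iff_prime).mp hpirr
  obtain ⟨j, _, hdvd⟩ := hp.exists_mem_finset_dvd (hpd.trans hd2)
  exact not_p_dvd_X hp (hpd.trans hd1) j hdvd

end SigmaSqAux

set_option maxHeartbeats 1000000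

/-- If the associated polynomial `Q` of a harmonic homogeneous polynomial `P` vanishes at
every point of the variety `{σ_{n-1}(η²) = 0}` with all coordinates nonzero (equivalently,
if the Laplace transform `P̂` vanishes identically on `{ρ·ρ = 0}`), then `σ_{n-1}(η²)`
divides `Q`. -/
theorem sigmaSq_dvd_of_vanishing
    (n N : ℕ) (hn : 2 ≤ n) (P : MvPolynomial (Fin n) ℂ)
    (hPhom : P.IsHomogeneous N)
    (hPharm : ∑ j : Fin n, pderiv j (pderiv j P) = 0)
    (hvan : ∀ η : Fin n → ℂ, eval η (sigmaSq n) = 0 → (∀ j, η j ≠ 0) →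
      eval η (assocPoly n P) = 0) :
    sigmaSq n ∣ assocPoly n P := by
  classical
  set Q := assocPoly n P with hQ
  set Pr := ∏ j : Fin n, (X j : MvPolynomial (Fin n) ℂ) with hPr
  have hmem : Pr * Q ∈ vanishingIdeal ℂ (zeroLocus ℂ (Ideal.span {sigmaSq n})) := by
    rw [mem_vanishingIdeal_iff]
    intro x hx
    change eval x (Pr * Q) = 0
    have hσx : eval x (sigmaSq n) = 0 :=
      (mem_zeroLocus_iff.mp hx) (sigmaSq n) (Ideal.subset_span rfl)
    by_cases hz : ∀ j, x j ≠ 0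
    · rw [map_mul, hvan x hσx hz, mul_zero]
    · push_neg at hz
      obtain ⟨j, hj⟩ := hz
      have : eval x Pr = 0 := by
        rw [hPr, map_prod]
        exact Finset.prod_eq_zero (Finset.mem_univ j) (by rw [eval_X, hj])
      rw [map_mul, this, zero_mul]
  rw [vanishingIdeal_zeroLocus_eq_radical] at hmem
  obtain ⟨k, hk⟩ := hmem
  rw [Ideal.mem_span_singleton] at hk
  rcases Nat.eq_zero_or_pos k with rfl | hkpos
  · rw [pow_zero] at hk
    exact hk.trans (one_dvd _)
  · have h1 : sigmaSq n ∣ Pr * Q :=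
      ((SigmaSqAux.squarefree_sigma hn).dvd_pow_iff_dvd hkpos.ne').mp hk
    exact (SigmaSqAux.relPrime_sigma_prodX).dvd_of_dvd_mul_left h1
end

section
/- Let n ≥ 2 and let Q, P_î, Q_î (i = 1,…,n) be polynomials in ℂ[η₁,…,η_n] such that each P_î and Q_î is independent of the variable η_i and σ_{n−1}(η²)·Q = σ_n(η)·Σ_{i=1}^n (P_î + η_i Q_î). If σ_{n−1}(η²) divides Q in ℂ[η₁,…,η_n], then Q = 0. -/
open MvPolynomial

lemma sigmaSq_two : sigmaSq 2 = X 0 ^ 2 + X 1 ^ 2 := by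
  have h0 : (Finset.univ.erase (0:Fin 2)) = {1} := by decide
  have h1 : (Finset.univ.erase (1:Fin 2)) = {0} := by decide
  rw [sigmaSq, Fin.sum_univ_two, h0, h1, Finset.prod_singleton, Finset.prod_singleton]
  ring

lemma sigmaN_two : sigmaN 2 = X 0 * X 1 := by
  rw [sigmaN, Fin.prod_univ_two]

noncomputable def dd (a b : ℕ) : Fin 2 →₀ ℕ := Finsupp.single 0 a + Finsupp.single 1 b

lemma dd_apply0 (a b : ℕ) : dd a b 0 = a := by simp [dd, Finsupp.single_apply]
lemma dd_apply1 (a b : ℕ) : dd a b 1 = b := by simp [dd, Finsupp.single_apply]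

lemma dd_eq_self (d : Fin 2 →₀ ℕ) : d = dd (d 0) (d 1) := by
  ext i
  fin_cases i
  · simp [dd_apply0]
  · simp [dd_apply1]

lemma dd_le {c e a b : ℕ} : dd c e ≤ dd a b ↔ c ≤ a ∧ e ≤ b := by
  constructor
  · intro h
    exact ⟨by simpa [dd_apply0] using h 0, by simpa [dd_apply1] using h 1⟩
  · intro ⟨h1, h2⟩ i
    fin_cases i
    · simpa [dd_apply0] using h1
    · simpa [dd_apply1] using h2

lemma dd_sub (a b c e : ℕ) : dd a b - dd c e = dd (a-c) (b-e) := by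
  ext i
  fin_cases i
  · simp [Finsupp.tsub_apply, dd_apply0]
  · simp [Finsupp.tsub_apply, dd_apply1]

lemma X_sq_mono (i : Fin 2) (k : ℕ) : (X i : MvPolynomial (Fin 2) ℂ) ^ k = monomial (Finsupp.single i k) 1 :=
  X_pow_eq_monomial

lemma mono40 : (X 0 : MvPolynomial (Fin 2) ℂ) ^ 4 = monomial (dd 4 0) 1 := by
  rw [X_pow_eq_monomial]; congr 1; simp [dd]
lemma mono04 : (X 1 : MvPolynomial (Fin 2) ℂ) ^ 4 = monomial (dd 0 4) 1 := by
  rw [X_pow_eq_monomial]; congr 1; simp [dd]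
lemma mono22 : (X 0 : MvPolynomial (Fin 2) ℂ) ^ 2 * X 1 ^ 2 = monomial (dd 2 2) 1 := by
  rw [X_pow_eq_monomial, X_pow_eq_monomial, monomial_mul, one_mul]; rfl

lemma mono11 : sigmaN 2 = monomial (dd 1 1) 1 := by
  rw [sigmaN_two, X, X, monomial_mul, one_mul]; rfl

lemma coeff_master (R : MvPolynomial (Fin 2) ℂ) (a b : ℕ) :
    coeff (dd a b) ((sigmaSq 2)^2 * R) =
      (if 4 ≤ a then coeff (dd (a-4) b) R else 0)
      + (if 2 ≤ a ∧ 2 ≤ b then 2 * coeff (dd (a-2) (b-2)) R else 0)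
      + (if 4 ≤ b then coeff (dd a (b-4)) R else 0) := by
  have expand : (sigmaSq 2)^2 * R =
      monomial (dd 4 0) 1 * R + (monomial (dd 2 2) 1 * R + monomial (dd 2 2) 1 * R)
        + monomial (dd 0 4) 1 * R := by
    rw [← mono40, ← mono04, ← mono22, sigmaSq_two]; ring
  rw [expand, coeff_add, coeff_add, coeff_add]
  rw [coeff_monomial_mul', coeff_monomial_mul', coeff_monomial_mul']
  simp only [dd_le, dd_sub, one_mul, Nat.sub_zero, Nat.zero_le, and_true, true_and]
  split_ifs <;> ring

lemma coeff_rhs (S : MvPolynomial (Fin 2) ℂ) (hS : ∀ d ∈ S.support, ∃ i, d i ≤ 1)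
    (a b : ℕ) (h : a = 0 ∨ b = 0 ∨ (3 ≤ a ∧ 3 ≤ b)) :
    coeff (dd a b) (sigmaN 2 * S) = 0 := by
  rw [mono11, coeff_monomial_mul']
  rcases h with h | h | h
  · rw [if_neg]; intro hle; rw [dd_le] at hle; omega
  · rw [if_neg]; intro hle; rw [dd_le] at hle; omega
  · by_cases hle : dd 1 1 ≤ dd a b
    · rw [if_pos hle, dd_sub, one_mul]
      by_contra hne
      obtain ⟨i, hi⟩ := hS _ (mem_support_iff.mpr hne)
      fin_cases i <;> simp [dd, Finsupp.single_apply] at hi <;> omega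
    · rw [if_neg hle]
lemma comb (r : ℕ → ℕ → ℂ)
    (h0 : ∀ y, r 0 y = 0)
    (hx0 : ∀ x, r x 0 = 0)
    (hint : ∀ x y, r (x+1) (y+5) + 2 * r (x+3) (y+3) + r (x+5) (y+1) = 0)
    (h4a : ∀ x, r (x+1) 3 + 2 * r (x+3) 1 = 0)
    (h4b : ∀ x, r (x+1) 4 + 2 * r (x+3) 2 + r (x+5) 0 = 0)
    (e5a : 2 * r 1 1 = 0)
    (e5b : 2 * r 1 2 + r 3 0 = 0)
    (e5c : ∀ y, 2 * r 1 (y+3) + r 3 (y+1) = 0)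
    (e6a : r 0 3 + 2 * r 2 1 = 0)
    (e6b : r 0 4 + 2 * r 2 2 + r 4 0 = 0)
    (e6c : ∀ y, r 0 (y+5) + 2 * r 2 (y+3) + r 4 (y+1) = 0) :
    ∀ a b, r a b = 0 := by
  set G1 : ℕ → Prop :=
    fun j => ∀ x, r (x+1) (2*j+1) = (-1:ℂ)^j * ((j:ℂ)+1) * r (x+2*j+1) 1 with hG1
  set G2 : ℕ → Prop :=
    fun j => ∀ x, r (x+1) (2*j+2) = (-1:ℂ)^j * ((j:ℂ)+1) * r (x+2*j+1) 2 with hG2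
  have key : ∀ j : ℕ, (G1 j ∧ G2 j) ∧ (G1 (j+1) ∧ G2 (j+1)) := by
    intro j
    induction j with
    | zero =>
      refine ⟨⟨fun x => by norm_num, fun x => by norm_num⟩, fun x => ?_, fun x => ?_⟩
      · norm_num
        linear_combination h4a x
      · norm_num
        linear_combination h4b x - hx0 (x+5)
    | succ j ih =>
      obtain ⟨⟨g1j, g2j⟩, g1j1, g2j1⟩ := ih
      refine ⟨⟨g1j1, g2j1⟩, fun x => ?_, fun x => ?_⟩
      · have h1 := g1j1 (x+2)
        have h2 := g1j (x+4)
        have hh := hint x (2*j)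
        rw [show 2*(j+1)+1 = 2*j+3 from by omega,
            show x+2+(2*(j+1))+1 = x+2*j+5 from by omega] at h1
        rw [show x+4+2*j+1 = x+2*j+5 from by omega] at h2
        rw [show 2*(j+1+1)+1 = 2*j+5 from by omega,
            show x+2*(j+1+1)+1 = x+2*j+5 from by omega]
        rw [show x+2+1 = x+3 from by omega] at h1
        rw [show x+4+1 = x+5 from by omega] at h2
        push_cast
        push_cast at h1 h2
        linear_combination hh - 2 * h1 - h2
      · have h1 := g2j1 (x+2)
        have h2 := g2j (x+4)
        have hh := hint x (2*j+1)
        rw [show 2*(j+1)+2 = 2*j+4 from by omega,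
            show x+2+(2*(j+1))+1 = x+2*j+5 from by omega] at h1
        rw [show x+4+2*j+1 = x+2*j+5 from by omega] at h2
        rw [show 2*j+1+5 = 2*j+6 from by omega, show 2*j+1+3 = 2*j+4 from by omega,
            show 2*j+1+1 = 2*j+2 from by omega] at hh
        rw [show 2*(j+1+1)+2 = 2*j+6 from by omega,
            show x+2*(j+1+1)+1 = x+2*j+5 from by omega]
        rw [show x+2+1 = x+3 from by omega] at h1
        rw [show x+4+1 = x+5 from by omega] at h2
        push_cast
        push_cast at h1 h2
        linear_combination hh - 2 * h1 - h2
  have G1' : ∀ j x, r (x+1) (2*j+1) = (-1:ℂ)^j * ((j:ℂ)+1) * r (x+2*j+1) 1 :=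
    fun j => (key j).1.1
  have G2' : ∀ j x, r (x+1) (2*j+2) = (-1:ℂ)^j * ((j:ℂ)+1) * r (x+2*j+1) 2 :=
    fun j => (key j).1.2
  have cancel : ∀ (k : ℕ) (c : ℂ), (-1:ℂ)^(k+1) * ((k:ℂ)+3) * c = 0 → c = 0 := by
    intro k c h
    have hne : ((-1:ℂ)^(k+1) * ((k:ℂ)+3)) ≠ 0 := by
      apply mul_ne_zero (pow_ne_zero _ (by norm_num))
      exact_mod_cast (show ((k+3:ℕ):ℂ) ≠ 0 from Nat.cast_ne_zero.mpr (by omega))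
    exact (mul_eq_zero.mp h).resolve_left hne
  have obot1 : ∀ k, r (2*k+1) 1 = 0 := by
    intro k
    cases k with
    | zero => norm_num; linear_combination e5a / 2
    | succ k =>
      have hh := e5c (2*k)
      have h1 := G1' (k+1) 0
      have h2 := G1' k 2
      rw [show (0:ℕ)+1 = 1 from rfl, show 2*(k+1)+1 = 2*k+3 from by omega,
          show 0+2*(k+1)+1 = 2*k+3 from by omega] at h1
      rw [show (2:ℕ)+1 = 3 from rfl, show 2+2*k+1 = 2*k+3 from by omega] at h2
      rw [h1, h2] at hh
      rw [show 2*(k+1)+1 = 2*k+3 from by omega]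
      apply cancel k
      push_cast at hh ⊢
      linear_combination hh
  have obot2 : ∀ k, r (2*k+1) 2 = 0 := by
    intro k
    cases k with
    | zero => norm_num; linear_combination (e5b - hx0 3) / 2
    | succ k =>
      have hh := e5c (2*k+1)
      have h1 := G2' (k+1) 0
      have h2 := G2' k 2
      rw [show (0:ℕ)+1 = 1 from rfl, show 2*(k+1)+2 = 2*k+4 from by omega,
          show 0+2*(k+1)+1 = 2*k+3 from by omega] at h1
      rw [show (2:ℕ)+1 = 3 from rfl, show 2+2*k+1 = 2*k+3 from by omega] at h2
      rw [show 2*k+1+3 = 2*k+4 from by omega, show 2*k+1+1 = 2*k+2 from by omega] at hh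
      rw [h1, h2] at hh
      rw [show 2*(k+1)+1 = 2*k+3 from by omega]
      apply cancel k
      push_cast at hh ⊢
      linear_combination hh
  have ebot1 : ∀ k, r (2*k+2) 1 = 0 := by
    intro k
    cases k with
    | zero => norm_num; linear_combination (e6a - h0 3) / 2
    | succ k =>
      have hh := e6c (2*k)
      have h1 := G1' (k+1) 1
      have h2 := G1' k 3
      rw [show (1:ℕ)+1 = 2 from rfl, show 2*(k+1)+1 = 2*k+3 from by omega,
          show 1+2*(k+1)+1 = 2*k+4 from by omega] at h1
      rw [show (3:ℕ)+1 = 4 from rfl, show 3+2*k+1 = 2*k+4 from by omega] at h2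
      rw [h1, h2, h0 (2*k+5)] at hh
      rw [show 2*(k+1)+2 = 2*k+4 from by omega]
      apply cancel k
      push_cast at hh ⊢
      linear_combination hh
  have ebot2 : ∀ k, r (2*k+2) 2 = 0 := by
    intro k
    cases k with
    | zero => norm_num; linear_combination (e6b - h0 4 - hx0 4) / 2
    | succ k =>
      have hh := e6c (2*k+1)
      have h1 := G2' (k+1) 1
      have h2 := G2' k 3
      rw [show (1:ℕ)+1 = 2 from rfl, show 2*(k+1)+2 = 2*k+4 from by omega,
          show 1+2*(k+1)+1 = 2*k+4 from by omega] at h1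
      rw [show (3:ℕ)+1 = 4 from rfl, show 3+2*k+1 = 2*k+4 from by omega] at h2
      rw [show 2*k+1+5 = 2*k+6 from by omega, show 2*k+1+3 = 2*k+4 from by omega,
          show 2*k+1+1 = 2*k+2 from by omega] at hh
      rw [h1, h2, h0 (2*k+6)] at hh
      rw [show 2*(k+1)+2 = 2*k+4 from by omega]
      apply cancel k
      push_cast at hh ⊢
      linear_combination hh
  intro a b
  rcases Nat.eq_zero_or_pos a with ha | ha
  · subst ha; exact h0 b
  rcases Nat.eq_zero_or_pos b with hb | hb
  · subst hb; exact hx0 a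
  set j := (b-1)/2 with hj
  have hb2 : b = 2*j+1 ∨ b = 2*j+2 := by omega
  set m := a-1+2*j+1 with hm
  have hmz : r m 1 = 0 ∧ r m 2 = 0 := by
    set k := (m-1)/2 with hk
    have hm2 : m = 2*k+1 ∨ m = 2*k+2 := by omega
    rcases hm2 with h | h
    · rw [h]; exact ⟨obot1 k, obot2 k⟩
    · rw [h]; exact ⟨ebot1 k, ebot2 k⟩
  rcases hb2 with h | h
  · have hg := G1' j (a-1)
    rw [show a-1+1 = a from by omega] at hg
    rw [h, hg, hmz.1, mul_zero]
  · have hg := G2' j (a-1)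
    rw [show a-1+1 = a from by omega] at hg
    rw [h, hg, hmz.2, mul_zero]

lemma key2 (R S : MvPolynomial (Fin 2) ℂ)
    (hEq : (sigmaSq 2)^2 * R = sigmaN 2 * S)
    (hS : ∀ d ∈ S.support, ∃ i, d i ≤ 1) : R = 0 := by
  set r : ℕ → ℕ → ℂ := fun x y => coeff (dd x y) R with hr
  have hE : ∀ a b : ℕ,
      ((if 4 ≤ a then r (a-4) b else 0)
      + (if 2 ≤ a ∧ 2 ≤ b then 2 * r (a-2) (b-2) else 0)
      + (if 4 ≤ b then r a (b-4) else 0)) = coeff (dd a b) (sigmaN 2 * S) := by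
    intro a b
    rw [← coeff_master, hEq]
  have hC := coeff_rhs S hS
  have h0 : ∀ y, r 0 y = 0 := by
    intro y
    have h := hE 0 (y+4)
    rw [hC 0 (y+4) (Or.inl rfl), if_neg (by omega), if_neg (by omega), if_pos (by omega),
        show y+4-4 = y from by omega] at h
    simpa using h
  have hx0 : ∀ x, r x 0 = 0 := by
    intro x
    have h := hE (x+4) 0
    rw [hC (x+4) 0 (Or.inr (Or.inl rfl)), if_pos (by omega), if_neg (by omega),
        if_neg (by omega), show x+4-4 = x from by omega] at h
    simpa using h
  have hint : ∀ x y, r (x+1) (y+5) + 2 * r (x+3) (y+3) + r (x+5) (y+1) = 0 := by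
    intro x y
    have h := hE (x+5) (y+5)
    rw [hC (x+5) (y+5) (Or.inr (Or.inr (by omega))), if_pos (by omega), if_pos (by omega),
        if_pos (by omega), show x+5-4 = x+1 from by omega, show x+5-2 = x+3 from by omega,
        show y+5-2 = y+3 from by omega, show y+5-4 = y+1 from by omega] at h
    exact h
  have h4a : ∀ x, r (x+1) 3 + 2 * r (x+3) 1 = 0 := by
    intro x
    have h := hE (x+5) 3
    rw [hC (x+5) 3 (Or.inr (Or.inr (by omega))), if_pos (by omega), if_pos (by omega),
        if_neg (by omega), show x+5-4 = x+1 from by omega, show x+5-2 = x+3 from by omega] at h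
    simpa using h
  have h4b : ∀ x, r (x+1) 4 + 2 * r (x+3) 2 + r (x+5) 0 = 0 := by
    intro x
    have h := hE (x+5) 4
    rw [hC (x+5) 4 (Or.inr (Or.inr (by omega))), if_pos (by omega), if_pos (by omega),
        if_pos (by omega), show x+5-4 = x+1 from by omega, show x+5-2 = x+3 from by omega] at h
    simpa using h
  have e5a : 2 * r 1 1 = 0 := by
    have h := hE 3 3
    rw [hC 3 3 (Or.inr (Or.inr (by omega))), if_neg (by omega), if_pos (by omega),
        if_neg (by omega)] at h
    simpa using h
  have e5b : 2 * r 1 2 + r 3 0 = 0 := by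
    have h := hE 3 4
    rw [hC 3 4 (Or.inr (Or.inr (by omega))), if_neg (by omega), if_pos (by omega),
        if_pos (by omega)] at h
    simpa using h
  have e5c : ∀ y, 2 * r 1 (y+3) + r 3 (y+1) = 0 := by
    intro y
    have h := hE 3 (y+5)
    rw [hC 3 (y+5) (Or.inr (Or.inr (by omega))), if_neg (by omega), if_pos (by omega),
        if_pos (by omega), show y+5-2 = y+3 from by omega, show y+5-4 = y+1 from by omega] at h
    simpa using h
  have e6a : r 0 3 + 2 * r 2 1 = 0 := by
    have h := hE 4 3
    rw [hC 4 3 (Or.inr (Or.inr (by omega))), if_pos (by omega), if_pos (by omega),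
        if_neg (by omega)] at h
    simpa using h
  have e6b : r 0 4 + 2 * r 2 2 + r 4 0 = 0 := by
    have h := hE 4 4
    rw [hC 4 4 (Or.inr (Or.inr (by omega))), if_pos (by omega), if_pos (by omega),
        if_pos (by omega)] at h
    simpa using h
  have e6c : ∀ y, r 0 (y+5) + 2 * r 2 (y+3) + r 4 (y+1) = 0 := by
    intro y
    have h := hE 4 (y+5)
    rw [hC 4 (y+5) (Or.inr (Or.inr (by omega))), if_pos (by omega), if_pos (by omega),
        if_pos (by omega), show y+5-2 = y+3 from by omega, show y+5-4 = y+1 from by omega] at h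
    simpa using h
  have hall := comb r h0 hx0 hint h4a h4b e5a e5b e5c e6a e6b e6c
  rw [eq_zero_iff]
  intro d
  rw [dd_eq_self d]
  exact hall _ _

lemma sigmaSq_ne_zero {n : ℕ} (hn : 1 ≤ n) : sigmaSq n ≠ 0 := by
  intro h
  have h2 := congrArg (eval (fun _ => (1:ℂ))) h
  simp [sigmaSq] at h2
  omega

lemma finSuccEquiv_sigmaSq (n : ℕ) :
    finSuccEquiv ℂ n (sigmaSq (n+1)) =
      Polynomial.C (∏ i : Fin n, (X i)^2) + Polynomial.C (sigmaSq n) * Polynomial.X^2 := by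
  set e := finSuccEquiv ℂ n with he
  set A : MvPolynomial (Fin n) ℂ := ∏ i : Fin n, (X i)^2 with hA
  have hPi : e (∏ j : Fin (n+1), (X j)^2) = Polynomial.X^2 * Polynomial.C A := by
    rw [map_prod, Fin.prod_univ_succ]
    simp only [map_pow, finSuccEquiv_X_zero, finSuccEquiv_X_succ, he]
    simp only [← Polynomial.C_pow]
    rw [← map_prod]
  have hsplit0 : (X (0:Fin (n+1)) : MvPolynomial (Fin (n+1)) ℂ)^2 *
      ∏ j ∈ Finset.univ.erase (0:Fin (n+1)), (X j)^2 = ∏ j : Fin (n+1), (X j)^2 :=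
    Finset.mul_prod_erase _ (fun j => (X j)^2) (Finset.mem_univ 0)
  have hsplitS : ∀ i : Fin n, (X i.succ : MvPolynomial (Fin (n+1)) ℂ)^2 *
      ∏ j ∈ Finset.univ.erase i.succ, (X j)^2 = ∏ j : Fin (n+1), (X j)^2 :=
    fun i => Finset.mul_prod_erase _ (fun j => (X j)^2) (Finset.mem_univ i.succ)
  have hsplitL : ∀ i : Fin n, (X i : MvPolynomial (Fin n) ℂ)^2 *
      ∏ j ∈ Finset.univ.erase i, (X j)^2 = A :=
    fun i => Finset.mul_prod_erase _ (fun j => (X j)^2) (Finset.mem_univ i)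
  have hP0 : e (∏ j ∈ Finset.univ.erase (0 : Fin (n+1)), (X j)^2) = Polynomial.C A := by
    apply mul_left_cancel₀ (pow_ne_zero 2 (Polynomial.X_ne_zero
      (R := MvPolynomial (Fin n) ℂ)))
    calc Polynomial.X^2 * e (∏ j ∈ Finset.univ.erase (0 : Fin (n+1)), (X j)^2)
        = e ((X 0)^2 * ∏ j ∈ Finset.univ.erase (0 : Fin (n+1)), (X j)^2) := by
          rw [map_mul, map_pow, he, finSuccEquiv_X_zero]
      _ = e (∏ j : Fin (n+1), (X j)^2) := by rw [hsplit0]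
      _ = Polynomial.X^2 * Polynomial.C A := hPi
  have hPsucc : ∀ i : Fin n, e (∏ j ∈ Finset.univ.erase i.succ, (X j)^2) =
      Polynomial.X^2 * Polynomial.C (∏ j ∈ Finset.univ.erase i, (X j)^2) := by
    intro i
    apply mul_left_cancel₀ (show (Polynomial.C (X i : MvPolynomial (Fin n) ℂ))^2 ≠ 0 from
      pow_ne_zero _ (Polynomial.C_ne_zero.mpr (X_ne_zero i)))
    calc (Polynomial.C (X i : MvPolynomial (Fin n) ℂ))^2
          * e (∏ j ∈ Finset.univ.erase i.succ, (X j)^2)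
        = e ((X i.succ)^2 * ∏ j ∈ Finset.univ.erase i.succ, (X j)^2) := by
          rw [map_mul, map_pow, he, finSuccEquiv_X_succ]
      _ = e (∏ j : Fin (n+1), (X j)^2) := by rw [hsplitS i]
      _ = Polynomial.X^2 * Polynomial.C A := hPi
      _ = (Polynomial.C (X i : MvPolynomial (Fin n) ℂ))^2
          * (Polynomial.X^2 * Polynomial.C (∏ j ∈ Finset.univ.erase i, (X j)^2)) := by
          rw [← Polynomial.C_pow, ← mul_assoc,
            mul_comm (Polynomial.C ((X i:MvPolynomial (Fin n) ℂ)^2)) (Polynomial.X^2),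
            mul_assoc, ← Polynomial.C_mul, hsplitL i]
  rw [show sigmaSq (n+1) = ∑ i : Fin (n+1), ∏ j ∈ Finset.univ.erase i, (X j) ^ 2 from rfl]
  rw [map_sum, Fin.sum_univ_succ, hP0]
  congr 1
  calc ∑ i : Fin n, e (∏ j ∈ Finset.univ.erase i.succ, (X j)^2)
      = ∑ i : Fin n, Polynomial.X^2 * Polynomial.C (∏ j ∈ Finset.univ.erase i, (X j)^2) := by
        exact Finset.sum_congr rfl (fun i _ => hPsucc i)
    _ = Polynomial.C (sigmaSq n) * Polynomial.X^2 := by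
        rw [← Finset.mul_sum, ← map_sum, mul_comm]
        rfl

lemma finSuccEquiv_sigmaN (n : ℕ) :
    finSuccEquiv ℂ n (sigmaN (n+1)) = Polynomial.X * Polynomial.C (sigmaN n) := by
  rw [show sigmaN (n+1) = ∏ j : Fin (n+1), X j from rfl, map_prod, Fin.prod_univ_succ,
    finSuccEquiv_X_zero]
  congr 1
  simp only [finSuccEquiv_X_succ]
  rw [← map_prod]
  rfl

lemma key_step (n : ℕ) (hn : 2 ≤ n)
    (ih : ∀ R S : MvPolynomial (Fin n) ℂ, (sigmaSq n)^2 * R = sigmaN n * S →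
      (∀ d ∈ S.support, ∃ i, d i ≤ 1) → R = 0)
    (R S : MvPolynomial (Fin (n+1)) ℂ)
    (hEq : (sigmaSq (n+1))^2 * R = sigmaN (n+1) * S)
    (hS : ∀ d ∈ S.support, ∃ i, d i ≤ 1) : R = 0 := by
  by_contra hR
  set e := finSuccEquiv ℂ n with he
  have heR : e R ≠ 0 := by
    intro h
    apply hR
    have h2 := congrArg e.symm h
    simpa using h2
  set F : Polynomial (MvPolynomial (Fin n) ℂ) :=
    Polynomial.C (∏ i : Fin n, (X i)^2) + Polynomial.C (sigmaSq n) * Polynomial.X^2 with hF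
  have hσn0 : sigmaSq n ≠ 0 := sigmaSq_ne_zero (by omega)
  have hF2 : F.coeff 2 = sigmaSq n := by
    rw [hF, Polynomial.coeff_add, Polynomial.coeff_C_mul, Polynomial.coeff_X_pow]
    simp only [Polynomial.coeff_C]
    norm_num
  have hFdle : F.natDegree ≤ 2 := by
    refine le_trans (Polynomial.natDegree_add_le _ _) ?_
    simp only [Polynomial.natDegree_C, max_le_iff]
    exact ⟨Nat.zero_le 2, le_trans (Polynomial.natDegree_mul_le) (by simp)⟩
  have hFd : F.natDegree = 2 :=
    le_antisymm hFdle (Polynomial.le_natDegree_of_ne_zero (by rw [hF2]; exact hσn0))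
  have hFl : F.leadingCoeff = sigmaSq n := by
    rw [Polynomial.leadingCoeff, hFd, hF2]
  have hF0 : F ≠ 0 := fun h => hσn0 (by rw [← hF2, h, Polynomial.coeff_zero])
  set k := (e R).natDegree with hk
  have hEq' : F^2 * e R = Polynomial.X * (Polynomial.C (sigmaN n) * e S) := by
    have h2 := congrArg e hEq
    rw [map_mul, map_pow, map_mul] at h2
    rw [he] at h2 ⊢
    rw [finSuccEquiv_sigmaSq, finSuccEquiv_sigmaN] at h2
    rw [← hF] at h2
    exact h2.trans (mul_assoc _ _ _)
  have hdeg : (F^2 * e R).natDegree = 4 + k := by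
    rw [Polynomial.natDegree_mul (pow_ne_zero _ hF0) heR, Polynomial.natDegree_pow, hFd]
  have hlhs : (F^2 * e R).coeff (4+k) = (sigmaSq n)^2 * (e R).leadingCoeff := by
    rw [← hdeg, Polynomial.coeff_natDegree, Polynomial.leadingCoeff_mul,
      Polynomial.leadingCoeff_pow, hFl]
  have hrhs : (Polynomial.X * (Polynomial.C (sigmaN n) * e S)).coeff (4+k) =
      sigmaN n * ((e S).coeff (3+k)) := by
    rw [show 4+k = (3+k)+1 from by omega, Polynomial.coeff_X_mul, Polynomial.coeff_C_mul]
  have hmain : (sigmaSq n)^2 * (e R).leadingCoeff = sigmaN n * ((e S).coeff (3+k)) := by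
    rw [← hlhs, ← hrhs, hEq']
  have hsup : ∀ d ∈ ((e S).coeff (3+k)).support, ∃ i, d i ≤ 1 := by
    intro d hd
    rw [mem_support_iff, he, finSuccEquiv_coeff_coeff] at hd
    obtain ⟨i, hi⟩ := hS _ (mem_support_iff.mpr hd)
    revert hi
    refine Fin.cases ?_ ?_ i
    · intro hi
      rw [Finsupp.cons_zero] at hi
      omega
    · intro j hi
      rw [Finsupp.cons_succ] at hi
      exact ⟨j, hi⟩
  have hzero := ih _ _ hmain hsup
  exact heR (Polynomial.leadingCoeff_eq_zero.mp hzero)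

lemma key_s9 : ∀ n, 2 ≤ n → ∀ R S : MvPolynomial (Fin n) ℂ,
    (sigmaSq n)^2 * R = sigmaN n * S → (∀ d ∈ S.support, ∃ i, d i ≤ 1) → R = 0 := by
  intro n hn
  induction n, hn using Nat.le_induction with
  | base => exact key2
  | succ n hn ih => exact key_step n hn ih

/-- `σ_{n-1}(η²)` cannot divide a nonzero polynomial `Q` satisfying
`σ_{n-1}(η²)·Q = σₙ(η)·Σᵢ (P_î + ηᵢ Q_î)` with `P_î, Q_î` independent of `ηᵢ`. -/
theorem eq_zero_of_sigmaSq_dvd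
    (n : ℕ) (hn : 2 ≤ n) (Q : MvPolynomial (Fin n) ℂ)
    (Pi Qi : Fin n → MvPolynomial (Fin n) ℂ)
    (hPi : ∀ i, IndepOf i (Pi i)) (hQi : ∀ i, IndepOf i (Qi i))
    (heq : sigmaSq n * Q = sigmaN n * ∑ i : Fin n, (Pi i + X i * Qi i))
    (hdvd : sigmaSq n ∣ Q) : Q = 0 := by
  obtain ⟨R, hQ⟩ := hdvd
  subst hQ
  have hs : (sigmaSq n)^2 * R = sigmaN n * ∑ i : Fin n, (Pi i + X i * Qi i) := by
    rw [← heq]; ring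
  have hsup : ∀ d ∈ (∑ i : Fin n, (Pi i + X i * Qi i)).support, ∃ i, d i ≤ 1 := by
    intro d hd
    rw [mem_support_iff, coeff_sum] at hd
    obtain ⟨i, -, hne⟩ := Finset.exists_ne_zero_of_sum_ne_zero hd
    rw [coeff_add] at hne
    by_cases hp : coeff d (Pi i) = 0
    · rw [hp, zero_add, coeff_X_mul'] at hne
      refine ⟨i, ?_⟩
      by_cases hmem : i ∈ d.support
      · rw [if_pos hmem] at hne
        have h1 := hQi i _ (mem_support_iff.mpr hne)
        rw [Finsupp.tsub_apply, Finsupp.single_eq_same] at h1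
        have h2 : d i ≠ 0 := Finsupp.mem_support_iff.mp hmem
        omega
      · rw [if_neg hmem] at hne
        exact absurd rfl hne
    · refine ⟨i, ?_⟩
      rw [hPi i d (mem_support_iff.mpr hp)]
      omega
  rw [key_s9 n hn R _ hs hsup, mul_zero]
end

section
/- Let R ∈ ℂ[η₁,…,η_n] be of the special form R = Σ_{i=1}^n (η_i P_î + Q_î), where each P_î and Q_î is a polynomial independent of the variable η_i. Then each coefficient R_τ ∈ ℂ[s₁,…,s_n] in the parity decomposition R(η) = Σ_{τ ∈ {0,1}ⁿ} η^τ R_τ(η²) has the special form R_τ = Σ_{i=1}^n S_{τ,i}, where each S_{τ,i} ∈ ℂ[s₁,…,s_n] is independent of the variable s_i. -/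
open MvPolynomial

lemma prodX {n : ℕ} (f : Fin n → ℕ) :
    (∏ i, (X i : MvPolynomial (Fin n) ℂ) ^ f i) =
      monomial (Finsupp.equivFunOnFinite.symm f) 1 := by
  rw [← prod_X_pow_eq_monomial]
  rw [← Finset.prod_subset (Finset.subset_univ (Finsupp.equivFunOnFinite.symm f).support)]
  · exact Finset.prod_congr rfl fun i _ => by simp
  · intro i _ hi
    rw [Finsupp.notMem_support_iff] at hi
    change f i = 0 at hi
    rw [hi, pow_zero]

lemma aevalSq {n : ℕ} (q : MvPolynomial (Fin n) ℂ) :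
    aeval (fun i => (X i : MvPolynomial (Fin n) ℂ) ^ 2) q =
      ∑ d ∈ q.support, monomial (2 • d) (coeff d q) := by
  conv_lhs => rw [as_sum q]
  rw [map_sum]
  refine Finset.sum_congr rfl fun d _ => ?_
  rw [aeval_monomial, monomial_eq, algebraMap_eq]
  congr 1
  have hsupp : (2 • d).support = d.support := Finsupp.support_smul_eq (by norm_num)
  rw [Finsupp.prod, Finsupp.prod, hsupp]
  exact Finset.prod_congr rfl fun i _ => by rw [← pow_mul, Finsupp.smul_apply, smul_eq_mul]

/-- If `R = Σᵢ (ηᵢ P_î + Q_î)` with `P_î, Q_î` independent of `ηᵢ`, then every coefficient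
`R_τ` of the parity decomposition `R(η) = Σ_{τ ∈ {0,1}ⁿ} η^τ R_τ(η²)` is of the form
`Σᵢ S_{τ,i}` with `S_{τ,i}` independent of `sᵢ`. -/
theorem parity_decomposition_special_form
    (n : ℕ) (R : MvPolynomial (Fin n) ℂ)
    (Pi Qi : Fin n → MvPolynomial (Fin n) ℂ)
    (hPi : ∀ i, IndepOf i (Pi i)) (hQi : ∀ i, IndepOf i (Qi i))
    (hR : R = ∑ i : Fin n, (X i * Pi i + Qi i))
    (T : (Fin n → Fin 2) → MvPolynomial (Fin n) ℂ)
    (hT : R = ∑ τ : Fin n → Fin 2,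
      (∏ i, X i ^ (τ i : ℕ)) * aeval (fun i => (X i) ^ 2) (T τ)) :
    ∀ τ : Fin n → Fin 2, ∃ S : Fin n → MvPolynomial (Fin n) ℂ,
      (∀ i, IndepOf i (S i)) ∧ T τ = ∑ i : Fin n, S i := by
  classical
  set m : (Fin n → Fin 2) → (Fin n →₀ ℕ) :=
    fun τ => Finsupp.equivFunOnFinite.symm (fun i => (τ i : ℕ)) with hm_def
  have hm : ∀ τ i, m τ i = τ i := fun τ i => rfl
  -- Step 1: coefficients of R at exponents all ≥ 2 vanish
  have hcoeffR0 : ∀ e : Fin n →₀ ℕ, (∀ i, 2 ≤ e i) → coeff e R = 0 := by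
    intro e he
    rw [hR, coeff_sum]
    refine Finset.sum_eq_zero fun i _ => ?_
    rw [coeff_add, mul_comm, coeff_mul_X']
    have hQ : coeff e (Qi i) = 0 := by
      by_contra h
      have := hQi i e (mem_support_iff.mpr h)
      have := he i; omega
    have hP : (if i ∈ e.support then coeff (e - Finsupp.single i 1) (Pi i) else 0) = 0 := by
      split_ifs with h
      · by_contra h2
        have h3 := hPi i _ (mem_support_iff.mpr h2)
        rw [Finsupp.tsub_apply, Finsupp.single_eq_same] at h3
        have := he i; omega
      · rfl
    rw [hQ, hP, add_zero]
  -- injectivity of (τ, d) ↦ m τ + 2•d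
  have hparity : ∀ (τ τ' : Fin n → Fin 2) (d d' : Fin n →₀ ℕ),
      m τ + 2 • d = m τ' + 2 • d' → τ = τ' ∧ d = d' := by
    intro τ τ' d d' h
    have h' : ∀ i, (τ i : ℕ) + 2 * d i = (τ' i : ℕ) + 2 * d' i := by
      intro i
      have := congrArg (fun g => g i) h
      simpa [Finsupp.add_apply, Finsupp.smul_apply, hm] using this
    have hb : ∀ i, (τ i : ℕ) < 2 := fun i => (τ i).isLt
    have hb' : ∀ i, (τ' i : ℕ) < 2 := fun i => (τ' i).isLt
    constructor
    · funext i
      have := h' i; have := hb i; have := hb' i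
      exact Fin.ext (by omega)
    · ext i
      have := h' i; have := hb i; have := hb' i; omega
  -- Step 2: coeff d (T τ) = coeff (m τ + 2•d) R
  have hkey : ∀ (τ : Fin n → Fin 2) (d : Fin n →₀ ℕ),
      coeff (m τ + 2 • d) R = coeff d (T τ) := by
    intro τ d
    conv_lhs => rw [hT]
    rw [coeff_sum]
    have hterm : ∀ τ' : Fin n → Fin 2,
        coeff (m τ + 2 • d) ((∏ i, (X i : MvPolynomial (Fin n) ℂ) ^ (τ' i : ℕ)) *
          aeval (fun i => (X i) ^ 2) (T τ')) =
        ∑ d' ∈ (T τ').support, if m τ' + 2 • d' = m τ + 2 • d then coeff d' (T τ') else 0 := by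
      intro τ'
      rw [prodX, aevalSq, Finset.mul_sum, coeff_sum]
      refine Finset.sum_congr rfl fun d' _ => ?_
      rw [monomial_mul, one_mul, coeff_monomial]
    simp_rw [hterm]
    rw [Finset.sum_eq_single τ]
    · have : ∀ d' ∈ (T τ).support,
          (if m τ + 2 • d' = m τ + 2 • d then coeff d' (T τ) else 0) =
          (if d' = d then coeff d' (T τ) else 0) := by
        intro d' _
        congr 1
        simp only [eq_iff_iff]
        constructor
        · intro h; exact (hparity τ τ d' d h).2
        · intro h; rw [h]
      rw [Finset.sum_congr rfl this, Finset.sum_ite_eq' (T τ).support d]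
      split_ifs with h
      · rfl
      · exact (notMem_support_iff.mp h).symm
    · intro τ' _ hne
      refine Finset.sum_eq_zero fun d' _ => ?_
      rw [if_neg]
      intro h
      exact hne (hparity τ' τ d' d h).1
    · intro h; exact absurd (Finset.mem_univ τ) h
  -- Step 3: every monomial of T τ misses a variable
  have hmiss : ∀ (τ : Fin n → Fin 2), ∀ d ∈ (T τ).support, ∃ i, d i = 0 := by
    intro τ d hd
    by_contra h
    push_neg at h
    have he : ∀ i, 2 ≤ (m τ + 2 • d) i := by
      intro i
      have h1 := h i
      have : (m τ + 2 • d) i = (τ i : ℕ) + 2 * d i := by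
        simp [Finsupp.add_apply, Finsupp.smul_apply, hm]
      omega
    have h0 := hcoeffR0 _ he
    rw [hkey τ d] at h0
    exact mem_support_iff.mp hd h0
  -- Construction
  intro τ
  refine ⟨fun i => ∑ d ∈ (T τ).support,
      if d i = 0 ∧ ∀ j, d j = 0 → i ≤ j then monomial d (coeff d (T τ)) else 0, ?_, ?_⟩
  · intro i e he
    by_contra hne
    apply mem_support_iff.mp he
    rw [coeff_sum]
    refine Finset.sum_eq_zero fun d _ => ?_
    split_ifs with hc
    · rw [coeff_monomial]
      rw [if_neg]
      intro hde
      exact hne (hde ▸ hc.1)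
    · exact coeff_zero e
  · conv_lhs => rw [as_sum (T τ)]
    rw [Finset.sum_comm]
    refine Finset.sum_congr rfl fun d hd => ?_
    obtain ⟨i1, hi1⟩ := hmiss τ d hd
    set s : Finset (Fin n) := Finset.univ.filter (fun j => d j = 0) with hs_def
    have hsne : s.Nonempty := ⟨i1, by simp [hs_def, hi1]⟩
    set i₀ := s.min' hsne with hi0_def
    have hmem : d i₀ = 0 := by
      have := s.min'_mem hsne
      simpa [hs_def] using this
    have hmin : ∀ j, d j = 0 → i₀ ≤ j := by
      intro j hj
      exact s.min'_le j (by simp [hs_def, hj])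
    rw [Finset.sum_eq_single_of_mem i₀ (Finset.mem_univ i₀)]
    · rw [if_pos ⟨hmem, hmin⟩]
    · intro b _ hb
      rw [if_neg]
      rintro ⟨hb1, hb2⟩
      exact hb (le_antisymm (hb2 i₀ hmem) (hmin b hb1))
end

section
/- Let S ∈ ℂ[s₁,…,s_n] and let R ∈ ℂ[η₁,…,η_n] with parity decomposition R(η) = Σ_{τ ∈ {0,1}ⁿ} η^τ R_τ(η²). If S(η²) divides R(η) in ℂ[η₁,…,η_n], then S divides R_τ in ℂ[s₁,…,s_n] for every τ ∈ {0,1}ⁿ. -/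
open MvPolynomial


variable {n : ℕ}

noncomputable def tfin (τ : Fin n → Fin 2) : Fin n →₀ ℕ :=
  Finsupp.equivFunOnFinite.symm fun i => (τ i : ℕ)

@[simp] lemma tfin_apply (τ : Fin n → Fin 2) (i : Fin n) : tfin τ i = (τ i : ℕ) := rfl

lemma prod_X_pow (τ : Fin n → Fin 2) :
    (∏ i, (X i : MvPolynomial (Fin n) ℂ) ^ (τ i : ℕ)) = monomial (tfin τ) 1 := by
  rw [monomial_eq, C_1, one_mul, Finsupp.prod_fintype _ _ (fun i => pow_zero _)]
  simp

lemma sq_monomial (e : Fin n →₀ ℕ) (c : ℂ) :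
    aeval (fun i => (X i : MvPolynomial (Fin n) ℂ) ^ 2) (monomial e c) = monomial (2 • e) c := by
  rw [aeval_monomial, monomial_eq, Finsupp.prod_fintype _ _ (fun i => pow_zero _),
    Finsupp.prod_fintype _ _ (fun i => pow_zero _)]
  simp [← pow_mul, algebraMap_eq]

lemma coeff_sq_even (A : MvPolynomial (Fin n) ℂ) (e : Fin n →₀ ℕ) :
    coeff (2 • e) (aeval (fun i => (X i : MvPolynomial (Fin n) ℂ) ^ 2) A) = coeff e A := by
  induction A using MvPolynomial.induction_on' with
  | monomial d c =>
    rw [sq_monomial, coeff_monomial, coeff_monomial]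
    congr 1
    simp only [eq_iff_iff]
    constructor
    · intro h
      ext i
      have := DFunLike.congr_fun h i
      simp only [Finsupp.smul_apply, smul_eq_mul] at this
      omega
    · rintro rfl; rfl
  | add p q hp hq => rw [map_add, coeff_add, coeff_add, hp, hq]

lemma coeff_sq_odd (A : MvPolynomial (Fin n) ℂ) (d : Fin n →₀ ℕ) (i : Fin n)
    (hi : ¬ 2 ∣ d i) :
    coeff d (aeval (fun i => (X i : MvPolynomial (Fin n) ℂ) ^ 2) A) = 0 := by
  induction A using MvPolynomial.induction_on' with
  | monomial e c =>
    rw [sq_monomial, coeff_monomial, if_neg]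
    rintro rfl
    simp only [Finsupp.smul_apply, smul_eq_mul] at hi
    omega
  | add p q hp hq => rw [map_add, coeff_add, hp, hq, add_zero]

lemma key_s12 (τ τ' : Fin n → Fin 2) (A : MvPolynomial (Fin n) ℂ) (e : Fin n →₀ ℕ) :
    coeff (2 • e + tfin τ)
      ((monomial (tfin τ') 1 : MvPolynomial (Fin n) ℂ) *
        aeval (fun i => (X i : MvPolynomial (Fin n) ℂ) ^ 2) A)
      = if τ' = τ then coeff e A else 0 := by
  rw [coeff_monomial_mul']
  by_cases h : τ' = τ
  · subst h
    rw [if_pos le_add_self, if_pos rfl, add_tsub_cancel_right, one_mul, coeff_sq_even]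
  · rw [if_neg h]
    obtain ⟨i, hi⟩ : ∃ i, τ' i ≠ τ i := by
      by_contra hc; push_neg at hc; exact h (funext hc)
    by_cases hle : tfin τ' ≤ 2 • e + tfin τ
    · rw [if_pos hle, coeff_sq_odd _ _ i, mul_zero]
      have h1 : (τ' i : ℕ) ≤ 2 * e i + (τ i : ℕ) := by
        have := hle i
        simpa using this
      have h2 : (tfin τ' : Fin n →₀ ℕ) i = (τ' i : ℕ) := rfl
      rw [Finsupp.tsub_apply]
      simp only [Finsupp.add_apply, Finsupp.smul_apply, smul_eq_mul, tfin_apply]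
      have hτ : (τ i : ℕ) < 2 := (τ i).isLt
      have hτ' : (τ' i : ℕ) < 2 := (τ' i).isLt
      have hne : (τ' i : ℕ) ≠ (τ i : ℕ) := fun hc => hi (Fin.ext hc)
      omega
    · rw [if_neg hle]

lemma extract (τ : Fin n → Fin 2) (A : (Fin n → Fin 2) → MvPolynomial (Fin n) ℂ)
    (e : Fin n →₀ ℕ) :
    coeff (2 • e + tfin τ)
      (∑ τ' : Fin n → Fin 2, (monomial (tfin τ') 1 : MvPolynomial (Fin n) ℂ) *
        aeval (fun i => (X i : MvPolynomial (Fin n) ℂ) ^ 2) (A τ'))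
      = coeff e (A τ) := by
  rw [coeff_sum]
  simp only [key_s12]
  simp

lemma exists_decomp (Q : MvPolynomial (Fin n) ℂ) :
    ∃ A : (Fin n → Fin 2) → MvPolynomial (Fin n) ℂ,
      Q = ∑ τ : Fin n → Fin 2, (monomial (tfin τ) 1 : MvPolynomial (Fin n) ℂ) *
        aeval (fun i => (X i : MvPolynomial (Fin n) ℂ) ^ 2) (A τ) := by
  induction Q using MvPolynomial.induction_on' with
  | monomial e c =>
    set τ₀ : Fin n → Fin 2 := fun i => ⟨e i % 2, Nat.mod_lt _ two_pos⟩ with hτ₀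
    set h : Fin n →₀ ℕ := Finsupp.equivFunOnFinite.symm fun i => e i / 2 with hh
    refine ⟨fun τ' => if τ' = τ₀ then monomial h c else 0, ?_⟩
    rw [Finset.sum_eq_single τ₀]
    · simp only [if_pos rfl, if_true]
      rw [sq_monomial, monomial_mul, one_mul]
      have he : tfin τ₀ + 2 • h = e := by
        ext i
        show (e i % 2) + 2 * (e i / 2) = e i
        omega
      rw [he]
    · intro τ' _ hne
      simp only [if_neg hne]
      rw [map_zero, mul_zero]
    · intro hmem; exact absurd (Finset.mem_univ _) hmem
  | add p q hp hq =>
    obtain ⟨A, hA⟩ := hp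
    obtain ⟨B, hB⟩ := hq
    refine ⟨fun τ => A τ + B τ, ?_⟩
    simp only [map_add, mul_add, Finset.sum_add_distrib, ← hA, ← hB]

/-- If `S(η²)` divides `R(η)` in `ℂ[η₁,…,ηₙ]`, then `S` divides every coefficient `R_τ` of
the parity decomposition `R(η) = Σ_{τ ∈ {0,1}ⁿ} η^τ R_τ(η²)`. -/
theorem dvd_parity_components
    (n : ℕ) (S R : MvPolynomial (Fin n) ℂ)
    (T : (Fin n → Fin 2) → MvPolynomial (Fin n) ℂ)
    (hT : R = ∑ τ : Fin n → Fin 2,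
      (∏ i, X i ^ (τ i : ℕ)) * aeval (fun i => (X i) ^ 2) (T τ))
    (hdvd : aeval (fun i => (X i) ^ 2) S ∣ R) :
    ∀ τ : Fin n → Fin 2, S ∣ T τ := by
  obtain ⟨Q, hQ⟩ := hdvd
  obtain ⟨A, hA⟩ := exists_decomp Q
  intro τ
  refine ⟨A τ, ?_⟩
  have hR : R = ∑ τ' : Fin n → Fin 2, (monomial (tfin τ') 1 : MvPolynomial (Fin n) ℂ) *
      aeval (fun i => (X i : MvPolynomial (Fin n) ℂ) ^ 2) (S * A τ') := by
    rw [hQ, hA, Finset.mul_sum]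
    refine Finset.sum_congr rfl fun τ' _ => ?_
    rw [map_mul]; ring
  apply MvPolynomial.ext
  intro e
  have h1 : coeff e (T τ) = coeff (2 • e + tfin τ) R := by
    rw [hT]
    simp only [prod_X_pow]
    rw [extract]
  have h2 : coeff (2 • e + tfin τ) R = coeff e (S * A τ) := by rw [hR, extract]
  rw [h1, h2]
end

section
/- Let n ≥ 2 and let T ∈ ℂ[s₁,…,s_n] have the form T = Σ_{i=1}^n T_î, where each T_î is a polynomial independent of the variable s_i. If σ_{n−1}(s)² divides T in ℂ[s₁,…,s_n], then T = 0. -/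
open MvPolynomial

/-- The `(n-1)`-st elementary symmetric polynomial `σ_{n-1}(s) = Σᵢ ∏_{j≠i} sⱼ`. -/
noncomputable def sigmaElem (n : ℕ) : MvPolynomial (Fin n) ℂ :=
  ∑ i : Fin n, ∏ j ∈ Finset.univ.erase i, X j

lemma sigmaElem_ne_zero {n : ℕ} (hn : 1 ≤ n) : sigmaElem n ≠ 0 := by
  intro h
  have h2 := congrArg (eval (fun _ => (1 : ℂ))) h
  simp only [sigmaElem, map_sum, eval_prod, eval_X, Finset.prod_const_one, map_zero,
    Finset.sum_const, Finset.card_univ, Fintype.card_fin, nsmul_eq_mul, mul_one] at h2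
  have : (n : ℂ) ≠ 0 := Nat.cast_ne_zero.mpr (by omega)
  exact this h2

lemma succEmb_erase_zero (n : ℕ) :
    (Finset.univ.erase (0 : Fin (n + 1))) =
      Finset.univ.map ⟨Fin.succ, Fin.succ_injective _⟩ := by
  rw [Fin.univ_succ, Finset.erase_cons]

lemma erase_succ (n : ℕ) (i : Fin n) :
    (Finset.univ.erase (Fin.succ i)) =
      insert (0 : Fin (n + 1))
        ((Finset.univ.erase i).map ⟨Fin.succ, Fin.succ_injective _⟩) := by
  ext j
  induction j using Fin.cases with
  | zero => simp [(Fin.succ_ne_zero i).symm]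
  | succ k =>
    simp [Fin.succ_ne_zero, (Fin.succ_injective n).eq_iff, eq_comm]

lemma key_s13 (n : ℕ) :
    finSuccEquiv ℂ n (sigmaElem (n + 1)) =
      Polynomial.C (∏ j : Fin n, X j) + Polynomial.X * Polynomial.C (sigmaElem n) := by
  have h0 : (∏ j ∈ Finset.univ.erase (0 : Fin (n + 1)), (X j : MvPolynomial (Fin (n + 1)) ℂ))
      = ∏ j : Fin n, X j.succ := by
    rw [succEmb_erase_zero, Finset.prod_map]
    rfl
  have hs : ∀ i : Fin n,
      (∏ j ∈ Finset.univ.erase (Fin.succ i), (X j : MvPolynomial (Fin (n + 1)) ℂ))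
        = X 0 * ∏ j ∈ Finset.univ.erase i, X j.succ := by
    intro i
    rw [erase_succ, Finset.prod_insert (by simp [(Fin.succ_ne_zero _).symm]), Finset.prod_map]
    rfl
  rw [sigmaElem, Fin.sum_univ_succ, map_add, map_sum, h0]
  simp only [hs, map_mul, map_prod, finSuccEquiv_X_zero, finSuccEquiv_X_succ]
  rw [← map_prod (Polynomial.C : MvPolynomial (Fin n) ℂ →+* _) (fun j => (X j : MvPolynomial (Fin n) ℂ)) Finset.univ,
    ← Finset.mul_sum]
  have hC : ∀ i : Fin n, (∏ x ∈ Finset.univ.erase i, Polynomial.C (X x)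
      : Polynomial (MvPolynomial (Fin n) ℂ))
      = Polynomial.C (∏ x ∈ Finset.univ.erase i, X x) :=
    fun i => (map_prod (Polynomial.C : MvPolynomial (Fin n) ℂ →+* _) _ _).symm
  simp only [hC]
  rw [← map_sum (Polynomial.C : MvPolynomial (Fin n) ℂ →+* _)
      (fun i => ∏ x ∈ Finset.univ.erase i, (X x : MvPolynomial (Fin n) ℂ)) Finset.univ]
  rfl

lemma defic_coeff {n : ℕ} {T : MvPolynomial (Fin (n + 1)) ℂ}
    (h : ∀ d ∈ T.support, ∃ i, d i = 0) {j : ℕ} (hj : j ≠ 0) :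
    ∀ m ∈ ((finSuccEquiv ℂ n T).coeff j).support, ∃ k : Fin n, m k = 0 := by
  intro m hm
  rw [mem_support_coeff_finSuccEquiv] at hm
  obtain ⟨i, hi⟩ := h _ hm
  rcases Fin.eq_zero_or_eq_succ i with rfl | ⟨k, rfl⟩
  · rw [Finsupp.cons_zero] at hi
    exact absurd hi hj
  · exact ⟨k, by rwa [Finsupp.cons_succ] at hi⟩

lemma base_case (T : MvPolynomial (Fin 2) ℂ)
    (hdef : ∀ d ∈ T.support, ∃ i, d i = 0)
    (hdvd : sigmaElem 2 ^ 2 ∣ T) : T = 0 := by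
  obtain ⟨Q, rfl⟩ := hdvd
  rcases eq_or_ne Q 0 with rfl | hQ
  · simp
  exfalso
  set φ := MvPolynomial.finSuccEquiv ℂ 1 with hφ
  set x : MvPolynomial (Fin 1) ℂ := X 0 with hx
  have h1 : sigmaElem 1 = 1 := by
    simp [sigmaElem, Finset.univ_unique]
  have hσ : φ (sigmaElem 2) = Polynomial.X + Polynomial.C x := by
    rw [hφ, key_s13 1, h1, Fin.prod_univ_one, map_one, mul_one, add_comm]
  have hq : φ Q ≠ 0 := fun h => hQ (φ.injective (by rw [h, map_zero]))
  have ht : φ (sigmaElem 2 ^ 2 * Q)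
      = (Polynomial.X + Polynomial.C x) ^ 2 * φ Q := by
    rw [map_mul, map_pow, hσ]
  set t := φ (sigmaElem 2 ^ 2 * Q) with htdef
  set u := Polynomial.derivative t with hu
  -- all coefficients of u are constants
  have hsupp : ∀ j : ℕ, ∀ m ∈ (u.coeff j).support, m = 0 := by
    intro j m hm
    rw [hu, Polynomial.coeff_derivative] at hm
    have hm' : m ∈ (t.coeff (j + 1)).support := by
      rw [mem_support_iff] at hm ⊢
      intro h0
      apply hm
      have : ((j : MvPolynomial (Fin 1) ℂ) + 1) = C ((j : ℂ) + 1) := by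
        rw [map_add, map_natCast, map_one]
      rw [this, mul_comm, coeff_C_mul, h0, mul_zero]
    obtain ⟨k, hk⟩ := defic_coeff hdef (Nat.succ_ne_zero j) m hm'
    exact Finsupp.ext fun a => by simpa [Subsingleton.elim a k] using hk
  have hCform : ∀ j : ℕ, u.coeff j = C (coeff 0 (u.coeff j)) := by
    intro j
    apply MvPolynomial.ext
    intro m
    rcases eq_or_ne m 0 with rfl | hm
    · simp [coeff_C]
    · rw [coeff_C, if_neg (Ne.symm hm)]
      by_contra h
      exact hm (hsupp j m (mem_support_iff.mpr h))
  -- evaluation of u at -x is zero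
  have hu0 : Polynomial.eval (-x) u = 0 := by
    rw [hu, ht, Polynomial.derivative_mul, Polynomial.derivative_pow]
    simp
  -- the coefficients vanish
  have hb : ∀ k : ℕ, coeff 0 (u.coeff k) = 0 := by
    intro k
    by_cases hk : k < u.natDegree + 1
    · rw [Polynomial.eval_eq_sum_range] at hu0
      have h2 := congrArg (coeff (Finsupp.single (0 : Fin 1) k)) hu0
      rw [coeff_sum, coeff_zero] at h2
      have hterm : ∀ i ∈ Finset.range (u.natDegree + 1),
          coeff (Finsupp.single (0 : Fin 1) k) (u.coeff i * (-x) ^ i)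
            = if i = k then coeff 0 (u.coeff k) * (-1 : ℂ) ^ k else 0 := by
        intro i _
        rw [hCform i]
        have hneg : (-x) ^ i = C ((-1 : ℂ) ^ i) * x ^ i := by
          rw [neg_pow]
          congr 1
          rw [← C_1, ← C_neg, ← C_pow]
        rw [hneg, ← mul_assoc, ← C_mul, coeff_C_mul, hx, coeff_X_pow]
        by_cases hik : i = k
        · subst hik
          simp
        · rw [if_neg, mul_zero, if_neg hik]
          intro hsing
          exact hik (by simpa using congrFun (congrArg (fun f : Fin 1 →₀ ℕ => (f : Fin 1 → ℕ)) hsing) 0)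
      rw [Finset.sum_congr rfl hterm, Finset.sum_ite_eq' (Finset.range (u.natDegree + 1)) k, if_pos (Finset.mem_range.mpr hk)] at h2
      rcases mul_eq_zero.mp h2 with h | h
      · exact h
      · exact absurd h (pow_ne_zero k (by norm_num))
    · have : u.coeff k = 0 := Polynomial.coeff_eq_zero_of_natDegree_lt (by omega)
      rw [this, coeff_zero]
  have hu_zero : u = 0 := by
    apply Polynomial.ext
    intro j
    rw [hCform j, hb j, map_zero, Polynomial.coeff_zero]
  -- hence t has natDegree 0
  have htc : ∀ j : ℕ, t.coeff (j + 1) = 0 := by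
    intro j
    have h2 : u.coeff j = 0 := by rw [hu_zero, Polynomial.coeff_zero]
    rw [hu, Polynomial.coeff_derivative] at h2
    rcases mul_eq_zero.mp h2 with h | h
    · exact h
    · exact absurd h (Nat.cast_add_one_ne_zero j)
  have hdeg : t.natDegree ≤ 0 := by
    rw [Polynomial.natDegree_le_iff_coeff_eq_zero]
    intro N hN
    obtain ⟨j, rfl⟩ := Nat.exists_eq_add_of_lt hN
    simpa using htc j
  have hXC : (Polynomial.X + Polynomial.C x : Polynomial (MvPolynomial (Fin 1) ℂ)) ≠ 0 :=
    Polynomial.X_add_C_ne_zero x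
  have : t.natDegree = 2 + (φ Q).natDegree := by
    rw [ht, Polynomial.natDegree_mul (pow_ne_zero 2 hXC) hq,
      Polynomial.natDegree_pow, Polynomial.natDegree_X_add_C]
  omega

lemma main_lemma : ∀ n : ℕ, 2 ≤ n → ∀ T : MvPolynomial (Fin n) ℂ,
    (∀ d ∈ T.support, ∃ i, d i = 0) → sigmaElem n ^ 2 ∣ T → T = 0 := by
  intro n hn
  induction n, hn using Nat.le_induction with
  | base => exact base_case
  | succ n hn IH =>
    intro T hdef hdvd
    obtain ⟨Q, rfl⟩ := hdvd
    rcases eq_or_ne Q 0 with rfl | hQ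
    · simp
    exfalso
    set φ := MvPolynomial.finSuccEquiv ℂ n with hφ
    have hq : φ Q ≠ 0 := fun h => hQ (φ.injective (by rw [h, map_zero]))
    have hE : sigmaElem n ≠ 0 := sigmaElem_ne_zero (by omega)
    have hσ : φ (sigmaElem (n + 1))
        = Polynomial.C (sigmaElem n) * Polynomial.X + Polynomial.C (∏ j : Fin n, X j) := by
      rw [hφ, key_s13 n]; ring
    have hsd : (φ (sigmaElem (n + 1))).natDegree = 1 := by
      rw [hσ]; exact Polynomial.natDegree_linear hE
    have hslc : (φ (sigmaElem (n + 1))).leadingCoeff = sigmaElem n := by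
      rw [hσ]; exact Polynomial.leadingCoeff_linear hE
    have hs0 : φ (sigmaElem (n + 1)) ≠ 0 := by
      intro h
      rw [h, Polynomial.natDegree_zero] at hsd
      omega
    have ht : φ (sigmaElem (n + 1) ^ 2 * Q) = (φ (sigmaElem (n + 1))) ^ 2 * φ Q := by
      rw [map_mul, map_pow]
    have hd : (φ (sigmaElem (n + 1) ^ 2 * Q)).natDegree = 2 + (φ Q).natDegree := by
      rw [ht, Polynomial.natDegree_mul (pow_ne_zero 2 hs0) hq, Polynomial.natDegree_pow, hsd]
    have hlc : (φ (sigmaElem (n + 1) ^ 2 * Q)).coeff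
        ((φ (sigmaElem (n + 1) ^ 2 * Q)).natDegree)
        = sigmaElem n ^ 2 * (φ Q).leadingCoeff := by
      rw [Polynomial.coeff_natDegree, ht, Polynomial.leadingCoeff_mul,
        Polynomial.leadingCoeff_pow, hslc]
    have hdef' := defic_coeff hdef
      (j := (φ (sigmaElem (n + 1) ^ 2 * Q)).natDegree) (by omega)
    have hzero := IH _ hdef' ⟨(φ Q).leadingCoeff, hlc ▸ rfl⟩
    rw [hlc] at hzero
    exact (mul_ne_zero (pow_ne_zero 2 hE)
      (Polynomial.leadingCoeff_ne_zero.mpr hq)) hzero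

/-- If `T = Σᵢ T_î` with each `T_î` independent of `sᵢ`, and `σ_{n-1}(s)²` divides `T`,
then `T = 0`. -/
theorem eq_zero_of_sigmaElem_sq_dvd
    (n : ℕ) (hn : 2 ≤ n) (T : MvPolynomial (Fin n) ℂ)
    (Ti : Fin n → MvPolynomial (Fin n) ℂ)
    (hTi : ∀ i, IndepOf i (Ti i)) (hT : T = ∑ i : Fin n, Ti i)
    (hdvd : (sigmaElem n) ^ 2 ∣ T) : T = 0 := by
  apply main_lemma n hn T _ hdvd
  intro d hd
  have hne : coeff d T ≠ 0 := mem_support_iff.mp hd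
  rw [hT, coeff_sum] at hne
  obtain ⟨i, _, hi⟩ := Finset.exists_ne_zero_of_sum_ne_zero hne
  exact ⟨i, hTi i d (mem_support_iff.mpr hi)⟩
end

section
/- Let f ∈ ℂ[x] and g ∈ ℂ[y] be single-variable polynomials and consider T(x,y) = f(x) + g(y) ∈ ℂ[x,y]. If (x + y)² divides T in ℂ[x,y], then T = 0. -/
open MvPolynomial

lemma pderiv_aeval_self (f : Polynomial ℂ) :
    pderiv (0 : Fin 2) (Polynomial.aeval (X 0 : MvPolynomial (Fin 2) ℂ) f) =
      Polynomial.aeval (X 0 : MvPolynomial (Fin 2) ℂ) f.derivative := by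
  induction f using Polynomial.induction_on' with
  | add p q hp hq => simp [hp, hq]
  | monomial n a =>
    simp [Polynomial.aeval_monomial, pderiv_pow, Polynomial.derivative_monomial,
      pderiv_X_self, mul_comm, mul_assoc, mul_left_comm]

lemma pderiv_aeval_other (g : Polynomial ℂ) :
    pderiv (0 : Fin 2) (Polynomial.aeval (X 1 : MvPolynomial (Fin 2) ℂ) g) = 0 := by
  induction g using Polynomial.induction_on' with
  | add p q hp hq => simp [hp, hq]
  | monomial n a =>
    simp [Polynomial.aeval_monomial, pderiv_pow, pderiv_X_of_ne (by decide : (1 : Fin 2) ≠ 0)]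

lemma pderiv_aeval_self' (g : Polynomial ℂ) :
    pderiv (1 : Fin 2) (Polynomial.aeval (X 1 : MvPolynomial (Fin 2) ℂ) g) =
      Polynomial.aeval (X 1 : MvPolynomial (Fin 2) ℂ) g.derivative := by
  induction g using Polynomial.induction_on' with
  | add p q hp hq => simp [hp, hq]
  | monomial n a =>
    simp [Polynomial.aeval_monomial, pderiv_pow, Polynomial.derivative_monomial,
      pderiv_X_self, mul_comm, mul_assoc, mul_left_comm]

lemma pderiv_aeval_other' (f : Polynomial ℂ) :
    pderiv (1 : Fin 2) (Polynomial.aeval (X 0 : MvPolynomial (Fin 2) ℂ) f) = 0 := by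
  induction f using Polynomial.induction_on' with
  | add p q hp hq => simp [hp, hq]
  | monomial n a =>
    simp [Polynomial.aeval_monomial, pderiv_pow, pderiv_X_of_ne (by decide : (0 : Fin 2) ≠ 1)]

/-- If `(x+y)²` divides `f(x) + g(y)` in `ℂ[x,y]`, where `f` and `g` are single-variable
polynomials, then `f(x) + g(y) = 0`. -/
theorem eq_zero_of_sq_dvd_add
    (f g : Polynomial ℂ) (T : MvPolynomial (Fin 2) ℂ)
    (hT : T = Polynomial.aeval (X 0 : MvPolynomial (Fin 2) ℂ) f +
      Polynomial.aeval (X 1 : MvPolynomial (Fin 2) ℂ) g)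
    (hdvd : (X 0 + X 1) ^ 2 ∣ T) : T = 0 := by
  obtain ⟨q, hq⟩ := hdvd
  -- the substitution x ↦ X, y ↦ -X
  set φ : MvPolynomial (Fin 2) ℂ →ₐ[ℂ] Polynomial ℂ :=
    aeval ![Polynomial.X, -Polynomial.X] with hφ
  have hφsum : φ (X 0 + X 1) = 0 := by simp [hφ]
  have hφ0 : ∀ p : Polynomial ℂ,
      φ (Polynomial.aeval (X 0 : MvPolynomial (Fin 2) ℂ) p) = p := by
    intro p
    rw [hφ, ← Polynomial.aeval_algHom_apply]
    simp
  have hφ1 : ∀ p : Polynomial ℂ,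
      φ (Polynomial.aeval (X 1 : MvPolynomial (Fin 2) ℂ) p) = p.comp (-Polynomial.X) := by
    intro p
    rw [hφ, ← Polynomial.aeval_algHom_apply]
    simp [Polynomial.aeval_def, Polynomial.eval₂_comp]
    rfl
  -- f' = 0
  have hd0 : pderiv (0 : Fin 2) T = Polynomial.aeval (X 0 : MvPolynomial (Fin 2) ℂ) f.derivative := by
    rw [hT, map_add, pderiv_aeval_self, pderiv_aeval_other, add_zero]
  have hd0' : pderiv (0 : Fin 2) T =
      (X 0 + X 1) * (2 * q + (X 0 + X 1) * pderiv (0 : Fin 2) q) := by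
    rw [hq, pderiv_mul, pderiv_pow]
    simp [pderiv_X_self, pderiv_X_of_ne (by decide : (1 : Fin 2) ≠ 0)]
    ring
  have hf' : f.derivative = 0 := by
    have := congrArg φ (hd0.symm.trans hd0')
    rw [hφ0, map_mul, hφsum, zero_mul] at this
    exact this
  have hd1 : pderiv (1 : Fin 2) T = Polynomial.aeval (X 1 : MvPolynomial (Fin 2) ℂ) g.derivative := by
    rw [hT, map_add, pderiv_aeval_self', pderiv_aeval_other', zero_add]
  have hd1' : pderiv (1 : Fin 2) T =
      (X 0 + X 1) * (2 * q + (X 0 + X 1) * pderiv (1 : Fin 2) q) := by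
    rw [hq, pderiv_mul, pderiv_pow]
    simp [pderiv_X_self, pderiv_X_of_ne (by decide : (0 : Fin 2) ≠ 1)]
    ring
  have hg' : g.derivative = 0 := by
    have := congrArg φ (hd1.symm.trans hd1')
    rw [hφ1, map_mul, hφsum, zero_mul] at this
    have h2 := congrArg (Polynomial.comp · (-Polynomial.X)) this
    simpa [Polynomial.comp_assoc] using h2
  obtain ⟨a, ha⟩ : ∃ a, f = Polynomial.C a := ⟨_, Polynomial.eq_C_of_derivative_eq_zero hf'⟩
  obtain ⟨b, hb⟩ : ∃ b, g = Polynomial.C b := ⟨_, Polynomial.eq_C_of_derivative_eq_zero hg'⟩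
  have hφT : φ T = 0 := by
    rw [hq, map_mul, map_pow, hφsum]
    ring
  rw [hT, ha, hb] at hφT ⊢
  simp at hφT ⊢
  have : a + b = 0 := by
    have := congrArg (Polynomial.coeff · 0) hφT
    simpa using this
  rw [← map_add, this, map_zero]
end

section
/- Let M ⊂ ℝⁿ be a compact smoothly embedded submanifold of dimension n−k, where 1 ≤ k ≤ n, and let σ denote the (n−k)-dimensional Hausdorff measure restricted to M. Let (χ_ε)_{ε ∈ (0,1]} be a family of ε-mollifiers on ℝⁿ × ℝⁿ. Then there exist constants C > 0 and ε₀ ∈ (0,1] such that for all ε ∈ (0, ε₀): sup_{x ∈ ℝⁿ} ∫_M |χ_ε(x, m)| dσ(m) ≤ C ε^{−k}. -/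
open MeasureTheory
open scoped ENNReal NNReal

/-- A family of `ε`-mollifiers on `ℝⁿ × ℝⁿ`, indexed by `ε ∈ (0,1]`: measurable functions
with uniformly bounded `L¹` norms in `y`, satisfying the pointwise decay bounds
`|χ_ε(x,y)| ≤ (C_N/εⁿ)(ε/|x-y|)^N` and
`|∇_y χ_ε(x,y)| ≤ (C_N/ε^{n+1})(ε/|x-y|)^N` for every `N`. -/
structure IsMollifierFamily (n : ℕ) (χ : ℝ → (Fin n → ℝ) → (Fin n → ℝ) → ℂ) : Prop where
  measurable : ∀ ε ∈ Set.Ioc (0 : ℝ) 1, Measurable (Function.uncurry (χ ε))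
  l1_bound : ∃ C₀ : ℝ, ∀ ε ∈ Set.Ioc (0 : ℝ) 1, ∀ x,
    (∫⁻ y, (‖χ ε x y‖₊ : ℝ≥0∞)) ≤ ENNReal.ofReal C₀
  decay : ∀ N : ℕ, ∃ C : ℝ, ∀ ε ∈ Set.Ioc (0 : ℝ) 1, ∀ x y,
    ‖χ ε x y‖ * ‖x - y‖ ^ N ≤ C / ε ^ n * ε ^ N
  grad_decay : ∀ N : ℕ, ∃ C : ℝ, ∀ ε ∈ Set.Ioc (0 : ℝ) 1, ∀ x y,
    ‖fderiv ℝ (χ ε x) y‖ * ‖x - y‖ ^ N ≤ C / ε ^ (n + 1) * ε ^ N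

/-- `M ⊆ ℝⁿ` is a smoothly embedded submanifold of codimension `k` (dimension `n - k`):
locally it is a regular level set of a smooth submersion into `ℝᵏ`. -/
def IsSmoothSubmanifoldOfCodim (n k : ℕ) (M : Set (Fin n → ℝ)) : Prop :=
  ∀ x ∈ M, ∃ (U : Set (Fin n → ℝ)) (f : (Fin n → ℝ) → (Fin k → ℝ)),
    IsOpen U ∧ x ∈ U ∧ ContDiffOn ℝ (⊤ : ℕ∞) f U ∧
    M ∩ U = {y ∈ U | f y = 0} ∧
    ∀ y ∈ M ∩ U, Function.Surjective (fderiv ℝ f y)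


open Metric Filter Topology

lemma hausdorff_closedBall_le (X : Type*) [NormedAddCommGroup X] [NormedSpace ℝ X]
    [MeasurableSpace X] [BorelSpace X] [FiniteDimensional ℝ X] :
    ∃ A : ℝ≥0∞, A ≠ ∞ ∧ ∀ (x : X) (r : ℝ), 0 ≤ r →
      μH[(Module.finrank ℝ X : ℝ)] (closedBall x r) ≤
        A * ENNReal.ofReal r ^ (Module.finrank ℝ X) := by
  classical
  set d := Module.finrank ℝ X with hd
  let e : X ≃L[ℝ] (Fin d → ℝ) := (Module.finBasis ℝ X).equivFun.toContinuousLinearEquiv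
  obtain ⟨Le, hLe⟩ : ∃ Le : ℝ≥0, LipschitzWith Le e := ⟨_, e.toContinuousLinearMap.lipschitz⟩
  obtain ⟨Ls, hLs⟩ : ∃ Ls : ℝ≥0, LipschitzWith Ls e.symm :=
    ⟨_, e.symm.toContinuousLinearMap.lipschitz⟩
  refine ⟨(Ls : ℝ≥0∞) ^ d * ENNReal.ofReal ((2 * Le) ^ d), ?_, ?_⟩
  · exact ENNReal.mul_ne_top (ENNReal.pow_ne_top ENNReal.coe_ne_top) ENNReal.ofReal_ne_top
  intro x r hr
  have h1 : closedBall x r ⊆ e.symm '' (e '' closedBall x r) := by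
    intro y hy
    exact ⟨e y, Set.mem_image_of_mem _ hy, e.symm_apply_apply y⟩
  have h2 : e '' closedBall x r ⊆ closedBall (e x) (Le * r) := by
    rintro _ ⟨y, hy, rfl⟩
    exact mem_closedBall.2 <| (hLe.dist_le_mul y x).trans
      (mul_le_mul_of_nonneg_left (mem_closedBall.1 hy) Le.2)
  have hpi : (μH[(d : ℝ)] : Measure (Fin d → ℝ)) = volume := by
    simpa [Fintype.card_fin] using (hausdorffMeasure_pi_real (ι := Fin d))
  calc μH[(d : ℝ)] (closedBall x r) ≤ μH[(d : ℝ)] (e.symm '' (e '' closedBall x r)) :=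
        measure_mono h1
    _ ≤ (Ls : ℝ≥0∞) ^ (d : ℝ) * μH[(d : ℝ)] (e '' closedBall x r) :=
        hLs.hausdorffMeasure_image_le (by positivity) _
    _ = (Ls : ℝ≥0∞) ^ d * μH[(d : ℝ)] (e '' closedBall x r) := by
        rw [ENNReal.rpow_natCast]
    _ ≤ (Ls : ℝ≥0∞) ^ d * μH[(d : ℝ)] (closedBall (e x) (Le * r)) :=
        mul_le_mul_right (measure_mono h2) _
    _ = (Ls : ℝ≥0∞) ^ d * ENNReal.ofReal ((2 * (Le * r)) ^ d) := by
        rw [hpi, Real.volume_pi_closedBall _ (by positivity), Fintype.card_fin]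
    _ = (Ls : ℝ≥0∞) ^ d * ENNReal.ofReal ((2 * Le) ^ d) * ENNReal.ofReal r ^ d := by
        rw [mul_assoc, ← ENNReal.ofReal_pow hr, ← ENNReal.ofReal_mul (by positivity), ← mul_pow]
        ring_nf

set_option maxHeartbeats 1000000 in
set_option synthInstance.maxHeartbeats 500000 in
lemma local_ahlfors (n k : ℕ) (hkn : k ≤ n) (M : Set (Fin n → ℝ))
    (hM : IsSmoothSubmanifoldOfCodim n k M) (p : Fin n → ℝ) (hp : p ∈ M) :
    ∃ δ > (0:ℝ), ∃ A : ℝ≥0∞, A ≠ ∞ ∧ ∀ q ∈ M, dist q p < δ → ∀ r : ℝ, 0 < r → r ≤ δ →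
      μH[((n - k : ℕ) : ℝ)] (M ∩ closedBall q r) ≤ A * ENNReal.ofReal r ^ (n - k) := by
  classical
  obtain ⟨U, f, hU, hpU, hfC, hMU, hsurj⟩ := hM p hp
  set f' := fderiv ℝ f p with hf'def
  have hf : HasStrictFDerivAt f f' p :=
    (hfC.contDiffAt (hU.mem_nhds hpU)).hasStrictFDerivAt (by simp)
  have hf' : LinearMap.range (f' : (Fin n → ℝ) →ₗ[ℝ] (Fin k → ℝ)) = ⊤ := LinearMap.range_eq_top_of_surjective (f' : (Fin n → ℝ) →ₗ[ℝ] (Fin k → ℝ)) (hsurj p ⟨hp, hpU⟩)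
  have hker : (LinearMap.ker (f' : (Fin n → ℝ) →ₗ[ℝ] (Fin k → ℝ))).ClosedComplemented :=
    f'.ker_closedComplemented_of_finiteDimensional_range
  set π : (Fin n → ℝ) →L[ℝ] ↥(LinearMap.ker (f' : (Fin n → ℝ) →ₗ[ℝ] (Fin k → ℝ))) := Classical.choose hker with hπdef
  set Φ : ↥(LinearMap.ker (f' : (Fin n → ℝ) →ₗ[ℝ] (Fin k → ℝ))) → (Fin n → ℝ) :=
    hf.implicitFunctionOfComplemented f f' hf' hker (f p) with hΦdef
  have hΦd : HasStrictFDerivAt Φ (LinearMap.ker (f' : (Fin n → ℝ) →ₗ[ℝ] (Fin k → ℝ))).subtypeL 0 :=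
    hf.to_implicitFunctionOfComplemented hf' hker
  obtain ⟨K, t, ht, hlip⟩ := hΦd.exists_lipschitzOnWith
  -- the rank of the kernel
  have hrank : Module.finrank ℝ ↥(LinearMap.ker (f' : (Fin n → ℝ) →ₗ[ℝ] (Fin k → ℝ))) = n - k := by
    have h1 := LinearMap.finrank_range_add_finrank_ker (f' : (Fin n → ℝ) →ₗ[ℝ] (Fin k → ℝ))
    rw [show LinearMap.range (f' : (Fin n → ℝ) →ₗ[ℝ] (Fin k → ℝ)) = ⊤ from hf',
      finrank_top, Module.finrank_fin_fun, Module.finrank_fin_fun] at h1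
    have h2 : LinearMap.ker (f' : (Fin n → ℝ) →ₗ[ℝ] (Fin k → ℝ)) = LinearMap.ker (f' : (Fin n → ℝ) →ₗ[ℝ] (Fin k → ℝ)) := rfl
    rw [h2] at h1
    omega
  obtain ⟨A₀, hA₀top, hA₀⟩ := hausdorff_closedBall_le ↥(LinearMap.ker (f' : (Fin n → ℝ) →ₗ[ℝ] (Fin k → ℝ)))
  rw [hrank] at hA₀
  -- choose δ
  have heq := hf.eq_implicitFunctionOfComplemented hf' hker
  have hmemt : ∀ᶠ x in 𝓝 p, π (x - p) ∈ t := by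
    have hc : ContinuousAt (fun x => π (x - p)) p :=
      (π.continuous.comp (continuous_id.sub continuous_const)).continuousAt
    exact hc (by simpa using ht)
  have hall : ∀ᶠ x in 𝓝 p, x ∈ U ∧
      (hf.implicitFunctionOfComplemented f f' hf' hker (f x)
        (hf.implicitToOpenPartialHomeomorphOfComplemented f f' hf' hker x).snd = x) ∧
      π (x - p) ∈ t := ((hU.eventually_mem hpU).and heq).and hmemt |>.mono (by tauto)
  obtain ⟨δ', hδ'0, hδ'⟩ := Metric.eventually_nhds_iff.mp hall
  refine ⟨δ' / 2, by positivity,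
    (K : ℝ≥0∞) ^ (n - k) * (A₀ * ENNReal.ofReal ‖π‖ ^ (n - k)), ?_, ?_⟩
  · exact ENNReal.mul_ne_top (ENNReal.pow_ne_top ENNReal.coe_ne_top)
      (ENNReal.mul_ne_top hA₀top (ENNReal.pow_ne_top ENNReal.ofReal_ne_top))
  intro q hq hqp r hr0 hrδ
  have hballs : ∀ m ∈ M ∩ closedBall q r, dist m p < δ' := fun m hm => by
    calc dist m p ≤ dist m q + dist q p := dist_triangle m q p
      _ < δ' / 2 + δ' / 2 := by
          have := mem_closedBall.1 hm.2
          have h2 := hm.2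
          linarith
      _ = δ' := by ring
  have hfp : f p = 0 := by
    have : p ∈ M ∩ U := ⟨hp, hpU⟩
    rw [hMU] at this; exact this.2
  have key : ∀ m ∈ M ∩ closedBall q r, Φ (π (m - p)) = m ∧ π (m - p) ∈ t := by
    intro m hm
    obtain ⟨hmU, hmeq, hmt⟩ := hδ' (hballs m hm)
    have hfm : f m = 0 := by
      have : m ∈ M ∩ U := ⟨hm.1, hmU⟩
      rw [hMU] at this; exact this.2
    refine ⟨?_, hmt⟩
    have hsnd : (hf.implicitToOpenPartialHomeomorphOfComplemented f f' hf' hker m).snd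
        = π (m - p) := rfl
    rw [hsnd, hfm, ← hfp] at hmeq
    exact hmeq
  set T : Set ↥(LinearMap.ker (f' : (Fin n → ℝ) →ₗ[ℝ] (Fin k → ℝ))) := (fun x => π (x - p)) '' (M ∩ closedBall q r) with hT
  have hsub : M ∩ closedBall q r ⊆ Φ '' T := by
    intro m hm
    exact ⟨π (m - p), Set.mem_image_of_mem _ hm, (key m hm).1⟩
  have hTt : T ⊆ t := by rintro _ ⟨m, hm, rfl⟩; exact (key m hm).2
  have hTb : T ⊆ closedBall (π (q - p)) (‖π‖ * r) := by
    rintro _ ⟨m, hm, rfl⟩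
    have : π (m - p) - π (q - p) = π (m - q) := by
      rw [← map_sub, sub_sub_sub_cancel_right]
    rw [mem_closedBall, dist_eq_norm, this]
    calc ‖π (m - q)‖ ≤ ‖π‖ * ‖m - q‖ := π.le_opNorm _
      _ ≤ ‖π‖ * r := by
          have := mem_closedBall.1 hm.2
          rw [← dist_eq_norm]
          exact mul_le_mul_of_nonneg_left this π.opNorm_nonneg
  calc μH[((n - k : ℕ) : ℝ)] (M ∩ closedBall q r) ≤ μH[((n - k : ℕ) : ℝ)] (Φ '' T) :=
        measure_mono hsub
    _ ≤ (K : ℝ≥0∞) ^ (((n - k : ℕ) : ℝ)) * μH[((n - k : ℕ) : ℝ)] T :=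
        (hlip.mono hTt).hausdorffMeasure_image_le (by positivity)
    _ = (K : ℝ≥0∞) ^ (n - k) * μH[((n - k : ℕ) : ℝ)] T := by rw [ENNReal.rpow_natCast]
    _ ≤ (K : ℝ≥0∞) ^ (n - k) * μH[((n - k : ℕ) : ℝ)] (closedBall (π (q - p)) (‖π‖ * r)) :=
        mul_le_mul_right (measure_mono hTb) _
    _ ≤ (K : ℝ≥0∞) ^ (n - k) * (A₀ * ENNReal.ofReal (‖π‖ * r) ^ (n - k)) :=
        mul_le_mul_right (hA₀ _ _ (by positivity)) _
    _ = (K : ℝ≥0∞) ^ (n - k) * (A₀ * ENNReal.ofReal ‖π‖ ^ (n - k)) *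
          ENNReal.ofReal r ^ (n - k) := by
        rw [ENNReal.ofReal_mul π.opNorm_nonneg, mul_pow]
        ring

lemma global_ahlfors (n k : ℕ) (hkn : k ≤ n) (M : Set (Fin n → ℝ)) (hMc : IsCompact M)
    (hM : IsSmoothSubmanifoldOfCodim n k M) :
    ∃ A : ℝ≥0∞, A ≠ ∞ ∧ ∀ (x : Fin n → ℝ) (r : ℝ), 0 < r →
      μH[((n - k : ℕ) : ℝ)] (M ∩ closedBall x r) ≤ A * ENNReal.ofReal r ^ (n - k) := by
  classical
  rcases M.eq_empty_or_nonempty with hME | hMne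
  · refine ⟨1, ENNReal.one_ne_top, fun x r hr => ?_⟩
    simp [hME]
  have H : ∀ p ∈ M, ∃ δ > (0:ℝ), ∃ A : ℝ≥0∞, A ≠ ∞ ∧ ∀ q ∈ M, dist q p < δ →
      ∀ r : ℝ, 0 < r → r ≤ δ →
      μH[((n - k : ℕ) : ℝ)] (M ∩ closedBall q r) ≤ A * ENNReal.ofReal r ^ (n - k) :=
    fun p hp => local_ahlfors n k hkn M hM p hp
  choose! δ hδ0 A hAtop hA using H
  obtain ⟨t, htM, hcov⟩ := hMc.elim_nhds_subcover (fun p => ball p (δ p))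
    (fun p hp => ball_mem_nhds p (hδ0 p hp))
  have htne : t.Nonempty := by
    obtain ⟨q, hq⟩ := hMne
    obtain ⟨_, ⟨p, rfl⟩, hmem⟩ := hcov hq
    simp only [Set.mem_iUnion] at hmem
    obtain ⟨hpt, _⟩ := hmem
    exact ⟨p, hpt⟩
  set δstar : ℝ := t.inf' htne δ with hδstar
  have hδstar0 : 0 < δstar := by
    rw [hδstar]
    rw [Finset.lt_inf'_iff]
    exact fun p hpt => hδ0 p (htM p hpt)
  set Astar : ℝ≥0∞ := t.sup A with hAstar
  have hAstarTop : Astar ≠ ⊤ := by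
    rw [hAstar, ← lt_top_iff_ne_top, Finset.sup_lt_iff (by simp)]
    exact fun p hpt => lt_top_iff_ne_top.2 (hAtop p (htM p hpt))
  -- Step 1
  have step1 : ∀ q ∈ M, ∀ r : ℝ, 0 < r → r ≤ δstar →
      μH[((n - k : ℕ) : ℝ)] (M ∩ closedBall q r) ≤ Astar * ENNReal.ofReal r ^ (n - k) := by
    intro q hq r hr0 hrδ
    obtain ⟨_, ⟨p, rfl⟩, hmem⟩ := hcov hq
    simp only [Set.mem_iUnion] at hmem
    obtain ⟨hpt, hqball⟩ := hmem
    refine (hA p (htM p hpt) q hq (mem_ball.1 hqball) r hr0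
      (hrδ.trans (Finset.inf'_le δ hpt))).trans ?_
    exact mul_le_mul_left (Finset.le_sup hpt) _
  -- Step 2 : finite total measure
  have hMfin : μH[((n - k : ℕ) : ℝ)] M < ⊤ := by
    obtain ⟨t2, ht2M, hcov2⟩ := hMc.elim_nhds_subcover (fun q => ball q δstar)
      (fun q _ => ball_mem_nhds q hδstar0)
    calc μH[((n - k : ℕ) : ℝ)] M ≤ ∑ q ∈ t2, μH[((n - k : ℕ) : ℝ)] (M ∩ closedBall q δstar) := by
          refine (measure_mono (fun m hm => ?_)).trans (measure_biUnion_finset_le _ _)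
          obtain ⟨_, ⟨p, rfl⟩, hmem⟩ := hcov2 hm
          simp only [Set.mem_iUnion] at hmem
          obtain ⟨hpt, hball⟩ := hmem
          exact Set.mem_biUnion hpt ⟨hm, ball_subset_closedBall hball⟩
      _ ≤ ∑ q ∈ t2, Astar * ENNReal.ofReal δstar ^ (n - k) := by
          refine Finset.sum_le_sum fun q hqt => ?_
          by_cases hqM : q ∈ M
          · exact step1 q hqM δstar hδstar0 le_rfl
          · have : M ∩ closedBall q δstar ⊆ M ∩ closedBall q δstar := le_rfl
            exact le_trans (le_of_eq rfl) (by
              exact le_trans (measure_mono (Set.inter_subset_inter_left _ le_rfl))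
                (step1 q (ht2M q hqt) δstar hδstar0 le_rfl))
      _ < ⊤ := by
          apply ENNReal.sum_lt_top.2
          intro q _
          exact ENNReal.mul_lt_top hAstarTop.lt_top
            (ENNReal.pow_lt_top ENNReal.ofReal_lt_top)
  -- Step 3 : global bound
  set denom : ℝ≥0∞ := ENNReal.ofReal δstar ^ (n - k) with hdenom
  have hdenom0 : denom ≠ 0 := by
    have h1 : ENNReal.ofReal δstar ≠ 0 := by
      rw [Ne, ENNReal.ofReal_eq_zero]; linarith
    exact pow_ne_zero _ h1
  have hdenomtop : denom ≠ ⊤ := ENNReal.pow_ne_top ENNReal.ofReal_ne_top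
  refine ⟨(ENNReal.ofReal 2) ^ (n - k) * (Astar + μH[((n - k : ℕ) : ℝ)] M / denom), ?_, ?_⟩
  · exact ENNReal.mul_ne_top (ENNReal.pow_ne_top ENNReal.ofReal_ne_top)
      (ENNReal.add_ne_top.2 ⟨hAstarTop, (ENNReal.div_lt_top hMfin.ne hdenom0).ne⟩)
  intro x r hr
  rcases (M ∩ closedBall x r).eq_empty_or_nonempty with hE | ⟨q, hqM, hqx⟩
  · simp [hE]
  have hsub : M ∩ closedBall x r ⊆ M ∩ closedBall q (2 * r) := by
    rintro m ⟨hmM, hmx⟩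
    refine ⟨hmM, ?_⟩
    rw [mem_closedBall] at *
    calc dist m q ≤ dist m x + dist x q := dist_triangle m x q
      _ ≤ r + r := add_le_add hmx (by rw [dist_comm]; exact hqx)
      _ = 2 * r := by ring
  have h2r : ENNReal.ofReal (2 * r) ^ (n - k) =
      ENNReal.ofReal 2 ^ (n - k) * ENNReal.ofReal r ^ (n - k) := by
    rw [ENNReal.ofReal_mul (by norm_num), mul_pow]
  rcases le_or_gt (2 * r) δstar with hle | hlt
  · calc μH[((n - k : ℕ) : ℝ)] (M ∩ closedBall x r)
        ≤ μH[((n - k : ℕ) : ℝ)] (M ∩ closedBall q (2 * r)) := measure_mono hsub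
      _ ≤ Astar * ENNReal.ofReal (2 * r) ^ (n - k) := step1 q hqM _ (by linarith) hle
      _ ≤ (ENNReal.ofReal 2) ^ (n - k) * (Astar + μH[((n - k : ℕ) : ℝ)] M / denom) *
            ENNReal.ofReal r ^ (n - k) := by
          rw [h2r]
          calc Astar * (ENNReal.ofReal 2 ^ (n - k) * ENNReal.ofReal r ^ (n - k))
              = ENNReal.ofReal 2 ^ (n - k) * Astar * ENNReal.ofReal r ^ (n - k) := by ring
            _ ≤ _ := by gcongr; exact le_self_add
  · calc μH[((n - k : ℕ) : ℝ)] (M ∩ closedBall x r)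
        ≤ μH[((n - k : ℕ) : ℝ)] M := measure_mono Set.inter_subset_left
      _ = μH[((n - k : ℕ) : ℝ)] M / denom * denom := by
          rw [ENNReal.div_mul_cancel hdenom0 hdenomtop]
      _ ≤ μH[((n - k : ℕ) : ℝ)] M / denom * ENNReal.ofReal (2 * r) ^ (n - k) := by
          have hle : denom ≤ ENNReal.ofReal (2 * r) ^ (n - k) := by
            rw [hdenom]
            exact pow_le_pow_left' (ENNReal.ofReal_le_ofReal hlt.le) _
          exact mul_le_mul_right hle _
      _ ≤ (ENNReal.ofReal 2) ^ (n - k) * (Astar + μH[((n - k : ℕ) : ℝ)] M / denom) *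
            ENNReal.ofReal r ^ (n - k) := by
          rw [h2r]
          calc μH[((n - k : ℕ) : ℝ)] M / denom *
                (ENNReal.ofReal 2 ^ (n - k) * ENNReal.ofReal r ^ (n - k))
              = ENNReal.ofReal 2 ^ (n - k) * (μH[((n - k : ℕ) : ℝ)] M / denom) *
                ENNReal.ofReal r ^ (n - k) := by ring
            _ ≤ _ := by gcongr; exact le_add_self

set_option maxHeartbeats 1000000 in
/-- For a compact smoothly embedded submanifold `M ⊆ ℝⁿ` of dimension `n - k` with surface
measure `σ` (the `(n-k)`-dimensional Hausdorff measure), and a family of `ε`-mollifiers,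
`sup_x ∫_M |χ_ε(x,m)| dσ(m) ≤ C ε^{-k}` for all sufficiently small `ε`. -/
theorem mollifier_integral_over_submanifold
    (n k : ℕ) (hk1 : 1 ≤ k) (hkn : k ≤ n)
    (M : Set (Fin n → ℝ)) (hMc : IsCompact M)
    (hM : IsSmoothSubmanifoldOfCodim n k M)
    (χ : ℝ → (Fin n → ℝ) → (Fin n → ℝ) → ℂ)
    (hχ : IsMollifierFamily n χ) :
    ∃ C > (0 : ℝ), ∃ ε₀ ∈ Set.Ioc (0 : ℝ) 1, ∀ ε : ℝ, 0 < ε → ε < ε₀ →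
      ∀ x : Fin n → ℝ,
        (∫⁻ m in M, (‖χ ε x m‖₊ : ℝ≥0∞) ∂(μH[((n - k : ℕ) : ℝ)])) ≤
          ENNReal.ofReal (C / ε ^ k) := by
  classical
  set d := n - k with hd
  have hdk : d + k = n := by omega
  obtain ⟨A', hA'top, hA'⟩ := global_ahlfors n k hkn M hMc hM
  set a : ℝ := A'.toReal with ha
  have ha0 : 0 ≤ a := ENNReal.toReal_nonneg
  have hAle : A' ≤ ENNReal.ofReal a := by rw [ha, ENNReal.ofReal_toReal hA'top]
  obtain ⟨C0, hC0⟩ := hχ.decay 0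
  obtain ⟨CN, hCN⟩ := hχ.decay (n + 1)
  set N := n + 1 with hN
  have hC00 : 0 ≤ C0 := by
    have h := hC0 1 ⟨one_pos, le_rfl⟩ 0 0
    simp only [pow_zero, mul_one, one_pow, div_one] at h
    exact le_trans (norm_nonneg _) h
  have hCN0 : 0 ≤ CN := by
    have h := hCN 1 ⟨one_pos, le_rfl⟩ 0 0
    simp only [sub_self, norm_zero, one_pow, div_one, mul_one] at h
    have : (0:ℝ) ^ N = 0 := by simp [hN]
    rw [this, mul_zero] at h
    exact h
  set w : ℝ := 2 ^ d / 2 ^ N with hw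
  have hw0 : 0 ≤ w := by positivity
  have hwhalf : w ≤ 1 / 2 := by
    rw [hw, div_le_div_iff₀ (by positivity) (by norm_num), one_mul]
    calc (2:ℝ) ^ d * 2 = 2 ^ (d + 1) := by ring
      _ ≤ 2 ^ N := by
          apply pow_le_pow_right₀ (by norm_num)
          omega
  have hwEN : ENNReal.ofReal w ≤ 2⁻¹ := by
    calc ENNReal.ofReal w ≤ ENNReal.ofReal (1/2) := ENNReal.ofReal_le_ofReal hwhalf
      _ = 2⁻¹ := by
          rw [one_div, ENNReal.ofReal_inv_of_pos (by norm_num)]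
          norm_num
  refine ⟨a * C0 + 2 * (a * (CN * 2 ^ d)) + 1, by positivity, 1, ⟨one_pos, le_rfl⟩, ?_⟩
  intro ε hε0 hε1 x
  have hεIoc : ε ∈ Set.Ioc (0:ℝ) 1 := ⟨hε0, hε1.le⟩
  have hεk : (0:ℝ) < ε ^ k := pow_pos hε0 k
  have hεn : (0:ℝ) < ε ^ n := pow_pos hε0 n
  have hεdk : ε ^ d * ε ^ k = ε ^ n := by rw [← pow_add, hdk]
  set F : (Fin n → ℝ) → ℝ≥0∞ := fun m => (‖χ ε x m‖₊ : ℝ≥0∞) with hF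
  set g : ℕ → Set (Fin n → ℝ) := fun j =>
    match j with
    | 0 => closedBall x ε
    | (j+1) => closedBall x (2 ^ (j+1) * ε) \ closedBall x (2 ^ j * ε) with hg
  -- covering
  have hMsub : M ⊆ g 0 ∪ ⋃ j, g (j + 1) := by
    intro y _
    by_cases h0 : dist y x ≤ ε
    · exact Or.inl (mem_closedBall.2 h0)
    push_neg at h0
    have hex : ∃ m : ℕ, dist y x ≤ 2 ^ m * ε := by
      obtain ⟨m, hm⟩ := pow_unbounded_of_one_lt (dist y x / ε) (one_lt_two (α := ℝ))
      exact ⟨m, by rw [div_lt_iff₀ hε0] at hm; linarith⟩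
    set j0 := Nat.find hex with hj0
    have hj0spec : dist y x ≤ 2 ^ j0 * ε := Nat.find_spec hex
    have hj0ne : j0 ≠ 0 := by
      intro hcontra
      rw [hcontra] at hj0spec
      simp at hj0spec
      linarith
    obtain ⟨j, hj⟩ : ∃ j, j0 = j + 1 := ⟨j0 - 1, by omega⟩
    refine Or.inr (Set.mem_iUnion.2 ⟨j, ?_⟩)
    have hmin : ¬ (dist y x ≤ 2 ^ j * ε) := Nat.find_min hex (by omega)
    push_neg at hmin
    exact ⟨mem_closedBall.2 (by rw [← hj]; exact hj0spec), fun hc => by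
      exact absurd (mem_closedBall.1 hc) (not_le.2 hmin)⟩
  -- pointwise bounds
  have hb0 : ∀ m ∈ M ∩ g 0, F m ≤ ENNReal.ofReal (C0 / ε ^ n) := by
    intro m _
    have h := hC0 ε hεIoc x m
    simp only [pow_zero, mul_one] at h
    calc F m = ENNReal.ofReal ‖χ ε x m‖ := (ofReal_norm _).symm
      _ ≤ _ := ENNReal.ofReal_le_ofReal h
  have hbj : ∀ j : ℕ, ∀ m ∈ M ∩ g (j + 1),
      F m ≤ ENNReal.ofReal (CN / (ε ^ n * 2 ^ (j * N))) := by
    intro j m hm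
    have hdist : 2 ^ j * ε < dist m x := by
      have := hm.2.2
      rw [mem_closedBall] at this
      exact not_le.1 this
    have hxm : 2 ^ j * ε ≤ ‖x - m‖ := by
      rw [norm_sub_rev, ← dist_eq_norm]
      exact hdist.le
    have hpow : (2 ^ j * ε) ^ N ≤ ‖x - m‖ ^ N :=
      pow_le_pow_left₀ (by positivity) hxm N
    have h := hCN ε hεIoc x m
    have hchain : ‖χ ε x m‖ * (2 ^ j * ε) ^ N ≤ CN / ε ^ n * ε ^ N :=
      le_trans (mul_le_mul_of_nonneg_left hpow (norm_nonneg _)) h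
    have hεj : (0:ℝ) < (2 ^ j * ε) ^ N := by positivity
    have hfin : ‖χ ε x m‖ ≤ CN / (ε ^ n * 2 ^ (j * N)) := by
      rw [← le_div_iff₀ hεj] at hchain
      refine hchain.trans (le_of_eq ?_)
      rw [mul_pow, ← pow_mul]
      have h2 : ((2:ℝ) ^ (j * N)) ≠ 0 := by positivity
      field_simp
    calc F m = ENNReal.ofReal ‖χ ε x m‖ := (ofReal_norm _).symm
      _ ≤ _ := ENNReal.ofReal_le_ofReal hfin
  -- measurability of the pieces
  have hMmeas : MeasurableSet M := hMc.isClosed.measurableSet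
  have hgmeas : ∀ j, MeasurableSet (M ∩ g j) := by
    intro j
    match j with
    | 0 => exact hMmeas.inter measurableSet_closedBall
    | (j+1) => exact hMmeas.inter (measurableSet_closedBall.diff measurableSet_closedBall)
  -- measure bounds on pieces
  have hμ0 : μH[((d : ℕ) : ℝ)] (M ∩ g 0) ≤ A' * ENNReal.ofReal ε ^ d := hA' x ε hε0
  have hμj : ∀ j : ℕ, μH[((d : ℕ) : ℝ)] (M ∩ g (j + 1)) ≤
      A' * ENNReal.ofReal (2 ^ (j+1) * ε) ^ d := by
    intro j
    refine le_trans (measure_mono ?_) (hA' x (2 ^ (j+1) * ε) (by positivity))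
    rintro m ⟨h1, h2⟩
    exact ⟨h1, h2.1⟩
  -- integral bounds on pieces
  have hI0 : (∫⁻ m in M ∩ g 0, F m ∂(μH[((d : ℕ) : ℝ)])) ≤
      ENNReal.ofReal (a * C0 / ε ^ k) := by
    calc (∫⁻ m in M ∩ g 0, F m ∂(μH[((d : ℕ) : ℝ)]))
        ≤ ∫⁻ _ in M ∩ g 0, ENNReal.ofReal (C0 / ε ^ n) ∂(μH[((d : ℕ) : ℝ)]) :=
          setLIntegral_mono' (hgmeas 0) hb0
      _ = ENNReal.ofReal (C0 / ε ^ n) * μH[((d : ℕ) : ℝ)] (M ∩ g 0) := setLIntegral_const _ _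
      _ ≤ ENNReal.ofReal (C0 / ε ^ n) * (ENNReal.ofReal a * ENNReal.ofReal ε ^ d) := by
          refine mul_le_mul_right (hμ0.trans (mul_le_mul_left hAle _)) _
      _ = ENNReal.ofReal (C0 / ε ^ n * (a * ε ^ d)) := by
          rw [← ENNReal.ofReal_pow hε0.le, ← ENNReal.ofReal_mul ha0,
            ← ENNReal.ofReal_mul (by positivity)]
      _ = ENNReal.ofReal (a * C0 / ε ^ k) := by
          congr 1
          rw [div_mul_eq_mul_div, div_eq_div_iff hεn.ne' hεk.ne']
          calc C0 * (a * ε ^ d) * ε ^ k = a * C0 * (ε ^ d * ε ^ k) := by ring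
            _ = a * C0 * ε ^ n := by rw [hεdk]
  have hIj : ∀ j : ℕ, (∫⁻ m in M ∩ g (j + 1), F m ∂(μH[((d : ℕ) : ℝ)])) ≤
      ENNReal.ofReal (a * (CN * 2 ^ d) / ε ^ k) * (ENNReal.ofReal w) ^ j := by
    intro j
    calc (∫⁻ m in M ∩ g (j + 1), F m ∂(μH[((d : ℕ) : ℝ)]))
        ≤ ∫⁻ _ in M ∩ g (j + 1), ENNReal.ofReal (CN / (ε ^ n * 2 ^ (j * N)))
            ∂(μH[((d : ℕ) : ℝ)]) := setLIntegral_mono' (hgmeas (j+1)) (hbj j)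
      _ = ENNReal.ofReal (CN / (ε ^ n * 2 ^ (j * N))) * μH[((d : ℕ) : ℝ)] (M ∩ g (j + 1)) :=
          setLIntegral_const _ _
      _ ≤ ENNReal.ofReal (CN / (ε ^ n * 2 ^ (j * N))) *
            (ENNReal.ofReal a * ENNReal.ofReal (2 ^ (j+1) * ε) ^ d) :=
          mul_le_mul_right ((hμj j).trans (mul_le_mul_left hAle _)) _
      _ = ENNReal.ofReal (CN / (ε ^ n * 2 ^ (j * N)) * (a * (2 ^ (j+1) * ε) ^ d)) := by
          rw [← ENNReal.ofReal_pow (by positivity), ← ENNReal.ofReal_mul ha0,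
            ← ENNReal.ofReal_mul (by positivity)]
      _ = ENNReal.ofReal (a * (CN * 2 ^ d) / ε ^ k * w ^ j) := by
          congr 1
          rw [hw, div_pow, ← pow_mul, ← pow_mul]
          have h1 : ((2:ℝ) ^ (j+1)) ^ d = 2 ^ d * 2 ^ (j * d) := by
            rw [← pow_mul, ← pow_add]
            congr 1
            ring
          rw [mul_pow, h1]
          have h2 : ((2:ℝ) ^ (j * N)) ≠ 0 := by positivity
          have h3 : ((2:ℝ) ^ (j * d)) ≠ 0 := by positivity
          field_simp
          rw [show N * j = j * N from Nat.mul_comm _ _,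
            show d * j = j * d from Nat.mul_comm _ _, ← hεdk]
          ring
      _ = ENNReal.ofReal (a * (CN * 2 ^ d) / ε ^ k) * (ENNReal.ofReal w) ^ j := by
          rw [ENNReal.ofReal_mul (by positivity), ENNReal.ofReal_pow hw0]
  -- assemble
  calc (∫⁻ m in M, F m ∂(μH[((d : ℕ) : ℝ)]))
      ≤ ∫⁻ m in (M ∩ g 0) ∪ ⋃ j, M ∩ g (j + 1), F m ∂(μH[((d : ℕ) : ℝ)]) := by
        apply lintegral_mono_set
        intro m hm
        rcases hMsub hm with h | h
        · exact Or.inl ⟨hm, h⟩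
        · obtain ⟨j, hj⟩ := Set.mem_iUnion.1 h
          exact Or.inr (Set.mem_iUnion.2 ⟨j, ⟨hm, hj⟩⟩)
    _ ≤ (∫⁻ m in M ∩ g 0, F m ∂(μH[((d : ℕ) : ℝ)])) +
          ∫⁻ m in ⋃ j, M ∩ g (j + 1), F m ∂(μH[((d : ℕ) : ℝ)]) := by
        have h := Measure.restrict_union_le (μ := μH[((d : ℕ) : ℝ)])
          (M ∩ g 0) (⋃ j, M ∩ g (j + 1))
        calc (∫⁻ m in (M ∩ g 0) ∪ ⋃ j, M ∩ g (j + 1), F m ∂(μH[((d : ℕ) : ℝ)]))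
            ≤ ∫⁻ m, F m ∂((μH[((d : ℕ) : ℝ)]).restrict (M ∩ g 0) +
                (μH[((d : ℕ) : ℝ)]).restrict (⋃ j, M ∩ g (j + 1))) :=
              lintegral_mono' h le_rfl
          _ = _ := lintegral_add_measure _ _ _
    _ ≤ ENNReal.ofReal (a * C0 / ε ^ k) +
          ∑' j : ℕ, (∫⁻ m in M ∩ g (j + 1), F m ∂(μH[((d : ℕ) : ℝ)])) :=
        add_le_add hI0 (lintegral_iUnion_le _ _)
    _ ≤ ENNReal.ofReal (a * C0 / ε ^ k) +
          ∑' j : ℕ, ENNReal.ofReal (a * (CN * 2 ^ d) / ε ^ k) * (ENNReal.ofReal w) ^ j :=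
        add_le_add le_rfl (ENNReal.tsum_le_tsum hIj)
    _ = ENNReal.ofReal (a * C0 / ε ^ k) +
          ENNReal.ofReal (a * (CN * 2 ^ d) / ε ^ k) * (1 - ENNReal.ofReal w)⁻¹ := by
        rw [ENNReal.tsum_mul_left, ENNReal.tsum_geometric]
    _ ≤ ENNReal.ofReal (a * C0 / ε ^ k) + ENNReal.ofReal (a * (CN * 2 ^ d) / ε ^ k) * 2 := by
        refine add_le_add le_rfl (mul_le_mul_right ?_ _)
        have h1 : (2⁻¹ : ℝ≥0∞) ≤ 1 - ENNReal.ofReal w := by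
          rw [← ENNReal.one_sub_inv_two]
          exact tsub_le_tsub_left hwEN 1
        calc (1 - ENNReal.ofReal w)⁻¹ ≤ (2⁻¹ : ℝ≥0∞)⁻¹ := ENNReal.inv_le_inv' h1
          _ = 2 := by rw [inv_inv]
    _ ≤ ENNReal.ofReal ((a * C0 + 2 * (a * (CN * 2 ^ d)) + 1) / ε ^ k) := by
        rw [show ENNReal.ofReal (a * (CN * 2 ^ d) / ε ^ k) * 2
            = ENNReal.ofReal (2 * (a * (CN * 2 ^ d)) / ε ^ k) by
          rw [show (2:ℝ≥0∞) = ENNReal.ofReal 2 by norm_num,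
            ← ENNReal.ofReal_mul (by positivity)]
          congr 1
          ring]
        rw [← ENNReal.ofReal_add (by positivity) (by positivity)]
        apply ENNReal.ofReal_le_ofReal
        rw [← add_div]
        exact (div_le_div_iff_of_pos_right hεk).mpr (by linarith)
end
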